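/- arXiv:0905.4698 — 4 statements merged into one kernel-verified Lean document; each statement's English description precedes it below -/
import Mathlib

section
/- Fix n ≥ 1 and let v : {1,…,2n} → {1,2} be the deck with n cards labelled 1 on top of n cards labelled 2. Then the total variation distance from uniform after a single GSR 2-shuffle, namely (1/2) ∑_w |Q_2^v(w) − 1/C(2n,n)| with the sum over all decks w having exactly n entries equal to 1 and n equal to 2, equals (1/2)·[ ((2^{n+1} − 1)/2^{2n} − 1/C(2n,n)) + ∑_{i=0}^{n−1} ∑_{j=0}^{n−1} |(2^i + 2^j − 1)/2^{2n} − 1/C(2n,n)| · C(2n − (i+j+2), n − (i+1)) ]. -/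
/-- `σ` is the stable-sort permutation of `f`: `f ∘ σ` is weakly increasing and `σ` is
increasing on each level set of `f ∘ σ`. -/
def IsStableSort {n a : ℕ} (f : Fin n → Fin a) (σ : Equiv.Perm (Fin n)) : Prop :=
  Monotone (f ∘ σ) ∧ ∀ i j : Fin n, i < j → f (σ i) = f (σ j) → σ i < σ j

open Finset

/-- rank of position q in the stable (value, position) lex order -/
def rankF {N : ℕ} (f : Fin N → Fin 2) (q : Fin N) : ℕ :=
  (Finset.univ.filter fun q' => f q' < f q ∨ (f q' = f q ∧ q' < q)).card

lemma card_val_lt {N : ℕ} (t : ℕ) (h : t ≤ N) :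
    (univ.filter fun p : Fin N => (p:ℕ) < t).card = t := by
  rw [Finset.card_bij' (fun (p : Fin N) _ => (p : ℕ)) (fun m hm => (⟨m, lt_of_lt_of_le (mem_range.1 hm) h⟩ : Fin N)) ?_ ?_ ?_ ?_ (t := Finset.range t), card_range]
  · intro a ha; simpa using (mem_filter.1 ha).2
  · intro a ha; simpa using mem_range.1 ha
  · intro a ha; rfl
  · intro a ha; rfl

lemma rank_stable {N : ℕ} (f : Fin N → Fin 2) (σ : Equiv.Perm (Fin N))
    (h : IsStableSort f σ) (p : Fin N) : rankF f (σ p) = (p : ℕ) := by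
  have key : ∀ i j : Fin N, i < j → (f (σ i) < f (σ j) ∨ (f (σ i) = f (σ j) ∧ σ i < σ j)) := by
    intro i j hij
    rcases lt_or_eq_of_le (h.1 (le_of_lt hij)) with h' | h'
    · exact Or.inl h'
    · exact Or.inr ⟨h', h.2 i j hij h'⟩
  have asymm : ∀ i j : Fin N, i < j → ¬ (f (σ j) < f (σ i) ∨ (f (σ j) = f (σ i) ∧ σ j < σ i)) := by
    intro i j hij hc
    rcases key i j hij with h1 | h1 <;> rcases hc with h2 | h2
    · exact absurd h1 (not_lt_of_gt h2)
    · exact absurd h1 (by rw [h2.1]; exact lt_irrefl _)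
    · exact absurd h2 (by rw [h1.1]; exact lt_irrefl _)
    · exact absurd h1.2 (not_lt_of_gt h2.2)
  have : (univ.filter fun q' => f q' < f (σ p) ∨ (f q' = f (σ p) ∧ q' < σ p))
      = (univ.filter fun q' => (σ.symm q' : ℕ) < (p : ℕ)) := by
    ext q'
    simp only [mem_filter, mem_univ, true_and]
    constructor
    · intro hq
      by_contra hc
      push_neg at hc
      rcases lt_or_eq_of_le hc with h' | h'
      · have hpq : p < σ.symm q' := h'
        have := asymm p (σ.symm q') hpq
        simp only [Equiv.apply_symm_apply] at this
        rcases hq with h1 | h1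
        · exact this (Or.inl h1)
        · exact this (Or.inr ⟨h1.1, h1.2⟩)
      · have : q' = σ p := by
          have := congrArg σ (Fin.ext h'.symm : σ.symm q' = p)
          simpa using this
        subst this
        rcases hq with h1 | h1
        · exact absurd h1 (lt_irrefl _)
        · exact absurd h1.2 (lt_irrefl _)
    · intro hq
      have := key (σ.symm q') p hq
      simpa using this
  rw [rankF, this]
  have : (univ.filter fun q' : Fin N => (σ.symm q' : ℕ) < (p : ℕ)).card
      = (univ.filter fun i : Fin N => (i : ℕ) < (p : ℕ)).card := by
    apply Finset.card_bij' (fun q' _ => σ.symm q') (fun i _ => σ i)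
    · intro a ha; simpa using (mem_filter.1 ha).2
    · intro a ha; simpa using (mem_filter.1 ha).2
    · intro a _; simp
    · intro a _; simp
  rw [this, card_val_lt _ (le_of_lt p.2)]


/-- number of positions `p < m` with `f p = a` -/
def cnt {N : ℕ} (f : Fin N → Fin 2) (a : Fin 2) (m : ℕ) : ℕ :=
  (univ.filter fun p : Fin N => (p:ℕ) < m ∧ f p = a).card

def tot {N : ℕ} (f : Fin N → Fin 2) (a : Fin 2) : ℕ :=
  (univ.filter fun p : Fin N => f p = a).card

lemma fin2_cases (x : Fin 2) : x = 0 ∨ x = 1 := by omega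

lemma tot_add {N : ℕ} (f : Fin N → Fin 2) : tot f 0 + tot f 1 = N := by
  have e : (univ.filter fun p : Fin N => f p = (1:Fin 2)) = (univ.filter fun p : Fin N => ¬ f p = 0) := by
    apply filter_congr; intro p _; constructor
    · intro h; rw [h]; simp
    · intro h; rcases fin2_cases (f p) with h' | h' <;> simp_all
  rw [tot, tot, e, Finset.card_filter_add_card_filter_not (fun p => f p = 0)]
  simp

lemma cnt_add {N : ℕ} (f : Fin N → Fin 2) (m : ℕ) (hm : m ≤ N) :
    cnt f 0 m + cnt f 1 m = m := by
  have h1 : ∀ a, (univ.filter fun p : Fin N => (p:ℕ) < m ∧ f p = a)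
      = ((univ.filter fun p : Fin N => (p:ℕ) < m).filter fun p => f p = a) := by
    intro a; rw [Finset.filter_filter]
  have e : ((univ.filter fun p : Fin N => (p:ℕ) < m).filter fun p => f p = (1:Fin 2))
      = ((univ.filter fun p : Fin N => (p:ℕ) < m).filter fun p => ¬ f p = 0) := by
    apply filter_congr; intro p _; constructor
    · intro h; rw [h]; simp
    · intro h; rcases fin2_cases (f p) with h' | h' <;> simp_all
  rw [cnt, cnt, h1, h1, e, Finset.card_filter_add_card_filter_not (fun p => f p = 0)]
  exact card_val_lt m hm

lemma cnt_le_tot {N : ℕ} (f : Fin N → Fin 2) (a : Fin 2) (m : ℕ) : cnt f a m ≤ tot f a :=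
  Finset.card_le_card (fun p hp => by
    simp only [mem_filter, mem_univ, true_and] at hp ⊢; exact hp.2)

lemma cnt_mono {N : ℕ} (f : Fin N → Fin 2) (a : Fin 2) {m m' : ℕ} (h : m ≤ m') :
    cnt f a m ≤ cnt f a m' :=
  Finset.card_le_card (fun p hp => by
    simp only [mem_filter, mem_univ, true_and] at hp ⊢
    exact ⟨lt_of_lt_of_le hp.1 h, hp.2⟩)

lemma cnt_top {N : ℕ} (f : Fin N → Fin 2) (a : Fin 2) {m : ℕ} (h : N ≤ m) :
    cnt f a m = tot f a := by
  rw [cnt, tot]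
  congr 1
  apply filter_congr
  intro p _
  simp only [and_iff_right_iff_imp]
  exact fun _ => lt_of_lt_of_le p.2 h

lemma cnt_succ_eq {N : ℕ} (f : Fin N → Fin 2) (a : Fin 2) (q : Fin N) (hq : f q = a) :
    cnt f a ((q:ℕ)+1) = cnt f a (q:ℕ) + 1 := by
  rw [cnt, cnt]
  have : (univ.filter fun p : Fin N => (p:ℕ) < (q:ℕ)+1 ∧ f p = a)
      = insert q (univ.filter fun p : Fin N => (p:ℕ) < (q:ℕ) ∧ f p = a) := by
    ext p
    simp only [mem_filter, mem_univ, true_and, mem_insert]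
    constructor
    · rintro ⟨h1, h2⟩
      rcases Nat.lt_succ_iff_lt_or_eq.1 h1 with h | h
      · exact Or.inr ⟨h, h2⟩
      · exact Or.inl (Fin.ext h)
    · rintro (rfl | ⟨h1, h2⟩)
      · exact ⟨Nat.lt_succ_self _, hq⟩
      · exact ⟨Nat.lt_succ_of_lt h1, h2⟩
  rw [this, Finset.card_insert_of_notMem (by simp)]

lemma cnt_succ_ne {N : ℕ} (f : Fin N → Fin 2) (a : Fin 2) (q : Fin N) (hq : f q ≠ a) :
    cnt f a ((q:ℕ)+1) = cnt f a (q:ℕ) := by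
  rw [cnt, cnt]
  congr 1
  ext p
  simp only [mem_filter, mem_univ, true_and]
  constructor
  · rintro ⟨h1, h2⟩
    rcases Nat.lt_succ_iff_lt_or_eq.1 h1 with h | h
    · exact ⟨h, h2⟩
    · have hpq : p = q := Fin.ext h
      rw [hpq] at h2; exact absurd h2 hq
  · rintro ⟨h1, h2⟩
    exact ⟨Nat.lt_succ_of_lt h1, h2⟩

lemma cnt_lt_tot {N : ℕ} (f : Fin N → Fin 2) (a : Fin 2) (q : Fin N) (hq : f q = a) :
    cnt f a (q:ℕ) < tot f a := by
  have h1 := cnt_succ_eq f a q hq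
  have h2 := cnt_le_tot f a ((q:ℕ)+1)
  omega

lemma cnt_congr {N : ℕ} {f w : Fin N → Fin 2} (a : Fin 2) (m : ℕ)
    (h : ∀ p : Fin N, (p:ℕ) < m → f p = w p) : cnt f a m = cnt w a m := by
  rw [cnt, cnt]; congr 1; apply filter_congr; intro p _
  constructor
  · rintro ⟨h1, h2⟩; exact ⟨h1, by rw [← h p h1]; exact h2⟩
  · rintro ⟨h1, h2⟩; exact ⟨h1, by rw [h p h1]; exact h2⟩

lemma tot_split {N : ℕ} (f : Fin N → Fin 2) (a : Fin 2) (m : ℕ) :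
    cnt f a m + (univ.filter fun p : Fin N => m ≤ (p:ℕ) ∧ f p = a).card = tot f a := by
  rw [cnt, tot]
  rw [← Finset.card_union_of_disjoint]
  · congr 1
    ext p
    simp only [mem_union, mem_filter, mem_univ, true_and]
    constructor
    · rintro (⟨_, h⟩ | ⟨_, h⟩) <;> exact h
    · intro h
      rcases lt_or_ge (p:ℕ) m with h' | h'
      · exact Or.inl ⟨h', h⟩
      · exact Or.inr ⟨h', h⟩
  · rw [Finset.disjoint_left]
    intro p hp hp'
    simp only [mem_filter, mem_univ, true_and] at hp hp'
    omega

lemma tot_congr_above {N : ℕ} {f w : Fin N → Fin 2} (a : Fin 2) (m : ℕ)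
    (h : ∀ p : Fin N, m ≤ (p:ℕ) → f p = w p) :
    tot f a + cnt w a m = tot w a + cnt f a m := by
  have h1 := tot_split f a m
  have h2 := tot_split w a m
  have h3 : (univ.filter fun p : Fin N => m ≤ (p:ℕ) ∧ f p = a)
      = (univ.filter fun p : Fin N => m ≤ (p:ℕ) ∧ w p = a) := by
    apply filter_congr; intro p _
    constructor
    · rintro ⟨h1, h2⟩; exact ⟨h1, by rw [← h p h1]; exact h2⟩
    · rintro ⟨h1, h2⟩; exact ⟨h1, by rw [h p h1]; exact h2⟩
  have h3' := congrArg Finset.card h3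
  rw [cnt, cnt, tot, tot] at *
  omega

lemma rankF_eq_zero {N : ℕ} (f : Fin N → Fin 2) (q : Fin N) (hq : f q = 0) :
    rankF f q = cnt f 0 (q:ℕ) := by
  rw [rankF, cnt]
  congr 1
  apply filter_congr
  intro p _
  rw [hq]
  constructor
  · rintro (h | ⟨h1, h2⟩)
    · exact absurd h (by omega)
    · exact ⟨Fin.lt_def.1 h2, h1⟩
  · rintro ⟨h1, h2⟩
    exact Or.inr ⟨h2, Fin.lt_def.2 h1⟩

lemma rankF_eq_one {N : ℕ} (f : Fin N → Fin 2) (q : Fin N) (hq : f q = 1) :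
    rankF f q = tot f 0 + cnt f 1 (q:ℕ) := by
  rw [rankF]
  have : (univ.filter fun q' => f q' < f q ∨ (f q' = f q ∧ q' < q))
      = (univ.filter fun p : Fin N => f p = 0) ∪ (univ.filter fun p : Fin N => (p:ℕ) < (q:ℕ) ∧ f p = 1) := by
    ext p
    simp only [mem_union, mem_filter, mem_univ, true_and, hq]
    constructor
    · rintro (h | ⟨h1, h2⟩)
      · exact Or.inl (by omega)
      · exact Or.inr ⟨Fin.lt_def.1 h2, h1⟩
    · rintro (h | ⟨h1, h2⟩)
      · exact Or.inl (by rw [h]; omega)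
      · exact Or.inr ⟨h2, Fin.lt_def.2 h1⟩
  rw [this, Finset.card_union_of_disjoint, tot, cnt]
  rw [Finset.disjoint_left]
  intro p hp hp'
  simp only [mem_filter, mem_univ, true_and] at hp hp'
  rw [hp] at hp'
  exact absurd hp'.2 (by omega)


noncomputable def firstOne {N : ℕ} (w : Fin N → Fin 2) : ℕ :=
  sInf {m : ℕ | ∃ p : Fin N, (p:ℕ) = m ∧ w p = 1}

noncomputable def lastZero {N : ℕ} (w : Fin N → Fin 2) : ℕ :=
  sSup {m : ℕ | ∃ p : Fin N, (p:ℕ) = m ∧ w p = 0}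

section wfacts
variable {N : ℕ} (w : Fin N → Fin 2)

lemma firstOne_mem (h : ∃ p : Fin N, w p = 1) :
    ∃ p : Fin N, (p:ℕ) = firstOne w ∧ w p = 1 := by
  have : {m : ℕ | ∃ p : Fin N, (p:ℕ) = m ∧ w p = 1}.Nonempty := by
    obtain ⟨p, hp⟩ := h; exact ⟨p, p, rfl, hp⟩
  exact Nat.sInf_mem this

lemma firstOne_zero (p : Fin N) (hp : (p:ℕ) < firstOne w) : w p = 0 := by
  have := Nat.notMem_of_lt_sInf hp
  rcases fin2_cases (w p) with h | h
  · exact h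
  · exact absurd ⟨p, rfl, h⟩ this

lemma firstOne_le (p : Fin N) (hp : w p = 1) : firstOne w ≤ (p:ℕ) :=
  Nat.sInf_le ⟨p, rfl, hp⟩

lemma lastZero_mem (h : ∃ p : Fin N, w p = 0) :
    ∃ p : Fin N, (p:ℕ) = lastZero w ∧ w p = 0 := by
  have hne : {m : ℕ | ∃ p : Fin N, (p:ℕ) = m ∧ w p = 0}.Nonempty := by
    obtain ⟨p, hp⟩ := h; exact ⟨p, p, rfl, hp⟩
  have hbdd : BddAbove {m : ℕ | ∃ p : Fin N, (p:ℕ) = m ∧ w p = 0} := by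
    refine ⟨N, ?_⟩
    rintro m ⟨p, rfl, -⟩
    exact le_of_lt p.2
  exact Nat.sSup_mem hne hbdd

lemma lastZero_one (p : Fin N) (hp : lastZero w < (p:ℕ)) : w p = 1 := by
  rcases fin2_cases (w p) with h | h
  · exfalso
    have hbdd : BddAbove {m : ℕ | ∃ p : Fin N, (p:ℕ) = m ∧ w p = 0} := by
      refine ⟨N, ?_⟩
      rintro m ⟨p', rfl, -⟩
      exact le_of_lt p'.2
    have := le_csSup hbdd (⟨p, rfl, h⟩ : (p:ℕ) ∈ {m : ℕ | ∃ p : Fin N, (p:ℕ) = m ∧ w p = 0})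
    unfold lastZero at hp
    omega
  · exact h

lemma lastZero_ge (p : Fin N) (hp : w p = 0) : (p:ℕ) ≤ lastZero w := by
  have hbdd : BddAbove {m : ℕ | ∃ q : Fin N, (q:ℕ) = m ∧ w q = 0} := by
    refine ⟨N, ?_⟩
    rintro m ⟨p', rfl, -⟩
    exact le_of_lt p'.2
  exact le_csSup hbdd ⟨p, rfl, hp⟩

/-- below `firstOne` there are no ones -/
lemma cnt_one_firstOne : cnt w 1 (firstOne w) = 0 := by
  rw [cnt, Finset.card_eq_zero, Finset.filter_eq_empty_iff]
  rintro p - ⟨h1, h2⟩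
  rw [firstOne_zero w p h1] at h2
  exact absurd h2 (by omega)

/-- above `lastZero` there are no zeros -/
lemma zeros_le_lastZero : (univ.filter fun p : Fin N => lastZero w + 1 ≤ (p:ℕ) ∧ w p = 0).card = 0 := by
  rw [Finset.card_eq_zero, Finset.filter_eq_empty_iff]
  rintro p - ⟨h1, h2⟩
  rw [lastZero_one w p (by omega)] at h2
  exact absurd h2 (by omega)

end wfacts
lemma rank_cond_iff {n : ℕ} (hn : 1 ≤ n) (w : Fin (2*n) → Fin 2)
    (h0 : tot w 0 = n) (h1 : tot w 1 = n) (f : Fin (2*n) → Fin 2) :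
    (∀ q, (w q = 0 ↔ rankF f q < n)) ↔
      ((∀ p : Fin (2*n), firstOne w ≤ (p:ℕ) → f p = w p) ∨
       (∀ p : Fin (2*n), (p:ℕ) ≤ lastZero w → f p = w p)) := by
  have hone : ∃ p : Fin (2*n), w p = 1 := by
    have : (univ.filter fun p : Fin (2*n) => w p = 1).Nonempty := by
      rw [← Finset.card_pos, ← tot]; omega
    obtain ⟨p, hp⟩ := this
    exact ⟨p, (mem_filter.1 hp).2⟩
  have hzero : ∃ p : Fin (2*n), w p = 0 := by
    have : (univ.filter fun p : Fin (2*n) => w p = 0).Nonempty := by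
      rw [← Finset.card_pos, ← tot]; omega
    obtain ⟨p, hp⟩ := this
    exact ⟨p, (mem_filter.1 hp).2⟩
  obtain ⟨pt, hpt, hpt1⟩ := firstOne_mem w hone
  obtain ⟨plz, hplz, hplz0⟩ := lastZero_mem w hzero
  set t := firstOne w with htdef
  set lz := lastZero w with hlzdef
  have htN : t < 2*n := hpt ▸ pt.2
  have hlzN : lz < 2*n := hplz ▸ plz.2
  have cntw0t : cnt w 0 t = t := by
    have e1 := cnt_add w t (le_of_lt htN)
    have e2 : cnt w 1 t = 0 := cnt_one_firstOne w
    omega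
  have htn : t ≤ n := by
    have := cnt_le_tot w 0 t
    omega
  have cntw0lz : cnt w 0 (lz+1) = n := by
    have e1 := tot_split w 0 (lz+1)
    have e2 : (univ.filter fun p : Fin (2*n) => lz + 1 ≤ (p:ℕ) ∧ w p = 0).card = 0 :=
      zeros_le_lastZero w
    omega
  constructor
  · intro hP
    rcases le_or_gt (tot f 0) n with hk | hk
    · left
      have hsub : ∀ q, w q = 1 → f q = 1 := by
        intro q hq
        rcases fin2_cases (f q) with h | h
        · exfalso
          have hr := rankF_eq_zero f q h
          have hlt : rankF f q < n := by
            have := cnt_lt_tot f 0 q h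
            omega
          have := (hP q).2 hlt
          rw [hq] at this
          exact absurd this (by omega)
        · exact h
      set E := univ.filter (fun p : Fin (2*n) => w p = 0 ∧ f p = 1) with hE
      have hdec : ∀ m : ℕ, cnt f 1 m = cnt w 1 m + (E.filter fun p => p.val < m).card := by
        intro m
        rw [cnt, cnt, ← Finset.card_union_of_disjoint]
        · congr 1
          ext p
          simp only [hE, mem_union, mem_filter, mem_univ, true_and]
          constructor
          · rintro ⟨hm, hf⟩
            rcases fin2_cases (w p) with h | h
            · exact Or.inr ⟨⟨h, hf⟩, hm⟩
            · exact Or.inl ⟨hm, h⟩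
          · rintro (⟨hm, hw⟩ | ⟨⟨hw, hf⟩, hm⟩)
            · exact ⟨hm, hsub p hw⟩
            · exact ⟨hm, hf⟩
        · rw [Finset.disjoint_left]
          intro p hp hp'
          simp only [hE, mem_filter, mem_univ, true_and] at hp hp'
          have := hp.2
          have := hp'.1.1
          omega
      have hdectot : tot f 1 = tot w 1 + E.card := by
        have h2 := hdec (2*n)
        rw [cnt_top f 1 (le_refl _), cnt_top w 1 (le_refl _)] at h2
        have : E.filter (fun p => p.val < 2*n) = E := by
          apply Finset.filter_true_of_mem
          intro p _
          exact p.2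
        rw [this] at h2
        exact h2
      have hEt : ∀ q ∈ E, (q:ℕ) < t := by
        intro q hq
        by_contra hc
        have hne : E.Nonempty := ⟨q, hq⟩
        set q0 := E.max' hne with hq0def
        have hq0mem : q0 ∈ E := E.max'_mem hne
        have hq0w : w q0 = 0 := (mem_filter.1 hq0mem).2.1
        have hq0f : f q0 = 1 := (mem_filter.1 hq0mem).2.2
        have hEq0 : (E.filter fun p => p.val < (q0:ℕ)).card = E.card - 1 := by
          have he : E.filter (fun p => p.val < (q0:ℕ)) = E.erase q0 := by
            ext p
            simp only [mem_filter, mem_erase]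
            constructor
            · rintro ⟨hp, hlt⟩
              exact ⟨fun hc' => by rw [hc'] at hlt; omega, hp⟩
            · rintro ⟨hne', hp⟩
              refine ⟨hp, ?_⟩
              have := E.le_max' p hp
              rw [← hq0def] at this
              have hvv : (p:ℕ) ≤ (q0:ℕ) := this
              have : (p:ℕ) ≠ (q0:ℕ) := fun hc' => hne' (Fin.ext hc')
              omega
          rw [he, Finset.card_erase_of_mem hq0mem]
        have hrank := rankF_eq_one f q0 hq0f
        have hlt : rankF f q0 < n := (hP q0).1 hq0w
        have h2 := hdec (q0:ℕ)
        have h3 := tot_add f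
        have h4 := tot_add w
        have hcard : 1 ≤ E.card := Finset.card_pos.2 hne
        have hcnt0 : cnt w 1 (q0:ℕ) = 0 := by omega
        have hnone : ∀ p : Fin (2*n), (p:ℕ) < (q0:ℕ) → w p ≠ 1 := by
          intro p hp hc'
          have : p ∈ univ.filter fun p : Fin (2*n) => (p:ℕ) < (q0:ℕ) ∧ w p = 1 := by
            simp only [mem_filter, mem_univ, true_and]; exact ⟨hp, hc'⟩
          rw [cnt] at hcnt0
          rw [Finset.card_eq_zero.1 hcnt0] at this
          exact absurd this (Finset.notMem_empty p)
        have hq0t : (q0:ℕ) < t := by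
          have h5 : ¬ ((pt:ℕ) < (q0:ℕ)) := fun hc' => (hnone pt hc') hpt1
          have h6 : (q0:ℕ) ≠ (pt:ℕ) := by
            intro he
            rw [show q0 = pt from Fin.ext he] at hq0w
            rw [hq0w] at hpt1
            exact absurd hpt1 (by omega)
          omega
        have := E.le_max' q hq
        rw [← hq0def] at this
        have hvv : (q:ℕ) ≤ (q0:ℕ) := this
        omega
      intro p hp
      rcases fin2_cases (w p) with h | h
      · rcases fin2_cases (f p) with h' | h'
        · rw [h, h']
        · exfalso
          have hmem : p ∈ E := by
            simp only [hE, mem_filter, mem_univ, true_and]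
            exact ⟨h, h'⟩
          exact absurd (hEt p hmem) (by omega)
      · rw [h]
        exact hsub p h
    · right
      have hsub : ∀ q, f q = 1 → w q = 1 := by
        intro q hq
        rcases fin2_cases (w q) with h | h
        · exfalso
          have := (hP q).1 h
          rw [rankF_eq_one f q hq] at this
          omega
        · exact h
      set E := univ.filter (fun p : Fin (2*n) => w p = 1 ∧ f p = 0) with hE
      have hdec : ∀ m : ℕ, cnt f 0 m = cnt w 0 m + (E.filter fun p => p.val < m).card := by
        intro m
        rw [cnt, cnt, ← Finset.card_union_of_disjoint]
        · congr 1
          ext p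
          simp only [hE, mem_union, mem_filter, mem_univ, true_and]
          constructor
          · rintro ⟨hm, hf⟩
            rcases fin2_cases (w p) with h | h
            · exact Or.inl ⟨hm, h⟩
            · exact Or.inr ⟨⟨h, hf⟩, hm⟩
          · rintro (⟨hm, hw⟩ | ⟨⟨hw, hf⟩, hm⟩)
            · refine ⟨hm, ?_⟩
              rcases fin2_cases (f p) with h | h
              · exact h
              · have := hsub p h
                rw [this] at hw
                exact absurd hw (by omega)
            · exact ⟨hm, hf⟩
        · rw [Finset.disjoint_left]
          intro p hp hp'
          simp only [hE, mem_filter, mem_univ, true_and] at hp hp'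
          have := hp.2
          have := hp'.1.1
          omega
      have hEt : ∀ q ∈ E, lz < (q:ℕ) := by
        intro q hq
        by_contra hc
        push_neg at hc
        have hne : E.Nonempty := ⟨q, hq⟩
        set q0 := E.min' hne with hq0def
        have hq0mem : q0 ∈ E := E.min'_mem hne
        have hq0w : w q0 = 1 := (mem_filter.1 hq0mem).2.1
        have hq0f : f q0 = 0 := (mem_filter.1 hq0mem).2.2
        have hEq0 : (E.filter fun p => p.val < (q0:ℕ)).card = 0 := by
          rw [Finset.card_eq_zero, Finset.filter_eq_empty_iff]
          intro p hp
          have := E.min'_le p hp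
          rw [← hq0def] at this
          have hvv : (q0:ℕ) ≤ (p:ℕ) := this
          omega
        have hge : ¬ rankF f q0 < n := by
          intro hlt
          have := (hP q0).2 hlt
          rw [hq0w] at this
          exact absurd this (by omega)
        rw [rankF_eq_zero f q0 hq0f, hdec (q0:ℕ), hEq0] at hge
        push_neg at hge
        have hsplit := tot_split w 0 (q0:ℕ)
        have hcle := cnt_le_tot w 0 (q0:ℕ)
        have habove : (univ.filter fun p : Fin (2*n) => (q0:ℕ) ≤ (p:ℕ) ∧ w p = 0).card = 0 := by
          omega
        have hq0q : (q0:ℕ) ≤ (q:ℕ) := by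
          have := E.min'_le q hq
          rw [← hq0def] at this
          exact this
        have hplzmem : plz ∈ univ.filter fun p : Fin (2*n) => (q0:ℕ) ≤ (p:ℕ) ∧ w p = 0 := by
          simp only [mem_filter, mem_univ, true_and]
          exact ⟨by omega, hplz0⟩
        rw [Finset.card_eq_zero.1 habove] at hplzmem
        exact absurd hplzmem (Finset.notMem_empty plz)
      intro p hp
      rcases fin2_cases (f p) with h | h
      · rcases fin2_cases (w p) with h' | h'
        · rw [h, h']
        · exfalso
          have hmem : p ∈ E := by
            simp only [hE, mem_filter, mem_univ, true_and]
            exact ⟨h', h⟩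
          exact absurd (hEt p hmem) (by omega)
      · rw [h, hsub p h]
  · rintro (hA | hB)
    · have eq0 := tot_congr_above (f := f) (w := w) 0 t hA
      have eq1 := tot_congr_above (f := f) (w := w) 1 t hA
      have eadd := cnt_add f t (le_of_lt htN)
      have h3 := tot_add f
      have h4 := tot_add w
      have hc1t := cnt_one_firstOne w
      intro q
      constructor
      · intro hq
        rcases fin2_cases (f q) with h | h
        · rw [rankF_eq_zero f q h]
          have := cnt_lt_tot f 0 q h
          omega
        · have hqt : (q:ℕ) < t := by
            by_contra hc
            push_neg at hc
            have := hA q hc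
            rw [hq] at this
            rw [this] at h
            exact absurd h (by omega)
          rw [rankF_eq_one f q h]
          have h5 := cnt_succ_eq f 1 q h
          have h6 : cnt f 1 ((q:ℕ)+1) ≤ cnt f 1 t := cnt_mono f 1 (by omega)
          omega
      · intro hrank
        by_contra hq
        have hq1 : w q = 1 := by rcases fin2_cases (w q) with h | h; exact absurd h hq; exact h
        have hqt : t ≤ (q:ℕ) := firstOne_le w q hq1
        have hfq : f q = 1 := by rw [hA q hqt]; exact hq1
        rw [rankF_eq_one f q hfq] at hrank
        have e2 := tot_congr_above (f := f) (w := w) 0 (q:ℕ) (fun p hp => hA p (le_trans hqt hp))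
        have e3 := cnt_add f (q:ℕ) (le_of_lt q.2)
        have e4 := cnt_add w (q:ℕ) (le_of_lt q.2)
        omega
    · have e1 : cnt f 0 (lz+1) = cnt w 0 (lz+1) := cnt_congr 0 (lz+1) (fun p hp => hB p (by omega))
      have kge : n ≤ tot f 0 := by
        have := cnt_le_tot f 0 (lz+1)
        omega
      intro q
      constructor
      · intro hq
        have hlez : (q:ℕ) ≤ lz := lastZero_ge w q hq
        have hfq : f q = 0 := by rw [hB q hlez]; exact hq
        rw [rankF_eq_zero f q hfq]
        have e2 : cnt f 0 (q:ℕ) = cnt w 0 (q:ℕ) := cnt_congr 0 (q:ℕ) (fun p hp => hB p (by omega))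
        have := cnt_lt_tot w 0 q hq
        omega
      · intro hrank
        by_contra hq
        have hq1 : w q = 1 := by rcases fin2_cases (w q) with h | h; exact absurd h hq; exact h
        rcases fin2_cases (f q) with h | h
        · have hqlz : ¬ (q:ℕ) ≤ lz := by
            intro hc
            have := hB q hc
            rw [hq1] at this
            rw [this] at h
            exact absurd h (by omega)
          rw [rankF_eq_zero f q h] at hrank
          have := cnt_mono f 0 (show lz+1 ≤ (q:ℕ) by omega)
          omega
        · rw [rankF_eq_one f q h] at hrank
          omega
lemma card_agree {N : ℕ} (w : Fin N → Fin 2) (P : Fin N → Prop) [DecidablePred P] :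
    (univ.filter fun f : Fin N → Fin 2 => ∀ p, P p → f p = w p).card
      = 2 ^ (univ.filter fun p => ¬ P p).card := by
  classical
  rw [← Fintype.card_subtype]
  have e : {f : Fin N → Fin 2 // ∀ p, P p → f p = w p} ≃ ({p : Fin N // ¬ P p} → Fin 2) :=
    { toFun := fun f q => f.1 q.1
      invFun := fun g => ⟨fun p => if h : P p then w p else g ⟨p, h⟩, fun p hp => by simp [hp]⟩
      left_inv := fun f => by
        ext p
        by_cases h : P p
        · simp [h, f.2 p h]
        · simp [h]
      right_inv := fun g => by
        ext q
        simp [q.2] }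
  rw [Fintype.card_congr e, Fintype.card_fun, Fintype.card_subtype, Fintype.card_fin]

lemma card_val_ge {N : ℕ} (m : ℕ) (h : m ≤ N) :
    (univ.filter fun p : Fin N => m ≤ (p:ℕ)).card = N - m := by
  have h1 := Finset.card_filter_add_card_filter_not (s := (univ : Finset (Fin N)))
    (p := fun p : Fin N => (p:ℕ) < m)
  have h2 : (univ.filter fun p : Fin N => ¬ (p:ℕ) < m) = (univ.filter fun p : Fin N => m ≤ (p:ℕ)) := by
    apply filter_congr; intro p _; constructor
    · intro hp; omega
    · intro hp; omega
  rw [h2, card_val_lt m h, Finset.card_univ, Fintype.card_fin] at h1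
  omega

lemma count_P {n : ℕ} (hn : 1 ≤ n) (w : Fin (2*n) → Fin 2)
    (h0 : tot w 0 = n) (h1 : tot w 1 = n) :
    (univ.filter fun f : Fin (2*n) → Fin 2 => ∀ q, (w q = 0 ↔ rankF f q < n)).card
      = 2 ^ (firstOne w) + 2 ^ (2*n - 1 - lastZero w) - 1 := by
  classical
  have hone : ∃ p : Fin (2*n), w p = 1 := by
    have : (univ.filter fun p : Fin (2*n) => w p = 1).Nonempty := by
      rw [← Finset.card_pos, ← tot]; omega
    obtain ⟨p, hp⟩ := this
    exact ⟨p, (mem_filter.1 hp).2⟩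
  have hzero : ∃ p : Fin (2*n), w p = 0 := by
    have : (univ.filter fun p : Fin (2*n) => w p = 0).Nonempty := by
      rw [← Finset.card_pos, ← tot]; omega
    obtain ⟨p, hp⟩ := this
    exact ⟨p, (mem_filter.1 hp).2⟩
  obtain ⟨pt, hpt, hpt1⟩ := firstOne_mem w hone
  obtain ⟨plz, hplz, hplz0⟩ := lastZero_mem w hzero
  set t := firstOne w with htdef
  set lz := lastZero w with hlzdef
  have htN : t < 2*n := hpt ▸ pt.2
  have hlzN : lz < 2*n := hplz ▸ plz.2
  have cntw0t : cnt w 0 t = t := by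
    have e1 := cnt_add w t (le_of_lt htN)
    have e2 : cnt w 1 t = 0 := cnt_one_firstOne w
    omega
  have htn : t ≤ n := by
    have := cnt_le_tot w 0 t
    omega
  have cntw0lz : cnt w 0 (lz+1) = n := by
    have e1 := tot_split w 0 (lz+1)
    have e2 : (univ.filter fun p : Fin (2*n) => lz + 1 ≤ (p:ℕ) ∧ w p = 0).card = 0 :=
      zeros_le_lastZero w
    omega
  have hnlz : n ≤ lz + 1 := by
    have e1 := cnt_add w (lz+1) (by omega)
    omega
  -- rewrite the filter using rank_cond_iff
  have hfilter : (univ.filter fun f : Fin (2*n) → Fin 2 => ∀ q, (w q = 0 ↔ rankF f q < n))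
      = (univ.filter fun f : Fin (2*n) → Fin 2 =>
          (∀ p : Fin (2*n), t ≤ (p:ℕ) → f p = w p) ∨ (∀ p : Fin (2*n), (p:ℕ) ≤ lz → f p = w p)) := by
    apply filter_congr
    intro f _
    exact ⟨fun h => (rank_cond_iff hn w h0 h1 f).1 h, fun h => (rank_cond_iff hn w h0 h1 f).2 h⟩
  rw [hfilter, Finset.filter_or]
  have hinter : (univ.filter fun f : Fin (2*n) → Fin 2 =>
        ∀ p : Fin (2*n), t ≤ (p:ℕ) → f p = w p)
      ∩ (univ.filter fun f : Fin (2*n) → Fin 2 =>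
        ∀ p : Fin (2*n), (p:ℕ) ≤ lz → f p = w p) = {w} := by
    ext f
    simp only [mem_inter, mem_filter, mem_univ, true_and, mem_singleton]
    constructor
    · rintro ⟨hA, hB⟩
      funext p
      rcases le_or_gt t (p:ℕ) with h | h
      · exact hA p h
      · exact hB p (by omega)
    · rintro rfl
      exact ⟨fun p _ => rfl, fun p _ => rfl⟩
  have hcardA : (univ.filter fun f : Fin (2*n) → Fin 2 =>
      ∀ p : Fin (2*n), t ≤ (p:ℕ) → f p = w p).card = 2 ^ t := by
    rw [card_agree w (fun p => t ≤ (p:ℕ))]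
    congr 1
    have h8 : (univ.filter fun p : Fin (2*n) => ¬ t ≤ (p:ℕ))
        = (univ.filter fun p : Fin (2*n) => (p:ℕ) < t) := by
      apply filter_congr; intro p _
      constructor
      · intro hp; omega
      · intro hp; omega
    rw [h8, card_val_lt t (by omega)]
  have hcardB : (univ.filter fun f : Fin (2*n) → Fin 2 =>
      ∀ p : Fin (2*n), (p:ℕ) ≤ lz → f p = w p).card = 2 ^ (2*n - 1 - lz) := by
    clear hcardA
    rw [card_agree w (fun p => (p:ℕ) ≤ lz)]
    congr 1
    have h9 : (univ.filter fun p : Fin (2*n) => ¬ (p:ℕ) ≤ lz)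
        = (univ.filter fun p : Fin (2*n) => lz + 1 ≤ (p:ℕ)) := by
      apply filter_congr; intro p _
      constructor
      · intro hp; omega
      · intro hp; omega
    rw [h9, card_val_ge (lz+1) (by omega)]
    omega
  have hunion := Finset.card_union_add_card_inter
    (univ.filter fun f : Fin (2*n) → Fin 2 => ∀ p : Fin (2*n), t ≤ (p:ℕ) → f p = w p)
    (univ.filter fun f : Fin (2*n) → Fin 2 => ∀ p : Fin (2*n), (p:ℕ) ≤ lz → f p = w p)
  rw [hinter, Finset.card_singleton, hcardA, hcardB] at hunion
  exact Nat.eq_sub_of_add_eq hunion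

lemma shuffle_iff {n : ℕ} (f w v : Fin (2*n) → Fin 2) (σf : Equiv.Perm (Fin (2*n)))
    (hs : IsStableSort f σf) (hv : ∀ p : Fin (2*n), v p = if (p:ℕ) < n then 0 else 1) :
    w ∘ σf = v ↔ ∀ q, (w q = 0 ↔ rankF f q < n) := by
  constructor
  · intro h q
    have hq := congrFun h (σf.symm q)
    simp only [Function.comp_apply, Equiv.apply_symm_apply] at hq
    rw [hv] at hq
    have hr : rankF f q = ((σf.symm q : Fin (2*n)) : ℕ) := by
      have := rank_stable f σf hs (σf.symm q)
      rw [Equiv.apply_symm_apply] at this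
      exact this
    rw [hr]
    by_cases hlt : ((σf.symm q : Fin (2*n)) : ℕ) < n
    · rw [if_pos hlt] at hq
      exact ⟨fun _ => hlt, fun _ => hq⟩
    · rw [if_neg hlt] at hq
      constructor
      · intro h'
        rw [h'] at hq
        exact absurd hq.symm (by omega)
      · intro h'
        exact absurd h' hlt
  · intro h
    funext p
    rw [Function.comp_apply, hv]
    have hr := rank_stable f σf hs p
    have hp := h (σf p)
    rw [hr] at hp
    by_cases hlt : (p:ℕ) < n
    · rw [if_pos hlt]
      exact hp.2 hlt
    · rw [if_neg hlt]
      rcases fin2_cases (w (σf p)) with h' | h'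
      · exact absurd (hp.1 h') hlt
      · exact h'
lemma card_val_memA {N : ℕ} (A : Finset ℕ) (hA : ∀ m ∈ A, m < N) :
    (univ.filter fun p : Fin N => (p:ℕ) ∈ A).card = A.card := by
  have himg : A = (univ.filter fun p : Fin N => (p:ℕ) ∈ A).image Fin.val := by
    ext m
    simp only [Finset.mem_image, mem_filter, mem_univ, true_and]
    constructor
    · intro hm
      exact ⟨⟨m, hA m hm⟩, hm, rfl⟩
    · rintro ⟨p, hp, rfl⟩
      exact hp
  conv_rhs => rw [himg]
  rw [Finset.card_image_of_injective _ Fin.val_injective]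

lemma fiber_card {n : ℕ} (hn : 1 ≤ n) (i j : ℕ) (hi : i < n) (hj : j < n) :
    ((univ.filter fun w : Fin (2*n) → Fin 2 => tot w 0 = n ∧ tot w 1 = n).filter
        fun w => firstOne w = i ∧ 2*n - 1 - lastZero w = j).card
      = Nat.choose (2*n - (i+j+2)) (n - (i+1)) := by
  classical
  set L := 2*n - 1 - j with hL
  have hiL : i < L := by omega
  have hLn : n ≤ L := by omega
  have hL2n : L < 2*n := by omega
  -- membership facts for w in the fiber
  have wfacts : ∀ w : Fin (2*n) → Fin 2,
      w ∈ ((univ.filter fun w : Fin (2*n) → Fin 2 => tot w 0 = n ∧ tot w 1 = n).filter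
        fun w => firstOne w = i ∧ 2*n - 1 - lastZero w = j) →
      (tot w 0 = n ∧ tot w 1 = n ∧ firstOne w = i ∧ lastZero w = L) := by
    intro w hw
    rw [mem_filter, mem_filter] at hw
    obtain ⟨⟨-, h0, h1⟩, hfo, hlzj⟩ := hw
    refine ⟨h0, h1, hfo, ?_⟩
    have hzero : ∃ p : Fin (2*n), w p = 0 := by
      have : (univ.filter fun p : Fin (2*n) => w p = 0).Nonempty := by
        rw [← Finset.card_pos, ← tot]; omega
      obtain ⟨p, hp⟩ := this
      exact ⟨p, (mem_filter.1 hp).2⟩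
    obtain ⟨plz, hplz, -⟩ := lastZero_mem w hzero
    have : lastZero w < 2*n := hplz ▸ plz.2
    omega
  have zlow : ∀ w, firstOne w = i → ∀ p : Fin (2*n), (p:ℕ) < i → w p = 0 := by
    intro w hfo p hp
    exact firstOne_zero w p (by omega)
  have onei : ∀ w : Fin (2*n) → Fin 2, tot w 1 = n → firstOne w = i →
      ∀ p : Fin (2*n), (p:ℕ) = i → w p = 1 := by
    intro w h1 hfo p hp
    have hone : ∃ p : Fin (2*n), w p = 1 := by
      have : (univ.filter fun p : Fin (2*n) => w p = 1).Nonempty := by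
        rw [← Finset.card_pos, ← tot]; omega
      obtain ⟨q, hq⟩ := this
      exact ⟨q, (mem_filter.1 hq).2⟩
    obtain ⟨pt, hpt, hpt1⟩ := firstOne_mem w hone
    have : pt = p := Fin.ext (by omega)
    rw [← this]; exact hpt1
  have zeroL : ∀ w : Fin (2*n) → Fin 2, tot w 0 = n → lastZero w = L →
      ∀ p : Fin (2*n), (p:ℕ) = L → w p = 0 := by
    intro w h0 hlz p hp
    have hzero : ∃ p : Fin (2*n), w p = 0 := by
      have : (univ.filter fun p : Fin (2*n) => w p = 0).Nonempty := by
        rw [← Finset.card_pos, ← tot]; omega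
      obtain ⟨q, hq⟩ := this
      exact ⟨q, (mem_filter.1 hq).2⟩
    obtain ⟨pz, hpz, hpz0⟩ := lastZero_mem w hzero
    have : pz = p := Fin.ext (by omega)
    rw [← this]; exact hpz0
  have oneabove : ∀ w : Fin (2*n) → Fin 2, lastZero w = L →
      ∀ p : Fin (2*n), L < (p:ℕ) → w p = 1 := by
    intro w hlz p hp
    exact lastZero_one w p (by omega)
  -- middle zero count
  have midcount : ∀ w : Fin (2*n) → Fin 2, tot w 0 = n → tot w 1 = n →
      firstOne w = i → lastZero w = L →
      (univ.filter fun p : Fin (2*n) => i < (p:ℕ) ∧ (p:ℕ) < L ∧ w p = 0).card = n - (i+1) := by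
    intro w h0 h1 hfo hlz
    have hcnti : cnt w 0 i = i := by
      have e1 : (univ.filter fun p : Fin (2*n) => (p:ℕ) < i ∧ w p = 0)
          = (univ.filter fun p : Fin (2*n) => (p:ℕ) < i) := by
        apply filter_congr; intro p _
        simp only [and_iff_left_iff_imp]
        exact fun hp => zlow w hfo p hp
      rw [cnt, e1, card_val_lt i (by omega)]
    have hsplit := tot_split w 0 i
    have hhigh : (univ.filter fun p : Fin (2*n) => i ≤ (p:ℕ) ∧ w p = 0)
        = insert (⟨L, hL2n⟩ : Fin (2*n)) (univ.filter fun p : Fin (2*n) => i < (p:ℕ) ∧ (p:ℕ) < L ∧ w p = 0) := by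
      ext p
      simp only [mem_filter, mem_univ, true_and, mem_insert]
      constructor
      · rintro ⟨hip, hp0⟩
        rcases lt_trichotomy (p:ℕ) L with h | h | h
        · right
          refine ⟨?_, h, hp0⟩
          rcases lt_or_eq_of_le hip with h' | h'
          · exact h'
          · exfalso
            have := onei w h1 hfo p h'.symm
            rw [this] at hp0
            exact absurd hp0 (by omega)
        · left; exact Fin.ext (by simpa using h)
        · exfalso
          have := oneabove w hlz p h
          rw [this] at hp0
          exact absurd hp0 (by omega)
      · rintro (rfl | ⟨h1', h2', h3'⟩)
        · exact ⟨by simp; omega, zeroL w h0 hlz _ (by simp)⟩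
        · exact ⟨by omega, h3'⟩
    have hnotmem : (⟨L, hL2n⟩ : Fin (2*n)) ∉
        (univ.filter fun p : Fin (2*n) => i < (p:ℕ) ∧ (p:ℕ) < L ∧ w p = 0) := by
      simp only [mem_filter, mem_univ, true_and, not_and]
      intro _ h
      exact absurd h (by simp)
    have := congrArg Finset.card hhigh
    rw [Finset.card_insert_of_notMem hnotmem] at this
    omega
  have hbij : ((univ.filter fun w : Fin (2*n) → Fin 2 => tot w 0 = n ∧ tot w 1 = n).filter
        fun w => firstOne w = i ∧ 2*n - 1 - lastZero w = j).card
      = (Finset.powersetCard (n - (i+1)) (Finset.Ioo i L)).card := by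
    apply Finset.card_bij'
      (fun w _ => (Finset.Ioo i L).filter (fun m => ∃ p : Fin (2*n), (p:ℕ) = m ∧ w p = 0))
      (fun A _ => fun p : Fin (2*n) => if (p:ℕ) < i ∨ (p:ℕ) ∈ A ∨ (p:ℕ) = L then (0:Fin 2) else 1)
    -- hi : Ψ w ∈ powersetCard
    · intro w hw
      obtain ⟨h0, h1, hfo, hlz⟩ := wfacts w hw
      rw [Finset.mem_powersetCard]
      refine ⟨Finset.filter_subset _ _, ?_⟩
      have himg : (Finset.Ioo i L).filter (fun m => ∃ p : Fin (2*n), (p:ℕ) = m ∧ w p = 0)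
          = (univ.filter fun p : Fin (2*n) => i < (p:ℕ) ∧ (p:ℕ) < L ∧ w p = 0).image Fin.val := by
        ext m
        simp only [mem_filter, Finset.mem_Ioo, Finset.mem_image, mem_univ, true_and]
        constructor
        · rintro ⟨⟨h1', h2'⟩, p, rfl, hp0⟩
          exact ⟨p, ⟨h1', h2', hp0⟩, rfl⟩
        · rintro ⟨p, ⟨h1', h2', hp0⟩, rfl⟩
          exact ⟨⟨h1', h2'⟩, p, rfl, hp0⟩
      rw [himg, Finset.card_image_of_injective _ Fin.val_injective]
      exact midcount w h0 h1 hfo hlz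
    -- hj : Φ A ∈ fiber
    · intro A hA
      rw [Finset.mem_powersetCard] at hA
      obtain ⟨hsub, hcard⟩ := hA
      have hmem : ∀ m ∈ A, i < m ∧ m < L := by
        intro m hm
        have := hsub hm
        rw [Finset.mem_Ioo] at this
        exact this
      set Φ : Fin (2*n) → Fin 2 := fun p => if (p:ℕ) < i ∨ (p:ℕ) ∈ A ∨ (p:ℕ) = L then (0:Fin 2) else 1 with hΦ
      have htot0 : tot Φ 0 = n := by
        have hzs : (univ.filter fun p : Fin (2*n) => Φ p = 0)
            = (univ.filter fun p : Fin (2*n) => (p:ℕ) < i ∨ (p:ℕ) ∈ A ∨ (p:ℕ) = L) := by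
          apply filter_congr; intro p _
          simp only [hΦ]
          by_cases h : (p:ℕ) < i ∨ (p:ℕ) ∈ A ∨ (p:ℕ) = L
          · simp [h]
          · simp [h]
        have hsplit : (univ.filter fun p : Fin (2*n) => (p:ℕ) < i ∨ (p:ℕ) ∈ A ∨ (p:ℕ) = L)
            = (univ.filter fun p : Fin (2*n) => (p:ℕ) < i)
              ∪ (univ.filter fun p : Fin (2*n) => (p:ℕ) ∈ A)
              ∪ (univ.filter fun p : Fin (2*n) => (p:ℕ) = L) := by
          ext p
          simp only [mem_union, mem_filter, mem_univ, true_and]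
          tauto
        have hd1 : Disjoint ((univ.filter fun p : Fin (2*n) => (p:ℕ) < i))
            (univ.filter fun p : Fin (2*n) => (p:ℕ) ∈ A) := by
          rw [Finset.disjoint_left]
          intro p hp hp'
          simp only [mem_filter, mem_univ, true_and] at hp hp'
          have := hmem _ hp'
          omega
        have hd2 : Disjoint ((univ.filter fun p : Fin (2*n) => (p:ℕ) < i)
            ∪ (univ.filter fun p : Fin (2*n) => (p:ℕ) ∈ A))
            (univ.filter fun p : Fin (2*n) => (p:ℕ) = L) := by
          rw [Finset.disjoint_left]
          intro p hp hp'
          simp only [mem_union, mem_filter, mem_univ, true_and] at hp hp'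
          rcases hp with h | h
          · omega
          · have := hmem _ h
            omega
        rw [tot, hzs, hsplit, Finset.card_union_of_disjoint hd2,
          Finset.card_union_of_disjoint hd1, card_val_lt i (by omega),
          card_val_memA A (fun m hm => by have := hmem m hm; omega)]
        have : (univ.filter fun p : Fin (2*n) => (p:ℕ) = L) = {(⟨L, hL2n⟩ : Fin (2*n))} := by
          ext p
          simp only [mem_filter, mem_univ, true_and, mem_singleton]
          constructor
          · intro h; exact Fin.ext (by simpa using h)
          · rintro rfl; simp
        rw [this, Finset.card_singleton]
        omega
      have htot1 : tot Φ 1 = n := by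
        have := tot_add Φ
        omega
      have hfoΦ : firstOne Φ = i := by
        have hΦi : Φ ⟨i, by omega⟩ = 1 := by
          simp only [hΦ]
          rw [if_neg]
          push_neg
          refine ⟨by simp, ?_, by simp; omega⟩
          intro hc
          have := hmem _ hc
          simp at this
        have hle : firstOne Φ ≤ i := firstOne_le Φ ⟨i, by omega⟩ hΦi
        rcases lt_or_eq_of_le hle with h | h
        · exfalso
          have hone : ∃ p : Fin (2*n), Φ p = 1 := ⟨⟨i, by omega⟩, hΦi⟩
          obtain ⟨p1, hp1, hp11⟩ := firstOne_mem Φ hone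
          have hlow : Φ p1 = 0 := by
            simp only [hΦ]
            rw [if_pos]
            left; omega
          rw [hlow] at hp11
          exact absurd hp11 (by omega)
        · exact h
      have hlzΦ : lastZero Φ = L := by
        have hΦL : Φ ⟨L, hL2n⟩ = 0 := by
          simp only [hΦ]
          rw [if_pos]
          right; right; simp
        have hge : L ≤ lastZero Φ := lastZero_ge Φ ⟨L, hL2n⟩ hΦL
        rcases lt_or_eq_of_le hge with h | h
        · exfalso
          have hzero : ∃ p : Fin (2*n), Φ p = 0 := ⟨⟨L, hL2n⟩, hΦL⟩
          obtain ⟨pz, hpz, hpz0⟩ := lastZero_mem Φ hzero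
          have hhigh : Φ pz = 1 := by
            simp only [hΦ]
            rw [if_neg]
            push_neg
            refine ⟨by omega, ?_, by omega⟩
            intro hc
            have := hmem _ hc
            omega
          rw [hhigh] at hpz0
          exact absurd hpz0 (by omega)
        · exact h.symm
      rw [mem_filter, mem_filter]
      exact ⟨⟨mem_univ _, htot0, htot1⟩, hfoΦ, by omega⟩
    -- left inverse
    · intro w hw
      obtain ⟨h0, h1, hfo, hlz⟩ := wfacts w hw
      funext p
      by_cases hp1 : (p:ℕ) < i
      · rw [if_pos (Or.inl hp1)]
        exact (zlow w hfo p hp1).symm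
      · by_cases hp2 : (p:ℕ) = i
        · rw [if_neg, (onei w h1 hfo p hp2)]
          push_neg
          refine ⟨by omega, ?_, by omega⟩
          intro hc
          rw [mem_filter, Finset.mem_Ioo] at hc
          omega
        · by_cases hp3 : (p:ℕ) < L
          · rcases fin2_cases (w p) with h | h
            · rw [if_pos, h]
              right; left
              rw [mem_filter, Finset.mem_Ioo]
              exact ⟨⟨by omega, hp3⟩, p, rfl, h⟩
            · rw [if_neg, h]
              push_neg
              refine ⟨by omega, ?_, by omega⟩
              intro hc
              rw [mem_filter] at hc
              obtain ⟨-, q, hq, hq0⟩ := hc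
              have : q = p := Fin.ext hq
              rw [this] at hq0
              rw [hq0] at h
              exact absurd h (by omega)
          · by_cases hp4 : (p:ℕ) = L
            · rw [if_pos (Or.inr (Or.inr hp4)), (zeroL w h0 hlz p hp4)]
            · rw [if_neg, (oneabove w hlz p (by omega))]
              push_neg
              refine ⟨by omega, ?_, hp4⟩
              intro hc
              rw [mem_filter, Finset.mem_Ioo] at hc
              omega
    -- right inverse
    · intro A hA
      rw [Finset.mem_powersetCard] at hA
      obtain ⟨hsub, -⟩ := hA
      have hmem : ∀ m ∈ A, i < m ∧ m < L := by
        intro m hm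
        have := hsub hm
        rw [Finset.mem_Ioo] at this
        exact this
      ext m
      rw [mem_filter, Finset.mem_Ioo]
      constructor
      · rintro ⟨⟨him, hmL⟩, p, rfl, hp0⟩
        dsimp only at hp0
        by_cases hc : ((p:ℕ) < i ∨ (p:ℕ) ∈ A ∨ (p:ℕ) = L)
        · rcases hc with h | h | h
          · omega
          · exact h
          · omega
        · rw [if_neg hc] at hp0
          exact absurd hp0 (by omega)
      · intro hm
        have := hmem m hm
        refine ⟨⟨this.1, this.2⟩, ⟨m, by omega⟩, rfl, ?_⟩
        dsimp only
        rw [if_pos]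
        right; left
        simpa using hm
  rw [hbij, Finset.card_powersetCard, Nat.card_Ioo]
  congr 1
  omega
lemma bounds_fo {n : ℕ} (hn : 1 ≤ n) (w : Fin (2*n) → Fin 2)
    (h0 : tot w 0 = n) (h1 : tot w 1 = n) :
    firstOne w ≤ n ∧ n ≤ lastZero w + 1 ∧ lastZero w < 2*n ∧ firstOne w < 2*n := by
  have hone : ∃ p : Fin (2*n), w p = 1 := by
    have : (univ.filter fun p : Fin (2*n) => w p = 1).Nonempty := by
      rw [← Finset.card_pos, ← tot]; omega
    obtain ⟨p, hp⟩ := this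
    exact ⟨p, (mem_filter.1 hp).2⟩
  have hzero : ∃ p : Fin (2*n), w p = 0 := by
    have : (univ.filter fun p : Fin (2*n) => w p = 0).Nonempty := by
      rw [← Finset.card_pos, ← tot]; omega
    obtain ⟨p, hp⟩ := this
    exact ⟨p, (mem_filter.1 hp).2⟩
  obtain ⟨pt, hpt, hpt1⟩ := firstOne_mem w hone
  obtain ⟨plz, hplz, hplz0⟩ := lastZero_mem w hzero
  have htN : firstOne w < 2*n := hpt ▸ pt.2
  have hlzN : lastZero w < 2*n := hplz ▸ plz.2
  have cntw0t : cnt w 0 (firstOne w) = firstOne w := by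
    have e1 := cnt_add w (firstOne w) (le_of_lt htN)
    have e2 : cnt w 1 (firstOne w) = 0 := cnt_one_firstOne w
    omega
  have htn : firstOne w ≤ n := by
    have := cnt_le_tot w 0 (firstOne w)
    omega
  have cntw0lz : cnt w 0 (lastZero w + 1) = n := by
    have e1 := tot_split w 0 (lastZero w + 1)
    have e2 : (univ.filter fun p : Fin (2*n) => lastZero w + 1 ≤ (p:ℕ) ∧ w p = 0).card = 0 :=
      zeros_le_lastZero w
    omega
  have hnlz : n ≤ lastZero w + 1 := by
    have e1 := cnt_add w (lastZero w + 1) (by omega)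
    omega
  exact ⟨htn, hnlz, hlzN, htN⟩

lemma eq_v_of_firstOne {n : ℕ} (hn : 1 ≤ n) (w v : Fin (2*n) → Fin 2)
    (h0 : tot w 0 = n) (h1 : tot w 1 = n)
    (hv : ∀ p : Fin (2*n), v p = if (p:ℕ) < n then 0 else 1)
    (hfo : firstOne w = n) : w = v := by
  have hcnt : cnt w 0 n = n := by
    have e1 : (univ.filter fun p : Fin (2*n) => (p:ℕ) < n ∧ w p = 0)
        = (univ.filter fun p : Fin (2*n) => (p:ℕ) < n) := by
      apply filter_congr; intro p _
      simp only [and_iff_left_iff_imp]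
      exact fun hp => firstOne_zero w p (by omega)
    rw [cnt, e1, card_val_lt n (by omega)]
  have habove : (univ.filter fun p : Fin (2*n) => n ≤ (p:ℕ) ∧ w p = 0).card = 0 := by
    have := tot_split w 0 n
    omega
  funext p
  rcases lt_or_ge (p:ℕ) n with h | h
  · rw [firstOne_zero w p (by omega), hv, if_pos h]
  · rw [hv, if_neg (by omega)]
    rcases fin2_cases (w p) with h' | h'
    · exfalso
      have : p ∈ univ.filter fun p : Fin (2*n) => n ≤ (p:ℕ) ∧ w p = 0 := by
        simp only [mem_filter, mem_univ, true_and]; exact ⟨h, h'⟩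
      rw [Finset.card_eq_zero.1 habove] at this
      exact absurd this (Finset.notMem_empty p)
    · exact h'

lemma eq_v_of_lastZero {n : ℕ} (hn : 1 ≤ n) (w v : Fin (2*n) → Fin 2)
    (h0 : tot w 0 = n) (h1 : tot w 1 = n)
    (hv : ∀ p : Fin (2*n), v p = if (p:ℕ) < n then 0 else 1)
    (hlz : lastZero w = n - 1) : w = v := by
  have hsub : (univ.filter fun p : Fin (2*n) => n ≤ (p:ℕ))
      ⊆ (univ.filter fun p : Fin (2*n) => w p = 1) := by
    intro p hp
    simp only [mem_filter, mem_univ, true_and] at hp ⊢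
    exact lastZero_one w p (by omega)
  have hcard : (univ.filter fun p : Fin (2*n) => n ≤ (p:ℕ)).card = n := by
    rw [card_val_ge n (by omega)]; omega
  funext p
  rcases lt_or_ge (p:ℕ) n with h | h
  · rw [hv, if_pos h]
    rcases fin2_cases (w p) with h' | h'
    · exact h'
    · exfalso
      have hins : insert p (univ.filter fun p : Fin (2*n) => n ≤ (p:ℕ))
          ⊆ (univ.filter fun p : Fin (2*n) => w p = 1) := by
        intro q hq
        rcases Finset.mem_insert.1 hq with rfl | hq'
        · simp only [mem_filter, mem_univ, true_and]; exact h'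
        · exact hsub hq'
      have hcard2 := Finset.card_le_card hins
      rw [Finset.card_insert_of_notMem (by simp only [mem_filter, mem_univ, true_and]; omega),
        hcard] at hcard2
      rw [← tot] at hcard2
      omega
  · rw [hv, if_neg (by omega)]
    exact lastZero_one w p (by omega)

lemma v_facts {n : ℕ} (hn : 1 ≤ n) (v : Fin (2*n) → Fin 2)
    (hv : ∀ p : Fin (2*n), v p = if (p:ℕ) < n then 0 else 1) :
    tot v 0 = n ∧ tot v 1 = n ∧ firstOne v = n ∧ lastZero v = n - 1 := by
  have h2n : n < 2*n := by omega
  have h0 : tot v 0 = n := by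
    have e1 : (univ.filter fun p : Fin (2*n) => v p = 0)
        = (univ.filter fun p : Fin (2*n) => (p:ℕ) < n) := by
      apply filter_congr; intro p _
      rw [hv]
      rcases lt_or_ge (p:ℕ) n with h | h
      · simp [h]
      · rw [if_neg (by omega)]
        constructor
        · intro h'; exact absurd h' (by omega)
        · intro h'; omega
    rw [tot, e1, card_val_lt n (by omega)]
  have h1 : tot v 1 = n := by
    have := tot_add v
    omega
  refine ⟨h0, h1, ?_, ?_⟩
  · have hv1 : v ⟨n, h2n⟩ = 1 := by rw [hv]; simp
    have hle : firstOne v ≤ n := firstOne_le v ⟨n, h2n⟩ hv1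
    rcases lt_or_eq_of_le hle with h | h
    · exfalso
      obtain ⟨p1, hp1, hp11⟩ := firstOne_mem v ⟨⟨n, h2n⟩, hv1⟩
      rw [hv, if_pos (by omega)] at hp11
      exact absurd hp11 (by omega)
    · exact h
  · have hv0 : v ⟨n-1, by omega⟩ = 0 := by rw [hv]; simp; omega
    have hge : n - 1 ≤ lastZero v := lastZero_ge v ⟨n-1, by omega⟩ hv0
    rcases lt_or_eq_of_le hge with h | h
    · exfalso
      obtain ⟨pz, hpz, hpz0⟩ := lastZero_mem v ⟨⟨n-1, by omega⟩, hv0⟩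
      rw [hv] at hpz0
      by_cases hc : (pz:ℕ) < n
      · rw [if_pos hc] at hpz0; omega
      · rw [if_neg hc] at hpz0
        exact absurd hpz0 (by omega)
    · exact h.symm

lemma inv_choose_le {n : ℕ} (hn : 1 ≤ n) :
    (1 : ℚ) / (Nat.choose (2*n) n : ℚ) ≤ ((2:ℚ)^(n+1) - 1) / 2^(2*n) := by
  have hC : 0 < Nat.choose (2*n) n := Nat.choose_pos (by omega)
  have hnat : 2^(2*n) ≤ (2^(n+1) - 1) * Nat.choose (2*n) n := by
    have h1 : 4^n ≤ (2*n+1) * Nat.choose (2*n) n :=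
      Nat.four_pow_le_two_mul_add_one_mul_central_binom n
    have h3 : (4:ℕ)^n = 2^(2*n) := by
      rw [show (4:ℕ) = 2^2 by norm_num, ← pow_mul]
    have h4 : 2*n+1 ≤ 2^(n+1) - 1 := by
      have := Nat.lt_two_pow_self (n := n)
      have : 2^(n+1) = 2 * 2^n := by ring
      omega
    calc 2^(2*n) = 4^n := h3.symm
      _ ≤ (2*n+1) * Nat.choose (2*n) n := h1
      _ ≤ (2^(n+1) - 1) * Nat.choose (2*n) n := Nat.mul_le_mul_right _ h4
  rw [div_le_div_iff₀ (by positivity) (by positivity)]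
  have hcast : ((2:ℚ)^(n+1) - 1) = ((2^(n+1) - 1 : ℕ) : ℚ) := by
    have : (1:ℕ) ≤ 2^(n+1) := Nat.one_le_two_pow
    push_cast [this]
    ring
  rw [one_mul, hcast]
  have := hnat
  calc (2:ℚ)^(2*n) = ((2^(2*n) : ℕ) : ℚ) := by push_cast; ring
    _ ≤ (((2^(n+1) - 1) * Nat.choose (2*n) n : ℕ) : ℚ) := by
        exact_mod_cast Nat.cast_le.2 hnat
    _ = ((2^(n+1) - 1 : ℕ) : ℚ) * (Nat.choose (2*n) n : ℚ) := by push_cast; ring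

/-- The total variation distance from uniform after a single GSR `2`-shuffle of a deck of
`n` red cards atop `n` black cards equals
`(1/2)·[((2^{n+1}-1)/2^{2n} - 1/C(2n,n)) + ∑_{i=0}^{n-1} ∑_{j=0}^{n-1}
  |(2^i+2^j-1)/2^{2n} - 1/C(2n,n)|·C(2n-(i+j+2), n-(i+1))]`. -/
theorem two_shuffle_red_black_total_variation (n : ℕ) (hn : 1 ≤ n)
    (σ : (Fin (2 * n) → Fin 2) → Equiv.Perm (Fin (2 * n)))
    (hσ : ∀ f, IsStableSort f (σ f))
    (v : Fin (2 * n) → Fin 2) (hv : ∀ p : Fin (2 * n), v p = if (p : ℕ) < n then 0 else 1) :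
    ((1 : ℚ) / 2) * ∑ w ∈ Finset.univ.filter (fun w : Fin (2 * n) → Fin 2 =>
        (Finset.univ.filter fun p => w p = 0).card = n ∧
        (Finset.univ.filter fun p => w p = 1).card = n),
      |((Finset.univ.filter fun f : Fin (2 * n) → Fin 2 => w ∘ σ f = v).card : ℚ)
          / 2 ^ (2 * n) - 1 / (Nat.choose (2 * n) n : ℚ)|
    = ((1 : ℚ) / 2) *
        ((((2 ^ (n + 1) - 1 : ℚ)) / 2 ^ (2 * n) - 1 / (Nat.choose (2 * n) n : ℚ))
          + ∑ i ∈ Finset.range n, ∑ j ∈ Finset.range n,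
              |((2 ^ i + 2 ^ j - 1 : ℚ)) / 2 ^ (2 * n) - 1 / (Nat.choose (2 * n) n : ℚ)|
                * (Nat.choose (2 * n - (i + j + 2)) (n - (i + 1)) : ℚ)) := by
    classical
  congr 1
  obtain ⟨hv0, hv1, hvfo, hvlz⟩ := v_facts hn v hv
  have hset : (Finset.univ.filter (fun w : Fin (2 * n) → Fin 2 =>
        (Finset.univ.filter fun p => w p = 0).card = n ∧
        (Finset.univ.filter fun p => w p = 1).card = n))
      = (univ.filter fun w : Fin (2*n) → Fin 2 => tot w 0 = n ∧ tot w 1 = n) := rfl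
  trans (∑ w ∈ (univ.filter fun w : Fin (2*n) → Fin 2 => tot w 0 = n ∧ tot w 1 = n),
      |((2:ℚ) ^ (firstOne w) + 2 ^ (2*n - 1 - lastZero w) - 1) / 2 ^ (2 * n)
        - 1 / (Nat.choose (2 * n) n : ℚ)|)
  · apply Finset.sum_congr hset
    intro w hw
    rw [mem_filter] at hw
    obtain ⟨-, h0, h1⟩ := hw
    have hcard : (Finset.univ.filter fun f : Fin (2 * n) → Fin 2 => w ∘ σ f = v).card
        = 2 ^ (firstOne w) + 2 ^ (2*n - 1 - lastZero w) - 1 := by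
      have he : (Finset.univ.filter fun f : Fin (2 * n) → Fin 2 => w ∘ σ f = v)
          = (Finset.univ.filter fun f : Fin (2 * n) → Fin 2 =>
              ∀ q, (w q = 0 ↔ rankF f q < n)) := by
        apply filter_congr
        intro f _
        constructor
        · intro h; exact (shuffle_iff f w v (σ f) (hσ f) hv).1 h
        · intro h; exact (shuffle_iff f w v (σ f) (hσ f) hv).2 h
      rw [he]
      exact count_P hn w h0 h1
    rw [hcard]
    congr 2
    have h2 : (1:ℕ) ≤ 2 ^ (firstOne w) + 2 ^ (2*n - 1 - lastZero w) := by
      have h3 : (0:ℕ) < 2 ^ (firstOne w) := Nat.pow_pos (by norm_num)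
      exact le_trans h3 (Nat.le_add_right _ _)
    rw [Nat.cast_sub h2]
    push_cast
    ring
  · have hvS : v ∈ (univ.filter fun w : Fin (2*n) → Fin 2 => tot w 0 = n ∧ tot w 1 = n) :=
      mem_filter.2 ⟨mem_univ _, hv0, hv1⟩
    rw [← Finset.add_sum_erase _ _ hvS]
    congr 1
    · rw [hvfo, hvlz, show 2*n - 1 - (n-1) = n by omega]
      rw [show ((2:ℚ) ^ n + 2 ^ n - 1) = 2 ^ (n+1) - 1 by ring]
      exact abs_of_nonneg (sub_nonneg.2 (inv_choose_le hn))
    · rw [← Finset.sum_product']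
      have hmaps : ∀ w ∈ (univ.filter fun w : Fin (2*n) → Fin 2 =>
          tot w 0 = n ∧ tot w 1 = n).erase v,
          (firstOne w, 2*n - 1 - lastZero w) ∈ Finset.range n ×ˢ Finset.range n := by
        intro w hw
        rw [Finset.mem_erase, mem_filter] at hw
        obtain ⟨hne, -, h0, h1⟩ := hw
        obtain ⟨hb1, hb2, hb3, hb4⟩ := bounds_fo hn w h0 h1
        have hfo : firstOne w < n := by
          rcases lt_or_eq_of_le hb1 with h | h
          · exact h
          · exact absurd (eq_v_of_firstOne hn w v h0 h1 hv h) hne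
        have hlz : 2*n - 1 - lastZero w < n := by
          by_contra hc
          push_neg at hc
          have : lastZero w = n - 1 := by omega
          exact hne (eq_v_of_lastZero hn w v h0 h1 hv this)
        exact Finset.mem_product.2 ⟨Finset.mem_range.2 hfo, Finset.mem_range.2 hlz⟩
      rw [← Finset.sum_fiberwise_of_maps_to hmaps
        (fun w => |((2:ℚ) ^ (firstOne w) + 2 ^ (2*n - 1 - lastZero w) - 1) / 2 ^ (2 * n)
          - 1 / (Nat.choose (2 * n) n : ℚ)|)]
      apply Finset.sum_congr rfl
      intro ij hij
      obtain ⟨hi, hj⟩ := Finset.mem_product.1 hij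
      rw [Finset.mem_range] at hi hj
      have hfib : ((univ.filter fun w : Fin (2*n) → Fin 2 =>
            tot w 0 = n ∧ tot w 1 = n).erase v).filter
            (fun w => (firstOne w, 2*n - 1 - lastZero w) = ij)
          = (univ.filter fun w : Fin (2*n) → Fin 2 => tot w 0 = n ∧ tot w 1 = n).filter
            (fun w => firstOne w = ij.1 ∧ 2*n - 1 - lastZero w = ij.2) := by
        ext w
        rw [mem_filter, mem_filter, Finset.mem_erase, Prod.ext_iff]
        constructor
        · rintro ⟨⟨hne, hS⟩, hl⟩
          exact ⟨hS, hl⟩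
        · rintro ⟨hS, hl1, hl2⟩
          refine ⟨⟨?_, hS⟩, hl1, hl2⟩
          intro hc
          rw [hc, hvfo] at hl1
          omega
      have hsum : ∀ w ∈ ((univ.filter fun w : Fin (2*n) → Fin 2 =>
            tot w 0 = n ∧ tot w 1 = n).erase v).filter
            (fun w => (firstOne w, 2*n - 1 - lastZero w) = ij),
          |((2:ℚ) ^ (firstOne w) + 2 ^ (2*n - 1 - lastZero w) - 1) / 2 ^ (2 * n)
            - 1 / (Nat.choose (2 * n) n : ℚ)|
          = |((2:ℚ) ^ ij.1 + 2 ^ ij.2 - 1) / 2 ^ (2 * n)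
            - 1 / (Nat.choose (2 * n) n : ℚ)| := by
        intro w hw
        rw [mem_filter] at hw
        obtain ⟨-, he⟩ := hw
        rw [← he]
      rw [Finset.sum_congr rfl hsum, Finset.sum_const, hfib, fiber_card hn ij.1 ij.2 hi hj,
        nsmul_eq_mul, mul_comm]
end

section
/- Fix n ≥ 1 and let v : {1,…,2n} → {1,2} be the alternating deck v(i) = 1 if i is odd and v(i) = 2 if i is even. Then after a single GSR 2-shuffle of v: (a) the probability of returning to the initial alternating deck is Q_2^v(v) = (2^{n−1} + 2^n)/2^{2n}; and (b) for every deck w : {1,…,2n} → {1,2} with exactly n entries equal to 1 and n equal to 2, the quantity 2^{2n}·Q_2^v(w) belongs to the set {0, 2^{n−1}, 2^n, 2^{n−1} + 2^n}. -/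
set_option maxHeartbeats 1000000

namespace TwoShuffleAux


variable {N : ℕ}

/-- encoding key for lexicographic comparison -/
def keyv (f : Fin N → Fin 2) (q : Fin N) : ℕ := (f q).val * N + q.val

def rank (f : Fin N → Fin 2) (p : Fin N) : ℕ :=
  (Finset.univ.filter fun q => keyv f q < keyv f p).card

lemma key_strictMono (f : Fin N → Fin 2) (σ : Equiv.Perm (Fin N))
    (h : IsStableSort f σ) : StrictMono fun i => keyv f (σ i) := by
  intro i j hij
  have hmono := h.1 hij.le
  simp only [Function.comp_apply] at hmono
  rcases lt_or_eq_of_le hmono with h' | h'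
  · have h1 : (f (σ i)).val + 1 ≤ (f (σ j)).val := h'
    have h2 : ((f (σ i)).val + 1) * N ≤ (f (σ j)).val * N := Nat.mul_le_mul_right N h1
    have h3 : (σ i).val < N := (σ i).isLt
    simp only [keyv]
    calc (f (σ i)).val * N + (σ i).val < (f (σ i)).val * N + N := by omega
    _ = ((f (σ i)).val + 1) * N := by ring
    _ ≤ (f (σ j)).val * N := h2
    _ ≤ (f (σ j)).val * N + (σ j).val := Nat.le_add_right _ _
  · have h2 := h.2 i j hij h'
    simp only [keyv, h']
    have : (σ i).val < (σ j).val := h2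
    omega

lemma sigma_symm_eq_rank (f : Fin N → Fin 2) (σ : Equiv.Perm (Fin N))
    (h : IsStableSort f σ) (p : Fin N) : ((σ.symm p : Fin N) : ℕ) = rank f p := by
  have hm := key_strictMono f σ h
  set i := σ.symm p with hi
  have hp : σ i = p := Equiv.apply_symm_apply σ p
  have h1 : (Finset.univ.filter fun j => keyv f (σ j) < keyv f (σ i)) =
      Finset.univ.filter fun j => j < i := by
    apply Finset.filter_congr
    intro j _
    simp [hm.lt_iff_lt]
  have h2 : (Finset.univ.filter fun j : Fin N => j < i) = Finset.Iio i := by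
    ext j; simp
  have h3 : (Finset.univ.filter fun j => keyv f (σ j) < keyv f (σ i)).card
      = rank f p := by
    rw [rank]
    apply Finset.card_nbij' (fun j => σ j) (fun q => σ.symm q)
    · intro a ha; simp only [Finset.mem_coe, Finset.mem_filter, Finset.mem_univ, true_and] at *
      rwa [hp] at ha
    · intro a ha; simp only [Finset.mem_coe, Finset.mem_filter, Finset.mem_univ, true_and] at *
      rwa [Equiv.apply_symm_apply, hp]
    · intro a _; simp
    · intro a _; simp
  rw [← h3, h1, h2, Fin.card_Iio]



variable {N : ℕ}

/-- value of `f` extended to `ℕ` -/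
def Fv (f : Fin N → Fin 2) (m : ℕ) : ℕ := if h : m < N then (f ⟨m, h⟩).val else 0

/-- number of zeros of `f` among positions `< m` -/
def Cz (f : Fin N → Fin 2) (m : ℕ) : ℕ :=
  (Finset.univ.filter fun q : Fin N => (q : ℕ) < m ∧ f q = 0).card

/-- number of ones of `f` among positions `< m` -/
def Dz (f : Fin N → Fin 2) (m : ℕ) : ℕ :=
  (Finset.univ.filter fun q : Fin N => (q : ℕ) < m ∧ f q = 1).card

lemma Fv_le_one (f : Fin N → Fin 2) (m : ℕ) : Fv f m ≤ 1 := by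
  unfold Fv
  split
  · exact Nat.lt_succ_iff.mp (Fin.is_lt _)
  · omega

lemma fin2 (x : Fin 2) : x = 0 ∨ x = 1 := by fin_cases x <;> simp

lemma Fv_eq_val (f : Fin N → Fin 2) (p : Fin N) : Fv f (p : ℕ) = (f p).val := by
  simp [Fv, p.isLt]

lemma Cz_zero (f : Fin N → Fin 2) : Cz f 0 = 0 := by simp [Cz]

lemma filter_succ_split (f : Fin N → Fin 2) (m : ℕ) (hm : m < N) (c : Fin 2) :
    (Finset.univ.filter fun q : Fin N => (q : ℕ) < m + 1 ∧ f q = c) =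
      if f ⟨m, hm⟩ = c then
        insert ⟨m, hm⟩ (Finset.univ.filter fun q : Fin N => (q : ℕ) < m ∧ f q = c)
      else (Finset.univ.filter fun q : Fin N => (q : ℕ) < m ∧ f q = c) := by
  split
  case isTrue h0 =>
    ext q
    simp only [Finset.mem_filter, Finset.mem_univ, true_and, Finset.mem_insert]
    constructor
    · rintro ⟨h1, h2⟩
      by_cases hq : (q : ℕ) = m
      · left; exact Fin.ext hq
      · right; exact ⟨by omega, h2⟩
    · rintro (rfl | ⟨h1, h2⟩)
      · exact ⟨by simp, h0⟩
      · exact ⟨by omega, h2⟩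
  case isFalse h0 =>
    ext q
    simp only [Finset.mem_filter, Finset.mem_univ, true_and]
    constructor
    · rintro ⟨h1, h2⟩
      refine ⟨?_, h2⟩
      by_cases hq : (q : ℕ) = m
      · exfalso; apply h0; rw [← h2]; congr 1; exact (Fin.ext hq).symm
      · omega
    · rintro ⟨h1, h2⟩
      exact ⟨by omega, h2⟩

lemma not_mem_lt_filter (f : Fin N → Fin 2) (m : ℕ) (hm : m < N) (c : Fin 2) :
    (⟨m, hm⟩ : Fin N) ∉ (Finset.univ.filter fun q : Fin N => (q : ℕ) < m ∧ f q = c) := by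
  simp

lemma Cz_succ (f : Fin N → Fin 2) (m : ℕ) (hm : m < N) :
    Cz f (m + 1) = Cz f m + (1 - Fv f m) := by
  unfold Cz
  rw [filter_succ_split f m hm 0]
  have hv : Fv f m = (f ⟨m, hm⟩).val := by simp [Fv, hm]
  by_cases h0 : f ⟨m, hm⟩ = 0
  · rw [if_pos h0, Finset.card_insert_of_notMem (not_mem_lt_filter f m hm 0)]
    have : Fv f m = 0 := by rw [hv, h0]; rfl
    omega
  · rw [if_neg h0]
    have : Fv f m = 1 := by
      rcases fin2 (f ⟨m, hm⟩) with h | h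
      · exact absurd h h0
      · rw [hv, h]; rfl
    omega

lemma Dz_succ (f : Fin N → Fin 2) (m : ℕ) (hm : m < N) :
    Dz f (m + 1) = Dz f m + Fv f m := by
  unfold Dz
  rw [filter_succ_split f m hm 1]
  have hv : Fv f m = (f ⟨m, hm⟩).val := by simp [Fv, hm]
  by_cases h0 : f ⟨m, hm⟩ = 1
  · rw [if_pos h0, Finset.card_insert_of_notMem (not_mem_lt_filter f m hm 1)]
    have : Fv f m = 1 := by rw [hv, h0]; rfl
    omega
  · rw [if_neg h0]
    have : Fv f m = 0 := by
      rcases fin2 (f ⟨m, hm⟩) with h | h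
      · rw [hv, h]; rfl
      · exact absurd h h0
    omega

lemma Dz_zero (f : Fin N → Fin 2) : Dz f 0 = 0 := by simp [Dz]

lemma Cz_add_Dz (f : Fin N → Fin 2) (m : ℕ) (hm : m ≤ N) : Cz f m + Dz f m = m := by
  induction m with
  | zero => simp [Cz_zero, Dz_zero]
  | succ k ih =>
    have hk : k < N := by omega
    rw [Cz_succ f k hk, Dz_succ f k hk]
    have := Fv_le_one f k
    have := ih (by omega)
    omega

lemma Cz_le (f : Fin N → Fin 2) (m : ℕ) (hm : m ≤ N) : Cz f m ≤ m := by
  have := Cz_add_Dz f m hm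
  omega



variable {N : ℕ}

lemma rank_eq (f : Fin N → Fin 2) (p : Fin N) :
    rank f p = if f p = 0 then Cz f (p : ℕ) else Cz f N + Dz f (p : ℕ) := by
  unfold rank
  by_cases hp : f p = 0
  · rw [if_pos hp]
    unfold Cz
    congr 1
    apply Finset.filter_congr
    intro q _
    rcases fin2 (f q) with h | h
    · simp only [keyv, h, hp, Fin.val_zero, zero_mul, zero_add]
      constructor
      · intro h1; exact ⟨h1, trivial⟩
      · intro h1; exact h1.1
    · simp only [keyv, h, hp, Fin.val_zero, Fin.val_one, zero_mul, one_mul, zero_add]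
      have := p.isLt
      constructor
      · intro h1; omega
      · rintro ⟨-, h2⟩; exact absurd h2 (by decide)
  · rw [if_neg hp]
    have hp1 : f p = 1 := by rcases fin2 (f p) with h | h; exact absurd h hp; exact h
    have hsplit : (Finset.univ.filter fun q => keyv f q < keyv f p) =
        (Finset.univ.filter fun q : Fin N => (q : ℕ) < N ∧ f q = 0) ∪
        (Finset.univ.filter fun q : Fin N => (q : ℕ) < (p : ℕ) ∧ f q = 1) := by
      rw [← Finset.filter_or]
      apply Finset.filter_congr
      intro q _
      have hq := q.isLt
      have hpp := p.isLt
      rcases fin2 (f q) with h | h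
      · simp only [keyv, h, hp1, Fin.val_zero, Fin.val_one, zero_mul, one_mul, zero_add]
        constructor
        · intro _; left; exact ⟨hq, trivial⟩
        · intro _; omega
      · simp only [keyv, h, hp1, Fin.val_zero, Fin.val_one, one_mul]
        constructor
        · intro h1; right; exact ⟨by omega, trivial⟩
        · rintro (⟨-, h2⟩ | ⟨h2, -⟩)
          · exact absurd h2 (by decide)
          · omega
    rw [hsplit, Finset.card_union_of_disjoint]
    · rfl
    · rw [Finset.disjoint_left]
      rintro q hq1 hq2
      simp only [Finset.mem_filter, Finset.mem_univ, true_and] at hq1 hq2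
      rw [hq1.2] at hq2
      exact absurd hq2.2 (by decide)

lemma rank_mod_two (f : Fin N → Fin 2) (p : Fin N) :
    rank f p % 2 =
      (Cz f (p : ℕ) + if (p : ℕ) % 2 = Cz f N % 2 then 0 else (f p).val) % 2 := by
  rw [rank_eq]
  rcases fin2 (f p) with h | h
  · rw [if_pos h]
    have : (f p).val = 0 := by rw [h]; rfl
    rw [this]
    split <;> rfl
  · rw [if_neg (by rw [h]; decide)]
    have hval : (f p).val = 1 := by rw [h]; rfl
    rw [hval]
    have hd := Cz_add_Dz f (p : ℕ) (le_of_lt p.isLt)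
    split
    case isTrue hpar => omega
    case isFalse hpar => omega


def GoodF {n : ℕ} (w f : Fin (2*n) → Fin 2) : Prop :=
  ∀ m, m < 2*n → Fv w m = (Cz f m + if m % 2 = Cz f (2*n) % 2 then 0 else Fv f m) % 2

lemma goodF_iff {n : ℕ} (w f : Fin (2*n) → Fin 2) :
    (∀ p : Fin (2*n), (w p).val = rank f p % 2) ↔ GoodF w f := by
  constructor
  · intro h m hm
    have h2 := h ⟨m, hm⟩
    rw [rank_mod_two] at h2
    have e1 : Fv w m = (w ⟨m, hm⟩).val := by simp [Fv, hm]
    have e2 : Fv f m = (f ⟨m, hm⟩).val := by simp [Fv, hm]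
    rw [e1, e2]
    simpa using h2
  · intro h p
    have h2 := h p.val p.isLt
    rw [rank_mod_two]
    rw [Fv_eq_val w p, Fv_eq_val f p] at h2
    exact h2

def Cond0 {n : ℕ} (w : Fin (2*n) → Fin 2) : Prop :=
  Fv w 0 = 0 ∧ Fv w (2*n-1) = 1 ∧ ∀ i, i+1 < n → Fv w (2*i+1) ≠ Fv w (2*i+2)

def Cond1 {n : ℕ} (w : Fin (2*n) → Fin 2) : Prop :=
  ∀ i, i < n → Fv w (2*i) ≠ Fv w (2*i+1)

def Pat0 {n : ℕ} (w f : Fin (2*n) → Fin 2) : Prop :=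
  ∀ i, i < n → Fv f (2*i+1) = (Fv f (2*i) + 1 + Fv w (2*i) + Fv w (2*i+1)) % 2

def Pat1 {n : ℕ} (w f : Fin (2*n) → Fin 2) : Prop :=
  Fv f 0 = Fv w 0 ∧ Fv f (2*n-1) = Fv w (2*n-1) ∧
  ∀ i, i+1 < n → Fv f (2*i+2) = (Fv f (2*i+1) + 1 + Fv w (2*i+1) + Fv w (2*i+2)) % 2

section ClassLemmas

variable {n : ℕ} (w f : Fin (2*n) → Fin 2)

lemma L0a (hn : 1 ≤ n) (hg : GoodF w f) (hK : Cz f (2*n) % 2 = 0) :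
    Cond0 w ∧ Pat0 w f := by
  have he : ∀ i, i < n → Fv w (2*i) = Cz f (2*i) % 2 := by
    intro i hi
    have h1 := hg (2*i) (by omega)
    rw [if_pos (by omega)] at h1
    simpa using h1
  have ho : ∀ i, i < n → Fv w (2*i+1) = (Cz f (2*i+1) + Fv f (2*i+1)) % 2 := by
    intro i hi
    have h1 := hg (2*i+1) (by omega)
    rw [if_neg (by omega)] at h1
    exact h1
  have hstep : ∀ i, i < n → Cz f (2*i+2) % 2 = (Fv w (2*i+1) + 1) % 2 := by
    intro i hi
    have h1 := ho i hi
    have h2 := Cz_succ f (2*i+1) (by omega)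
    rw [show 2*i+1+1 = 2*i+2 from rfl] at h2
    have h3 := Fv_le_one f (2*i+1)
    have h4 := Fv_le_one w (2*i+1)
    omega
  refine ⟨⟨?_, ?_, ?_⟩, ?_⟩
  · have h1 := he 0 (by omega)
    have h2 := Cz_zero f
    have e : 2*0 = 0 := rfl
    rw [e] at h1
    omega
  · have h1 := hstep (n-1) (by omega)
    have e : 2*(n-1)+2 = 2*n := by omega
    have e2 : 2*(n-1)+1 = 2*n-1 := by omega
    rw [e, e2] at h1
    have h2 := Fv_le_one w (2*n-1)
    omega
  · intro i hi
    have h1 := hstep i (by omega)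
    have h2 := he (i+1) (by omega)
    have e : 2*(i+1) = 2*i+2 := by omega
    rw [e] at h2
    have h3 := Fv_le_one w (2*i+1)
    have h4 := Fv_le_one w (2*i+2)
    omega
  · intro i hi
    have h1 := he i hi
    have h2 := ho i hi
    have h3 := Cz_succ f (2*i) (by omega)
    have h4 := Fv_le_one f (2*i)
    have h5 := Fv_le_one f (2*i+1)
    have h6 := Fv_le_one w (2*i)
    have h7 := Fv_le_one w (2*i+1)
    omega

lemma L0b (hn : 1 ≤ n) (hc : Cond0 w) (hp : Pat0 w f) :
    GoodF w f ∧ Cz f (2*n) % 2 = 0 := by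
  obtain ⟨hc0, hclast, hcalt⟩ := hc
  have hJ : ∀ i, i < n → Cz f (2*i) % 2 = Fv w (2*i) := by
    intro i
    induction i with
    | zero =>
      intro _
      have e : 2*0 = 0 := rfl
      rw [e, Cz_zero]
      omega
    | succ i ih =>
      intro hi
      have hii : i < n := by omega
      have h1 := ih hii
      have h2 := hp i hii
      have h3 := Cz_succ f (2*i) (by omega)
      have h4 := Cz_succ f (2*i+1) (by omega)
      rw [show 2*i+1+1 = 2*i+2 from rfl] at h4
      have h5 := hcalt i (by omega)
      have e : 2*(i+1) = 2*i+2 := by omega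
      rw [e]
      have b1 := Fv_le_one f (2*i)
      have b2 := Fv_le_one f (2*i+1)
      have b3 := Fv_le_one w (2*i)
      have b4 := Fv_le_one w (2*i+1)
      have b5 := Fv_le_one w (2*i+2)
      omega
  have hK : Cz f (2*n) % 2 = 0 := by
    have h1 := hJ (n-1) (by omega)
    have h2 := hp (n-1) (by omega)
    have h3 := Cz_succ f (2*(n-1)) (by omega)
    have h4 := Cz_succ f (2*(n-1)+1) (by omega)
    have e : 2*(n-1)+1+1 = 2*n := by omega
    have e2 : 2*(n-1)+1 = 2*n-1 := by omega
    rw [e] at h4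
    rw [e2] at h2 h3 h4
    have b1 := Fv_le_one f (2*(n-1))
    have b2 := Fv_le_one f (2*n-1)
    have b3 := Fv_le_one w (2*(n-1))
    have b4 := Fv_le_one w (2*n-1)
    omega
  refine ⟨?_, hK⟩
  intro m hm
  obtain ⟨i, hi⟩ : ∃ i, (m = 2*i ∧ i < n) ∨ (m = 2*i+1 ∧ i < n) := ⟨m/2, by omega⟩
  rcases hi with ⟨rfl, hi⟩ | ⟨rfl, hi⟩
  · rw [if_pos (by omega)]
    have h1 := hJ i hi
    have b1 := Fv_le_one w (2*i)
    omega
  · rw [if_neg (by omega)]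
    have h1 := hJ i hi
    have h2 := hp i hi
    have h3 := Cz_succ f (2*i) (by omega)
    have b1 := Fv_le_one f (2*i)
    have b2 := Fv_le_one f (2*i+1)
    have b3 := Fv_le_one w (2*i)
    have b4 := Fv_le_one w (2*i+1)
    omega

lemma L1a (hn : 1 ≤ n) (hg : GoodF w f) (hK : Cz f (2*n) % 2 = 1) :
    Cond1 w ∧ Pat1 w f := by
  have he : ∀ i, i < n → Fv w (2*i) = (Cz f (2*i) + Fv f (2*i)) % 2 := by
    intro i hi
    have h1 := hg (2*i) (by omega)
    rw [if_neg (by omega)] at h1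
    exact h1
  have ho : ∀ i, i < n → Fv w (2*i+1) = Cz f (2*i+1) % 2 := by
    intro i hi
    have h1 := hg (2*i+1) (by omega)
    rw [if_pos (by omega)] at h1
    simpa using h1
  constructor
  · intro i hi
    have h1 := he i hi
    have h2 := ho i hi
    have h3 := Cz_succ f (2*i) (by omega)
    have b1 := Fv_le_one f (2*i)
    have b3 := Fv_le_one w (2*i)
    have b4 := Fv_le_one w (2*i+1)
    omega
  · refine ⟨?_, ?_, ?_⟩
    · have h1 := he 0 (by omega)
      have e : 2*0 = 0 := rfl
      rw [e, Cz_zero] at h1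
      have b1 := Fv_le_one f 0
      have b2 := Fv_le_one w 0
      omega
    · have h1 := ho (n-1) (by omega)
      have h2 := Cz_succ f (2*(n-1)+1) (by omega)
      have e : 2*(n-1)+1+1 = 2*n := by omega
      have e2 : 2*(n-1)+1 = 2*n-1 := by omega
      rw [e] at h2
      rw [e2] at h1 h2
      have b1 := Fv_le_one f (2*n-1)
      have b2 := Fv_le_one w (2*n-1)
      omega
    · intro i hi
      have h1 := he (i+1) (by omega)
      have e : 2*(i+1) = 2*i+2 := by omega
      rw [e] at h1
      have h2 := ho i (by omega)
      have h3 := Cz_succ f (2*i+1) (by omega)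
      rw [show 2*i+1+1 = 2*i+2 from rfl] at h3
      have b1 := Fv_le_one f (2*i+1)
      have b2 := Fv_le_one f (2*i+2)
      have b3 := Fv_le_one w (2*i+1)
      have b4 := Fv_le_one w (2*i+2)
      omega

lemma L1b (hn : 1 ≤ n) (hc : Cond1 w) (hp : Pat1 w f) :
    GoodF w f ∧ Cz f (2*n) % 2 = 1 := by
  obtain ⟨hp0, hplast, hprel⟩ := hp
  have e0 : (2*0 : ℕ) = 0 := rfl
  have hJ : ∀ i, i < n → Cz f (2*i) % 2 = (Fv w (2*i) + Fv f (2*i)) % 2 := by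
    intro i
    induction i with
    | zero =>
      intro _
      rw [e0, Cz_zero]
      have b1 := Fv_le_one w 0
      omega
    | succ i ih =>
      intro hi
      have hii : i < n := by omega
      have h1 := ih hii
      have h2 := hprel i (by omega)
      have h3 := Cz_succ f (2*i) (by omega)
      have h4 := Cz_succ f (2*i+1) (by omega)
      rw [show 2*i+1+1 = 2*i+2 from rfl] at h4
      have h5 := hc i hii
      have e : 2*(i+1) = 2*i+2 := by omega
      rw [e]
      have b1 := Fv_le_one f (2*i)
      have b2 := Fv_le_one f (2*i+1)
      have b3 := Fv_le_one w (2*i)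
      have b4 := Fv_le_one w (2*i+1)
      omega
  have hK : Cz f (2*n) % 2 = 1 := by
    have h1 := hJ (n-1) (by omega)
    have h2 := hc (n-1) (by omega)
    have h3 := Cz_succ f (2*(n-1)) (by omega)
    have h4 := Cz_succ f (2*(n-1)+1) (by omega)
    have e : 2*(n-1)+1+1 = 2*n := by omega
    have e2 : 2*(n-1)+1 = 2*n-1 := by omega
    rw [e] at h4
    rw [e2] at h2 h3 h4
    have b1 := Fv_le_one f (2*(n-1))
    have b2 := Fv_le_one f (2*n-1)
    have b3 := Fv_le_one w (2*(n-1))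
    have b4 := Fv_le_one w (2*n-1)
    omega
  refine ⟨?_, hK⟩
  intro m hm
  obtain ⟨i, hi⟩ : ∃ i, (m = 2*i ∧ i < n) ∨ (m = 2*i+1 ∧ i < n) := ⟨m/2, by omega⟩
  rcases hi with ⟨rfl, hi⟩ | ⟨rfl, hi⟩
  · rw [if_neg (by omega)]
    have h1 := hJ i hi
    have b1 := Fv_le_one w (2*i)
    have b2 := Fv_le_one f (2*i)
    omega
  · rw [if_pos (by omega)]
    have h1 := hJ i hi
    have h2 := hc i hi
    have h3 := Cz_succ f (2*i) (by omega)
    have b1 := Fv_le_one f (2*i)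
    have b3 := Fv_le_one w (2*i)
    have b4 := Fv_le_one w (2*i+1)
    omega

end ClassLemmas

section Counting

variable {n : ℕ}

/-- builder for the even-cut class -/
def build0 (w : Fin (2*n) → Fin 2) (g : Fin n → Fin 2) : Fin (2*n) → Fin 2 := fun p =>
  if hp : (p : ℕ) % 2 = 0 then g ⟨(p : ℕ)/2, by have := p.2; omega⟩
  else ⟨((g ⟨(p : ℕ)/2, by have := p.2; omega⟩).val + 1 + Fv w (2*((p : ℕ)/2))
      + Fv w (2*((p : ℕ)/2)+1)) % 2, by omega⟩

lemma build0_even (w : Fin (2*n) → Fin 2) (g : Fin n → Fin 2) (i : ℕ) (hi : i < n) :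
    build0 w g ⟨2*i, by omega⟩ = g ⟨i, hi⟩ := by
  simp only [build0]
  rw [dif_pos (by omega)]
  congr 1
  apply Fin.ext
  simp only []
  omega

lemma build0_odd (w : Fin (2*n) → Fin 2) (g : Fin n → Fin 2) (i : ℕ) (hi : i < n) :
    (build0 w g ⟨2*i+1, by omega⟩).val
      = ((g ⟨i, hi⟩).val + 1 + Fv w (2*i) + Fv w (2*i+1)) % 2 := by
  simp only [build0]
  rw [dif_neg (by omega)]
  have e : (2*i+1)/2 = i := by omega
  simp only [e]

lemma card_pat0 (hn : 1 ≤ n) (w : Fin (2*n) → Fin 2) [DecidablePred (Pat0 w)] :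
    (Finset.univ.filter fun f : Fin (2*n) → Fin 2 => Pat0 w f).card = 2^n := by
  have key : (Finset.univ.filter fun f : Fin (2*n) → Fin 2 => Pat0 w f).card
      = (Finset.univ : Finset (Fin n → Fin 2)).card := by
    refine Finset.card_bij' (fun f _ => (fun j : Fin n => f ⟨2*(j : ℕ), by have := j.2; omega⟩))
      (fun g _ => build0 w g) ?hi ?hj ?li ?ri
    case hi => intro f _; exact Finset.mem_univ _
    case hj =>
      intro g _
      simp only [Finset.mem_filter, Finset.mem_univ, true_and]
      intro i hi
      have h1 : Fv (build0 w g) (2*i+1) = (build0 w g ⟨2*i+1, by omega⟩).val := by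
        simp [Fv, show 2*i+1 < 2*n by omega]
      have h2 : Fv (build0 w g) (2*i) = (build0 w g ⟨2*i, by omega⟩).val := by
        simp [Fv, show 2*i < 2*n by omega]
      rw [h1, h2, build0_odd w g i hi, build0_even w g i hi]
    case li =>
      intro f hf
      simp only [Finset.mem_filter, Finset.mem_univ, true_and] at hf
      funext p
      obtain ⟨i, hi⟩ : ∃ i, ((p : ℕ) = 2*i ∧ i < n) ∨ ((p : ℕ) = 2*i+1 ∧ i < n) :=
        ⟨(p : ℕ)/2, by have := p.2; omega⟩
      rcases hi with ⟨hp, hi⟩ | ⟨hp, hi⟩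
      · have hpe : p = ⟨2*i, by omega⟩ := Fin.ext hp
        rw [hpe]
        beta_reduce
        rw [build0_even w _ i hi]
      · have hpe : p = ⟨2*i+1, by omega⟩ := Fin.ext hp
        rw [hpe]
        beta_reduce
        apply Fin.ext
        rw [build0_odd w _ i hi]
        have h3 := hf i hi
        have h1 : Fv f (2*i+1) = (f ⟨2*i+1, by omega⟩).val := by
          simp [Fv, show 2*i+1 < 2*n by omega]
        have h2 : Fv f (2*i) = (f ⟨2*i, by omega⟩).val := by
          simp [Fv, show 2*i < 2*n by omega]
        rw [h1, h2] at h3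
        exact h3.symm
    case ri =>
      intro g _
      funext j
      have := build0_even w g (j : ℕ) j.2
      simpa using this
  rw [key]
  simp [Fintype.card_fun]

/-- builder for the odd-cut class -/
def build1 (w : Fin (2*n) → Fin 2) (g : Fin (n-1) → Fin 2) : Fin (2*n) → Fin 2 := fun p =>
  if hodd : (p : ℕ) % 2 = 1 then
    (if hlast : (p : ℕ) = 2*n-1 then w p
     else g ⟨(p : ℕ)/2, by have := p.2; omega⟩)
  else
    (if hz : (p : ℕ) = 0 then w p
     else ⟨((g ⟨(p : ℕ)/2 - 1, by have := p.2; omega⟩).val + 1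
          + Fv w ((p : ℕ) - 1) + Fv w (p : ℕ)) % 2, by omega⟩)

lemma build1_zero (w : Fin (2*n) → Fin 2) (g : Fin (n-1) → Fin 2) (h0 : 0 < 2*n) :
    build1 w g ⟨0, h0⟩ = w ⟨0, h0⟩ := by
  simp [build1]

lemma build1_last (w : Fin (2*n) → Fin 2) (g : Fin (n-1) → Fin 2) (hn : 1 ≤ n) :
    build1 w g ⟨2*n-1, by omega⟩ = w ⟨2*n-1, by omega⟩ := by
  have h1 : (2*n-1) % 2 = 1 := by omega
  simp [build1, h1]

lemma build1_oddfree (w : Fin (2*n) → Fin 2) (g : Fin (n-1) → Fin 2) (i : ℕ) (hi : i+1 < n) :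
    build1 w g ⟨2*i+1, by omega⟩ = g ⟨i, by omega⟩ := by
  have h1 : (2*i+1) % 2 = 1 := by omega
  have h2 : ¬ (2*i+1 = 2*n-1) := by omega
  have h3 : (2*i+1)/2 = i := by omega
  simp [build1, h1, h2, h3]

lemma build1_even (w : Fin (2*n) → Fin 2) (g : Fin (n-1) → Fin 2) (i : ℕ) (hi : i+1 < n) :
    (build1 w g ⟨2*i+2, by omega⟩).val
      = ((g ⟨i, by omega⟩).val + 1 + Fv w (2*i+1) + Fv w (2*i+2)) % 2 := by
  have h1 : ¬ ((2*i+2) % 2 = 1) := by omega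
  have h2 : ¬ (2*i+2 = 0) := by omega
  have e1 : (2*i+2)/2 - 1 = i := by omega
  have e2 : 2*i+2-1 = 2*i+1 := by omega
  simp [build1, h1, h2, e1, e2]

lemma card_pat1 (hn : 1 ≤ n) (w : Fin (2*n) → Fin 2) [DecidablePred (Pat1 w)] :
    (Finset.univ.filter fun f : Fin (2*n) → Fin 2 => Pat1 w f).card = 2^(n-1) := by
  have key : (Finset.univ.filter fun f : Fin (2*n) → Fin 2 => Pat1 w f).card
      = (Finset.univ : Finset (Fin (n-1) → Fin 2)).card := by
    refine Finset.card_bij' (fun f _ => (fun j : Fin (n-1) => f ⟨2*(j : ℕ)+1, by have := j.2; omega⟩))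
      (fun g _ => build1 w g) ?hi ?hj ?li ?ri
    case hi => intro f _; exact Finset.mem_univ _
    case hj =>
      intro g _
      simp only [Finset.mem_filter, Finset.mem_univ, true_and]
      have hFv : ∀ m (h : m < 2*n), Fv (build1 w g) m = (build1 w g ⟨m, h⟩).val := by
        intro m h; simp [Fv, h]
      refine ⟨?_, ?_, ?_⟩
      · rw [hFv 0 (by omega), build1_zero w g (by omega)]
        simp [Fv, show 0 < 2*n by omega]
      · rw [hFv (2*n-1) (by omega), build1_last w g hn]
        simp [Fv, show 2*n-1 < 2*n by omega]
      · intro i hi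
        rw [hFv (2*i+2) (by omega), hFv (2*i+1) (by omega), build1_even w g i hi,
          build1_oddfree w g i hi]
    case li =>
      intro f hf
      simp only [Finset.mem_filter, Finset.mem_univ, true_and] at hf
      obtain ⟨hf0, hflast, hfrel⟩ := hf
      funext p
      have hp2 := p.2
      by_cases hz : (p : ℕ) = 0
      · have hpe : p = ⟨0, by omega⟩ := Fin.ext hz
        rw [hpe]
        beta_reduce
        rw [build1_zero w _ (by omega)]
        apply Fin.ext
        have e1 : Fv f 0 = (f ⟨0, by omega⟩).val := by simp [Fv, show 0 < 2*n by omega]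
        have e2 : Fv w 0 = (w ⟨0, by omega⟩).val := by simp [Fv, show 0 < 2*n by omega]
        rw [e1, e2] at hf0
        exact hf0.symm
      · by_cases hodd : (p : ℕ) % 2 = 1
        · by_cases hlast : (p : ℕ) = 2*n-1
          · have hpe : p = ⟨2*n-1, by omega⟩ := Fin.ext hlast
            rw [hpe]
            beta_reduce
            rw [build1_last w _ hn]
            apply Fin.ext
            have e1 : Fv f (2*n-1) = (f ⟨2*n-1, by omega⟩).val := by
              simp [Fv, show 2*n-1 < 2*n by omega]
            have e2 : Fv w (2*n-1) = (w ⟨2*n-1, by omega⟩).val := by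
              simp [Fv, show 2*n-1 < 2*n by omega]
            rw [e1, e2] at hflast
            exact hflast.symm
          · obtain ⟨i, hpi, hi⟩ : ∃ i, (p : ℕ) = 2*i+1 ∧ i+1 < n := ⟨(p : ℕ)/2, by omega⟩
            have hpe : p = ⟨2*i+1, by omega⟩ := Fin.ext hpi
            rw [hpe]
            beta_reduce
            rw [build1_oddfree w _ i hi]
        · obtain ⟨i, hpi, hi⟩ : ∃ i, (p : ℕ) = 2*i+2 ∧ i+1 < n := ⟨(p : ℕ)/2 - 1, by omega⟩
          have hpe : p = ⟨2*i+2, by omega⟩ := Fin.ext hpi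
          rw [hpe]
          beta_reduce
          apply Fin.ext
          rw [build1_even w _ i hi]
          have h3 := hfrel i hi
          have e1 : Fv f (2*i+2) = (f ⟨2*i+2, by omega⟩).val := by
            simp [Fv, show 2*i+2 < 2*n by omega]
          have e2 : Fv f (2*i+1) = (f ⟨2*i+1, by omega⟩).val := by
            simp [Fv, show 2*i+1 < 2*n by omega]
          rw [e1, e2] at h3
          exact h3.symm
    case ri =>
      intro g _
      funext j
      have hjj := j.2
      have := build1_oddfree w g (j : ℕ) (by omega)
      simpa using this
  rw [key]
  simp [Fintype.card_fun]

open Classical in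
lemma count_main (hn : 1 ≤ n) (w : Fin (2*n) → Fin 2) :
    (Finset.univ.filter fun f : Fin (2*n) → Fin 2 => GoodF w f).card =
      (if Cond0 w then 2^n else 0) + (if Cond1 w then 2^(n-1) else 0) := by
  classical
  have hsplit := Finset.card_filter_add_card_filter_not
    (s := Finset.univ.filter fun f : Fin (2*n) → Fin 2 => GoodF w f)
    (p := fun f => Cz f (2*n) % 2 = 0)
  rw [Finset.filter_filter, Finset.filter_filter] at hsplit
  have hA : (Finset.univ.filter fun f : Fin (2*n) → Fin 2 =>
      GoodF w f ∧ Cz f (2*n) % 2 = 0).card = if Cond0 w then 2^n else 0 := by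
    by_cases hC : Cond0 w
    · rw [if_pos hC]
      rw [show (Finset.univ.filter fun f : Fin (2*n) → Fin 2 =>
          GoodF w f ∧ Cz f (2*n) % 2 = 0)
          = (Finset.univ.filter fun f : Fin (2*n) → Fin 2 => Pat0 w f) from ?_]
      · exact card_pat0 hn w
      · ext f
        simp only [Finset.mem_filter, Finset.mem_univ, true_and]
        constructor
        · rintro ⟨hg, hk⟩
          exact (L0a w f hn hg hk).2
        · intro hp
          exact L0b w f hn hC hp
    · rw [if_neg hC]
      rw [Finset.card_eq_zero]
      rw [Finset.filter_eq_empty_iff]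
      rintro f - ⟨hg, hk⟩
      exact hC (L0a w f hn hg hk).1
  have hB : (Finset.univ.filter fun f : Fin (2*n) → Fin 2 =>
      GoodF w f ∧ ¬ Cz f (2*n) % 2 = 0).card = if Cond1 w then 2^(n-1) else 0 := by
    have hBeq : (Finset.univ.filter fun f : Fin (2*n) → Fin 2 =>
        GoodF w f ∧ ¬ Cz f (2*n) % 2 = 0)
        = (Finset.univ.filter fun f : Fin (2*n) → Fin 2 =>
        GoodF w f ∧ Cz f (2*n) % 2 = 1) := by
      apply Finset.filter_congr
      intro f _
      constructor
      · rintro ⟨hg, hk⟩; exact ⟨hg, by omega⟩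
      · rintro ⟨hg, hk⟩; exact ⟨hg, by omega⟩
    rw [hBeq]
    by_cases hC : Cond1 w
    · rw [if_pos hC]
      rw [show (Finset.univ.filter fun f : Fin (2*n) → Fin 2 =>
          GoodF w f ∧ Cz f (2*n) % 2 = 1)
          = (Finset.univ.filter fun f : Fin (2*n) → Fin 2 => Pat1 w f) from ?_]
      · exact card_pat1 hn w
      · ext f
        simp only [Finset.mem_filter, Finset.mem_univ, true_and]
        constructor
        · rintro ⟨hg, hk⟩
          exact (L1a w f hn hg hk).2
        · intro hp
          exact L1b w f hn hC hp
    · rw [if_neg hC]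
      rw [Finset.card_eq_zero]
      rw [Finset.filter_eq_empty_iff]
      rintro f - ⟨hg, hk⟩
      exact hC (L1a w f hn hg hk).1
  omega

end Counting

end TwoShuffleAux

open TwoShuffleAux

/-- After a single GSR `2`-shuffle of the alternating deck `v = 1 2 1 2 ⋯ 1 2` of `2n`
cards: (a) the chance of returning to `v` is `(2^{n-1} + 2^n)/2^{2n}`; and (b) for every
deck `w` with `n` cards of each label, `2^{2n}·Q_2(w) ∈ {0, 2^{n-1}, 2^n, 2^{n-1}+2^n}`. -/
theorem two_shuffle_alternating_deck (n : ℕ) (hn : 1 ≤ n)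
    (σ : (Fin (2 * n) → Fin 2) → Equiv.Perm (Fin (2 * n)))
    (hσ : ∀ f, IsStableSort f (σ f))
    (v : Fin (2 * n) → Fin 2) (hv : ∀ p : Fin (2 * n), v p = if (p : ℕ) % 2 = 0 then 0 else 1) :
    (((Finset.univ.filter fun f : Fin (2 * n) → Fin 2 => v ∘ σ f = v).card : ℚ)
        / 2 ^ (2 * n) = ((2 ^ (n - 1) + 2 ^ n : ℚ)) / 2 ^ (2 * n))
    ∧ (∀ w : Fin (2 * n) → Fin 2,
        (Finset.univ.filter fun p => w p = 0).card = n →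
        (Finset.univ.filter fun p => w p = 1).card = n →
        (2 : ℚ) ^ (2 * n) *
            (((Finset.univ.filter fun f : Fin (2 * n) → Fin 2 => w ∘ σ f = v).card : ℚ)
              / 2 ^ (2 * n))
          ∈ ({0, 2 ^ (n - 1), 2 ^ n, 2 ^ (n - 1) + 2 ^ n} : Set ℚ)) := by
  classical
  have hbridge : ∀ w f : Fin (2*n) → Fin 2, (w ∘ σ f = v) ↔ GoodF w f := by
    intro w f
    rw [← goodF_iff]
    have hinv : ∀ p, ((σ f).symm p : ℕ) = rank f p :=
      sigma_symm_eq_rank f (σ f) (hσ f)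
    constructor
    · intro h p
      have h2 : w p = v ((σ f).symm p) := by
        conv_lhs => rw [show p = σ f ((σ f).symm p) from (Equiv.apply_symm_apply (σ f) p).symm]
        exact congrFun h ((σ f).symm p)
      rw [hv ((σ f).symm p), hinv p] at h2
      rcases Nat.mod_two_eq_zero_or_one (rank f p) with h3 | h3
      · rw [h3] at h2
        simp only [if_pos rfl] at h2
        rw [h3, h2]
        rfl
      · rw [h3] at h2
        simp only [one_ne_zero, if_false] at h2
        rw [h3, h2]
        rfl
    · intro h
      funext i
      simp only [Function.comp_apply]
      have h2 := h (σ f i)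
      have h3 := hinv (σ f i)
      rw [Equiv.symm_apply_apply] at h3
      rw [← h3] at h2
      rw [hv i]
      rcases Nat.mod_two_eq_zero_or_one (i : ℕ) with h4 | h4
      · rw [if_pos h4]
        rw [h4] at h2
        exact Fin.ext (by rw [h2]; rfl)
      · rw [if_neg (by omega)]
        rw [h4] at h2
        exact Fin.ext (by rw [h2]; rfl)
  have hcount : ∀ w : Fin (2*n) → Fin 2,
      (Finset.univ.filter fun f : Fin (2*n) → Fin 2 => w ∘ σ f = v).card
        = (if Cond0 w then 2^n else 0) + (if Cond1 w then 2^(n-1) else 0) := by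
    intro w
    rw [Finset.filter_congr (fun f _ => hbridge w f)]
    exact count_main hn w
  have hFvv : ∀ m, m < 2*n → Fv v m = m % 2 := by
    intro m hm
    have e1 : Fv v m = (v ⟨m, hm⟩).val := by simp [Fv, hm]
    rw [e1, hv ⟨m, hm⟩]
    rcases Nat.mod_two_eq_zero_or_one m with h | h
    · rw [if_pos (show ((⟨m, hm⟩ : Fin (2*n)) : ℕ) % 2 = 0 from h)]
      simp [h]
    · rw [if_neg (show ¬ ((⟨m, hm⟩ : Fin (2*n)) : ℕ) % 2 = 0 from by simp only [Fin.val_mk]; omega)]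
      simp [h]
  have hC0v : Cond0 v := by
    refine ⟨?_, ?_, ?_⟩
    · rw [hFvv 0 (by omega)]
    · rw [hFvv (2*n-1) (by omega)]
      omega
    · intro i hi
      rw [hFvv (2*i+1) (by omega), hFvv (2*i+2) (by omega)]
      omega
  have hC1v : Cond1 v := by
    intro i hi
    rw [hFvv (2*i) (by omega), hFvv (2*i+1) (by omega)]
    omega
  constructor
  · rw [hcount v, if_pos hC0v, if_pos hC1v]
    push_cast
    ring
  · intro w _ _
    rw [hcount w]
    have h2 : ((2:ℚ)^(2*n)) ≠ 0 := by positivity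
    rw [mul_comm ((2:ℚ)^(2*n)), div_mul_cancel₀ _ h2]
    simp only [Set.mem_insert_iff, Set.mem_singleton_iff]
    by_cases hC0 : Cond0 w <;> by_cases hC1 : Cond1 w
    · rw [if_pos hC0, if_pos hC1]
      right; right; right
      push_cast; ring
    · rw [if_pos hC0, if_neg hC1]
      right; right; left
      push_cast; ring
    · rw [if_neg hC0, if_pos hC1]
      right; left
      push_cast; ring
    · rw [if_neg hC0, if_neg hC1]
      left
      push_cast; ring
end

section
/- For each n ≥ 1 let v_n : {1,…,2n} → {1,2} be the deck with n cards labelled 1 on top of n cards labelled 2, and let TV(n) = (1/2) ∑_w |Q_2^{v_n}(w) − 1/C(2n,n)|, the total variation distance to uniform after a single GSR 2-shuffle, where the sum is over all decks w with exactly n entries equal to 1 and n equal to 2. Then TV(n) → 1 as n → ∞. -/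
open Finset

lemma card_filter_val (N : ℕ) (P : ℕ → Prop) [DecidablePred P] :
    (univ.filter fun p : Fin N => P p.val).card = ((range N).filter P).card := by
  refine Finset.card_bij' (fun p _ => p.val) (fun a ha => ⟨a, (Finset.mem_range.mp (Finset.mem_filter.mp ha).1)⟩) ?_ ?_ ?_ ?_
  · intro p hp
    simp only [Finset.mem_filter, Finset.mem_univ, true_and] at hp
    simp only [Finset.mem_filter, Finset.mem_range]
    exact ⟨p.isLt, hp⟩
  · intro a ha
    simp only [Finset.mem_filter, Finset.mem_range] at ha
    simp only [Finset.mem_filter, Finset.mem_univ, true_and]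
    exact ha.2
  · intro p hp; rfl
  · intro a ha; rfl

lemma card_filter_lt (N a : ℕ) (h : a ≤ N) :
    (univ.filter fun p : Fin N => (p : ℕ) < a).card = a := by
  rw [card_filter_val N (fun x => x < a)]
  have : (range N).filter (fun x => x < a) = range a := by
    ext x; simp [Finset.mem_range]; omega
  rw [this, Finset.card_range]

lemma card_filter_ge (N a : ℕ) :
    (univ.filter fun p : Fin N => a ≤ (p : ℕ)).card = N - a := by
  rw [card_filter_val N (fun x => a ≤ x)]
  have : (range N).filter (fun x => a ≤ x) = Finset.Ico a N := by
    ext x; simp [Finset.mem_range, Finset.mem_Ico]; omega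
  rw [this, Nat.card_Ico]

lemma card_filter_le (N b : ℕ) (h : b < N) :
    (univ.filter fun p : Fin N => (p : ℕ) ≤ b).card = b + 1 := by
  rw [card_filter_val N (fun x => x ≤ b)]
  have : (range N).filter (fun x => x ≤ b) = range (b+1) := by
    ext x; simp [Finset.mem_range]; omega
  rw [this, Finset.card_range]

lemma card_filter_icc (N a b : ℕ) (h : b < N) :
    (univ.filter fun p : Fin N => a ≤ (p : ℕ) ∧ (p : ℕ) ≤ b).card = b + 1 - a := by
  rw [card_filter_val N (fun x => a ≤ x ∧ x ≤ b)]
  have : (range N).filter (fun x => a ≤ x ∧ x ≤ b) = Finset.Icc a b := by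
    ext x; simp [Finset.mem_range, Finset.mem_Icc]; omega
  rw [this, Nat.card_Icc]

lemma card_filter_ico (N a b : ℕ) (h : b ≤ N) :
    (univ.filter fun p : Fin N => a ≤ (p : ℕ) ∧ (p : ℕ) < b).card = b - a := by
  rw [card_filter_val N (fun x => a ≤ x ∧ x < b)]
  have : (range N).filter (fun x => a ≤ x ∧ x < b) = Finset.Ico a b := by
    ext x; simp [Finset.mem_range, Finset.mem_Ico]; omega
  rw [this, Nat.card_Ico]

lemma cb_sq (n : ℕ) : (Nat.centralBinom n)^2 * (2*n+1) ≤ 16^n := by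
  induction n with
  | zero => simp [Nat.centralBinom]
  | succ n ih =>
    have h := Nat.succ_mul_centralBinom_succ n
    have key : (n+1)^2 * ((Nat.centralBinom (n+1))^2 * (2*(n+1)+1)) ≤ (n+1)^2 * 16^(n+1) := by
      calc (n+1)^2 * ((Nat.centralBinom (n+1))^2 * (2*(n+1)+1))
          = ((n+1) * Nat.centralBinom (n+1))^2 * (2*n+3) := by ring
        _ = (2*(2*n+1))^2 * (Nat.centralBinom n)^2 * (2*n+3) := by rw [h]; ring
        _ = (4*(2*n+1)*(2*n+3)) * ((Nat.centralBinom n)^2 * (2*n+1)) := by ring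
        _ ≤ (4*(2*n+1)*(2*n+3)) * 16^n := Nat.mul_le_mul_left _ ih
        _ ≤ (16*(n+1)^2) * 16^n := Nat.mul_le_mul_right _ (by nlinarith)
        _ = (n+1)^2 * 16^(n+1) := by ring
    exact Nat.le_of_mul_le_mul_left key (by positivity)

lemma choose_ratio (n : ℕ) : ∀ m ≤ n, 3^m * (2*n - m).choose n ≤ 2^m * (2*n).choose n := by
  intro m
  induction m with
  | zero => simp
  | succ m ih =>
    intro hm
    have ihm := ih (by omega)
    have hN : 1 ≤ 2*n - m := by omega
    set N := 2*n - m with hNdef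
    have key : N * Nat.choose (N-1) n = (N - n) * Nat.choose N n := by
      have h1 : N = (N-1) + 1 := by omega
      have h2 := Nat.add_one_mul_choose_eq (N-1) n
      rw [← h1] at h2
      calc N * Nat.choose (N-1) n = Nat.choose N (n+1) * (n+1) := h2
        _ = Nat.choose N n * (N - n) := Nat.choose_succ_right_eq N n
        _ = (N - n) * Nat.choose N n := Nat.mul_comm _ _
    have hsub : 2*n - (m+1) = N - 1 := by omega
    have hNn : N - n = n - m := by omega
    have main : 3^(m+1) * Nat.choose (N-1) n * N ≤ 2^(m+1) * Nat.choose (2*n) n * N := by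
      have e1 : 3^(m+1) * Nat.choose (N-1) n * N = 3^m * (3 * (N * Nat.choose (N-1) n)) := by ring
      rw [e1, key, hNn]
      have e2 : 3 * ((n-m) * Nat.choose N n) ≤ 2*N * Nat.choose N n := by
        have h3 : 3 * (n - m) ≤ 2 * N := by omega
        calc 3 * ((n-m) * Nat.choose N n) = (3*(n-m)) * Nat.choose N n := by ring
        _ ≤ (2*N) * Nat.choose N n := Nat.mul_le_mul_right _ h3
      calc 3^m * (3 * ((n-m) * Nat.choose N n)) ≤ 3^m * (2*N * Nat.choose N n) :=
            Nat.mul_le_mul_left _ e2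
        _ = 2*N * (3^m * Nat.choose N n) := by ring
        _ ≤ 2*N * (2^m * Nat.choose (2*n) n) := Nat.mul_le_mul_left _ ihm
        _ = 2^(m+1) * Nat.choose (2*n) n * N := by ring
    rw [hsub]
    exact Nat.le_of_mul_le_mul_right main (by omega)

section sorting
variable {N : ℕ} {f : Fin N → Fin 2} {e : Equiv.Perm (Fin N)} {k : ℕ}

lemma fin_two_cases (a : Fin 2) : a = 0 ∨ a = 1 := by omega

lemma sorted_zero_iff (hs : IsStableSort f e)
    (hk : (univ.filter fun p : Fin N => f p = 0).card = k) (i : Fin N) :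
    f (e i) = 0 ↔ (i : ℕ) < k := by
  have hcard : (univ.filter fun i : Fin N => f (e i) = 0).card = k := by
    rw [← hk]
    refine Finset.card_bij' (fun i _ => e i) (fun p _ => e.symm p) ?_ ?_ ?_ ?_
    · intro i hi; simp only [Finset.mem_filter, Finset.mem_univ, true_and] at hi ⊢; exact hi
    · intro p hp; simp only [Finset.mem_filter, Finset.mem_univ, true_and] at hp ⊢
      simpa using hp
    · intro i _; simp
    · intro p _; simp
  have hdc : ∀ i j : Fin N, i ≤ j → f (e j) = 0 → f (e i) = 0 := by
    intro i j hij hj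
    have := hs.1 hij
    simp only [Function.comp_apply] at this
    rw [hj] at this
    exact Fin.le_zero_iff.mp this
  constructor
  · intro h0
    by_contra hlt
    push_neg at hlt
    have hsub : (univ.filter fun j : Fin N => (j:ℕ) ≤ (i:ℕ)) ⊆
        (univ.filter fun j : Fin N => f (e j) = 0) := by
      intro j hj
      simp only [Finset.mem_filter, Finset.mem_univ, true_and] at hj ⊢
      exact hdc j i (Fin.le_def.mpr hj) h0
    have hc := Finset.card_le_card hsub
    rw [card_filter_le N i i.isLt, hcard] at hc
    omega
  · intro hlt
    by_contra h0
    have hsub : (univ.filter fun j : Fin N => f (e j) = 0) ⊆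
        (univ.filter fun j : Fin N => (j:ℕ) < (i:ℕ)) := by
      intro j hj
      simp only [Finset.mem_filter, Finset.mem_univ, true_and] at hj ⊢
      by_contra hge
      push_neg at hge
      exact h0 (hdc i j (Fin.le_def.mpr hge) hj)
    have hc := Finset.card_le_card hsub
    rw [card_filter_lt N i (le_of_lt i.isLt), hcard] at hc
    omega

lemma sorted_one_iff (hs : IsStableSort f e)
    (hk : (univ.filter fun p : Fin N => f p = 0).card = k) (i : Fin N) :
    f (e i) = 1 ↔ k ≤ (i : ℕ) := by
  have h := sorted_zero_iff hs hk i
  rcases fin_two_cases (f (e i)) with h0 | h1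
  · simp only [h0]
    constructor
    · intro h01; exact absurd h01.symm one_ne_zero
    · intro hge; have := h.mp h0; omega
  · simp only [h1]
    constructor
    · intro _
      by_contra hlt
      push_neg at hlt
      have := h.mpr hlt; rw [h1] at this; exact one_ne_zero this
    · intro _; trivial

end sorting

section claims
variable {N n : ℕ} {f : Fin N → Fin 2} {e : Equiv.Perm (Fin N)} {k : ℕ}

lemma k_le_N (hk : (univ.filter fun p : Fin N => f p = 0).card = k) : k ≤ N := by
  rw [← hk]
  calc (univ.filter fun p : Fin N => f p = 0).card ≤ (univ : Finset (Fin N)).card :=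
        Finset.card_filter_le _ _
    _ = N := by simp

lemma claim_low (hs : IsStableSort f e)
    (hk : (univ.filter fun p : Fin N => f p = 0).card = k)
    (hkn : k ≤ n) (p : Fin N) (hp : (p : ℕ) + k < n) :
    ((e.symm p : Fin N) : ℕ) < n := by
  by_contra hge
  push_neg at hge
  set i : Fin N := e.symm p with hidef
  have hep : e i = p := e.apply_symm_apply p
  have hki : k ≤ (i : ℕ) := le_trans hkn hge
  have hfi : f (e i) = 1 := (sorted_one_iff hs hk i).mpr hki
  have hinj : (univ.filter fun j : Fin N => k ≤ (j:ℕ) ∧ (j:ℕ) ≤ (i:ℕ)).card ≤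
      (univ.filter fun q : Fin N => (q:ℕ) ≤ (p:ℕ)).card := by
    apply Finset.card_le_card_of_injOn e
    · intro j hj
      simp only [Finset.mem_coe, Finset.mem_filter, Finset.mem_univ, true_and] at hj ⊢
      rcases eq_or_lt_of_le hj.2 with heq | hlt
      · have : j = i := Fin.ext heq
        rw [this, hep]
      · have hji : j < i := Fin.lt_def.mpr hlt
        have hfj : f (e j) = 1 := (sorted_one_iff hs hk j).mpr hj.1
        have := hs.2 j i hji (by rw [hfj, hfi])
        rw [hep] at this
        exact le_of_lt (Fin.lt_def.mp this)
    · exact fun a _ b _ hab => e.injective hab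
  rw [card_filter_icc N k i i.isLt, card_filter_le N p p.isLt] at hinj
  omega

lemma claim_high (hs : IsStableSort f e)
    (hk : (univ.filter fun p : Fin N => f p = 0).card = k)
    (hN : N = 2 * n) (hkn : n ≤ k) (p : Fin N) (hp : 3 * n ≤ (p : ℕ) + k) :
    n ≤ ((e.symm p : Fin N) : ℕ) := by
  by_contra hlt
  push_neg at hlt
  set i : Fin N := e.symm p with hidef
  have hep : e i = p := e.apply_symm_apply p
  have hik : (i : ℕ) < k := lt_of_lt_of_le hlt hkn
  have hfi : f (e i) = 0 := (sorted_zero_iff hs hk i).mpr hik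
  have hinj : (univ.filter fun j : Fin N => (i:ℕ) ≤ (j:ℕ) ∧ (j:ℕ) < k).card ≤
      (univ.filter fun q : Fin N => (p:ℕ) ≤ (q:ℕ)).card := by
    apply Finset.card_le_card_of_injOn e
    · intro j hj
      simp only [Finset.mem_coe, Finset.mem_filter, Finset.mem_univ, true_and] at hj ⊢
      rcases eq_or_lt_of_le hj.1 with heq | hlt2
      · have : i = j := Fin.ext heq
        rw [← this, hep]
      · have hij : i < j := Fin.lt_def.mpr hlt2
        have hfj : f (e j) = 0 := (sorted_zero_iff hs hk j).mpr hj.2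
        have := hs.2 i j hij (by rw [hfj, hfi])
        rw [hep] at this
        exact le_of_lt (Fin.lt_def.mp this)
    · exact fun a _ b _ hab => e.injective hab
  rw [card_filter_ico N i k (k_le_N hk), card_filter_ge N p] at hinj
  omega

end claims

lemma sum_fiber_card {α β : Type*} [Fintype α] [DecidableEq β] [DecidableEq α]
    (Φ : α → β) (T : Finset β) :
    ∑ w ∈ T, (univ.filter fun a => Φ a = w).card = (univ.filter fun a => Φ a ∈ T).card := by
  rw [Finset.card_eq_sum_card_fiberwise (f := Φ) (s := univ.filter fun a => Φ a ∈ T) (t := T)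
    (fun a ha => Finset.mem_coe.mpr (Finset.mem_filter.mp (Finset.mem_coe.mp ha)).2)]
  apply Finset.sum_congr rfl
  intro w hw
  congr 1
  ext a
  simp only [Finset.mem_filter, Finset.mem_univ, true_and]
  constructor
  · exact fun h => ⟨h ▸ hw, h⟩
  · exact fun h => h.2

lemma two_valued_inj {N : ℕ} (w w' : Fin N → Fin 2)
    (h : (univ.filter fun p => w p = 1) = (univ.filter fun p => w' p = 1)) : w = w' := by
  funext p
  have hmem : w p = 1 ↔ w' p = 1 := by
    constructor
    · intro h1
      have : p ∈ univ.filter fun p => w p = 1 := by simp [h1]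
      rw [h] at this
      exact (Finset.mem_filter.mp this).2
    · intro h1
      have : p ∈ univ.filter fun p => w' p = 1 := by simp [h1]
      rw [← h] at this
      exact (Finset.mem_filter.mp this).2
  rcases fin_two_cases (w p) with h0 | h1
  · rcases fin_two_cases (w' p) with h0' | h1'
    · rw [h0, h0']
    · rw [hmem.mpr h1'] at h0; exact absurd h0 one_ne_zero
  · rw [h1, hmem.mp h1]

lemma two_valued_inj' {N : ℕ} (w w' : Fin N → Fin 2)
    (h : (univ.filter fun p => w p = 0) = (univ.filter fun p => w' p = 0)) : w = w' := by
  funext p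
  have hmem : w p = 0 ↔ w' p = 0 := by
    constructor
    · intro h1
      have : p ∈ univ.filter fun p => w p = 0 := by simp [h1]
      rw [h] at this
      exact (Finset.mem_filter.mp this).2
    · intro h1
      have : p ∈ univ.filter fun p => w' p = 0 := by simp [h1]
      rw [← h] at this
      exact (Finset.mem_filter.mp this).2
  rcases fin_two_cases (w p) with h0 | h1
  · rw [h0, hmem.mp h0]
  · rcases fin_two_cases (w' p) with h0' | h1'
    · rw [hmem.mpr h0'] at h1; exact absurd h1 zero_ne_one
    · rw [h1, h1']

lemma count_k_le {N j : ℕ} :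
    ((univ : Finset (Fin N → Fin 2)).filter
      fun f => (univ.filter fun p => f p = 0).card = j).card ≤ N.choose j := by
  have := Finset.card_le_card_of_injOn (fun f : Fin N → Fin 2 => univ.filter fun p => f p = 0)
    (s := univ.filter fun f => (univ.filter fun p => f p = 0).card = j) (t := Finset.powersetCard j univ) ?_ ?_
  · calc _ ≤ (Finset.powersetCard j (univ : Finset (Fin N))).card := this
      _ = N.choose j := by rw [Finset.card_powersetCard]; simp
  · intro f hf
    simp only [Finset.mem_coe, Finset.mem_filter, Finset.mem_univ, true_and] at hf
    rw [Finset.mem_coe, Finset.mem_powersetCard]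
    exact ⟨Finset.subset_univ _, hf⟩
  · intro f _ g _ hfg
    exact two_valued_inj' f g hfg

lemma perm_count {N : ℕ} (g : Fin N → Fin 2) (e : Equiv.Perm (Fin N)) (i : Fin 2) :
    (univ.filter fun p => g (e.symm p) = i).card = (univ.filter fun p => g p = i).card := by
  refine Finset.card_bij' (fun p _ => e.symm p) (fun p _ => e p) ?_ ?_ ?_ ?_
  · intro p hp; simp only [Finset.mem_filter, Finset.mem_univ, true_and] at hp ⊢; exact hp
  · intro p hp; simp only [Finset.mem_filter, Finset.mem_univ, true_and] at hp ⊢; simpa using hp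
  · intro p _; simp
  · intro p _; simp

def deckW (n : ℕ) : Finset (Fin (2*n) → Fin 2) :=
  univ.filter (fun w => (univ.filter fun p => w p = 0).card = n ∧
    (univ.filter fun p => w p = 1).card = n)

def deckS (n m : ℕ) : Finset (Fin (2*n) → Fin 2) :=
  (deckW n).filter (fun w => (∀ p : Fin (2*n), (p:ℕ) < m → w p = 0) ∨
    (∀ p : Fin (2*n), 2*n - m ≤ (p:ℕ) → w p = 1))

lemma deckW_card (n : ℕ) : (deckW n).card = Nat.choose (2*n) n := by
  have h := Finset.card_powersetCard n (univ : Finset (Fin (2*n)))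
  rw [Finset.card_univ, Fintype.card_fin] at h
  rw [← h]
  refine Finset.card_bij' (fun w _ => univ.filter fun p => w p = 1)
    (fun s _ => fun p => if p ∈ s then 1 else 0) ?_ ?_ ?_ ?_
  · intro w hw
    simp only [deckW, Finset.mem_filter, Finset.mem_univ, true_and] at hw
    rw [Finset.mem_powersetCard]
    exact ⟨Finset.subset_univ _, hw.2⟩
  · intro s hs
    rw [Finset.mem_powersetCard] at hs
    simp only [deckW, Finset.mem_filter, Finset.mem_univ, true_and]
    constructor
    · have : (univ.filter fun p => (if p ∈ s then (1 : Fin 2) else 0) = 0) = univ \ s := by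
        ext p
        simp only [Finset.mem_filter, Finset.mem_univ, true_and, Finset.mem_sdiff]
        by_cases hp : p ∈ s <;> simp [hp]
      rw [this, Finset.card_sdiff_of_subset (Finset.subset_univ _), Finset.card_univ, Fintype.card_fin,
        hs.2]
      omega
    · have : (univ.filter fun p => (if p ∈ s then (1 : Fin 2) else 0) = 1) = s := by
        ext p
        simp only [Finset.mem_filter, Finset.mem_univ, true_and]
        by_cases hp : p ∈ s <;> simp [hp]
      rw [this, hs.2]
  · intro w hw
    funext p
    rcases fin_two_cases (w p) with h0 | h1
    · simp [h0]
    · simp [h1]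
  · intro s hs
    ext p
    simp only [Finset.mem_filter, Finset.mem_univ, true_and]
    by_cases hp : p ∈ s <;> simp [hp]

lemma deckS_card (n m : ℕ) (hmn : m ≤ n) :
    (deckS n m).card ≤ 2 * Nat.choose (2*n - m) n := by
  set P0 : (Fin (2*n) → Fin 2) → Prop := fun w => ∀ p : Fin (2*n), (p:ℕ) < m → w p = 0
  set P1 : (Fin (2*n) → Fin 2) → Prop := fun w => ∀ p : Fin (2*n), 2*n - m ≤ (p:ℕ) → w p = 1
  have hsub : deckS n m ⊆ (deckW n).filter P0 ∪ (deckW n).filter P1 := by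
    intro w hw
    simp only [deckS, Finset.mem_filter] at hw
    rcases hw.2 with h | h
    · exact Finset.mem_union_left _ (Finset.mem_filter.mpr ⟨hw.1, h⟩)
    · exact Finset.mem_union_right _ (Finset.mem_filter.mpr ⟨hw.1, h⟩)
  have h0 : ((deckW n).filter P0).card ≤ Nat.choose (2*n - m) n := by
    have hground : (univ.filter fun p : Fin (2*n) => m ≤ (p:ℕ)).card = 2*n - m :=
      card_filter_ge (2*n) m
    have := Finset.card_le_card_of_injOn (fun w : Fin (2*n) → Fin 2 => univ.filter fun p => w p = 1)
      (s := (deckW n).filter P0)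
      (t := Finset.powersetCard n (univ.filter fun p : Fin (2*n) => m ≤ (p:ℕ))) ?_ ?_
    · calc ((deckW n).filter P0).card ≤ _ := this
        _ = Nat.choose (2*n - m) n := by rw [Finset.card_powersetCard, hground]
    · intro w hw
      simp only [Finset.mem_coe, Finset.mem_filter, deckW, Finset.mem_univ, true_and] at hw
      rw [Finset.mem_coe, Finset.mem_powersetCard]
      constructor
      · intro p hp
        simp only [Finset.mem_filter, Finset.mem_univ, true_and] at hp ⊢
        by_contra hlt
        push_neg at hlt
        have := hw.2 p hlt
        rw [hp] at this
        exact one_ne_zero this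
      · exact hw.1.2
    · intro w _ w' _ h
      exact two_valued_inj w w' h
  have h1 : ((deckW n).filter P1).card ≤ Nat.choose (2*n - m) n := by
    have hground : (univ.filter fun p : Fin (2*n) => (p:ℕ) < 2*n - m).card = 2*n - m :=
      card_filter_lt (2*n) (2*n - m) (by omega)
    have := Finset.card_le_card_of_injOn (fun w : Fin (2*n) → Fin 2 => univ.filter fun p => w p = 0)
      (s := (deckW n).filter P1)
      (t := Finset.powersetCard n (univ.filter fun p : Fin (2*n) => (p:ℕ) < 2*n - m)) ?_ ?_
    · calc ((deckW n).filter P1).card ≤ _ := this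
        _ = Nat.choose (2*n - m) n := by rw [Finset.card_powersetCard, hground]
    · intro w hw
      simp only [Finset.mem_coe, Finset.mem_filter, deckW, Finset.mem_univ, true_and] at hw
      rw [Finset.mem_coe, Finset.mem_powersetCard]
      constructor
      · intro p hp
        simp only [Finset.mem_filter, Finset.mem_univ, true_and] at hp ⊢
        by_contra hge
        push_neg at hge
        have := hw.2 p hge
        rw [hp] at this
        exact zero_ne_one this
      · exact hw.1.1
    · intro w _ w' _ h
      exact two_valued_inj' w w' h
  calc (deckS n m).card ≤ ((deckW n).filter P0 ∪ (deckW n).filter P1).card :=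
        Finset.card_le_card hsub
    _ ≤ ((deckW n).filter P0).card + ((deckW n).filter P1).card := Finset.card_union_le _ _
    _ ≤ 2 * Nat.choose (2*n - m) n := by omega

section shuffles
variable (σ : ∀ n : ℕ, (Fin (2 * n) → Fin 2) → Equiv.Perm (Fin (2 * n)))
  (v : ∀ n : ℕ, Fin (2 * n) → Fin 2)

lemma v_count0 (hv : ∀ n (p : Fin (2 * n)), v n p = if (p : ℕ) < n then 0 else 1) (n : ℕ) :
    (univ.filter fun p : Fin (2*n) => v n p = 0).card = n := by
  have heq : (univ.filter fun p : Fin (2*n) => v n p = 0) =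
      (univ.filter fun p : Fin (2*n) => (p:ℕ) < n) := by
    ext p
    simp only [Finset.mem_filter, Finset.mem_univ, true_and, hv n p]
    by_cases hp : (p:ℕ) < n <;> simp [hp]
  rw [heq, card_filter_lt (2*n) n (by omega)]

lemma v_count1 (hv : ∀ n (p : Fin (2 * n)), v n p = if (p : ℕ) < n then 0 else 1) (n : ℕ) :
    (univ.filter fun p : Fin (2*n) => v n p = 1).card = n := by
  have heq : (univ.filter fun p : Fin (2*n) => v n p = 1) =
      (univ.filter fun p : Fin (2*n) => n ≤ (p:ℕ)) := by
    ext p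
    simp only [Finset.mem_filter, Finset.mem_univ, true_and, hv n p]
    by_cases hp : (p:ℕ) < n <;> simp [hp] <;> omega
  rw [heq, card_filter_ge (2*n) n]
  omega

lemma Phi_mem (hv : ∀ n (p : Fin (2 * n)), v n p = if (p : ℕ) < n then 0 else 1)
    (n : ℕ) (f : Fin (2*n) → Fin 2) : (v n ∘ (σ n f).symm) ∈ deckW n := by
  simp only [deckW, Finset.mem_filter, Finset.mem_univ, true_and]
  constructor
  · calc (univ.filter fun p => (v n ∘ (σ n f).symm) p = 0).card
        = (univ.filter fun p => v n p = 0).card := perm_count (v n) (σ n f) 0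
      _ = n := v_count0 v hv n
  · calc (univ.filter fun p => (v n ∘ (σ n f).symm) p = 1).card
        = (univ.filter fun p => v n p = 1).card := perm_count (v n) (σ n f) 1
      _ = n := v_count1 v hv n

lemma Phi_sum (hv : ∀ n (p : Fin (2 * n)), v n p = if (p : ℕ) < n then 0 else 1) (n : ℕ) :
    ∑ w ∈ deckW n,
      (univ.filter fun f : Fin (2*n) → Fin 2 => v n ∘ (σ n f).symm = w).card = 2^(2*n) := by
  have h := sum_fiber_card (fun f : Fin (2*n) → Fin 2 => v n ∘ (σ n f).symm) (deckW n)
  rw [Finset.filter_true_of_mem (fun f _ => Phi_mem σ v hv n f)] at h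
  rw [h, Finset.card_univ, Fintype.card_fun, Fintype.card_fin, Fintype.card_fin]

lemma Phi_S_lower (hσ : ∀ n f, IsStableSort f (σ n f))
    (hv : ∀ n (p : Fin (2 * n)), v n p = if (p : ℕ) < n then 0 else 1)
    (n m : ℕ) (hn : 1 ≤ n) (hm1 : 1 ≤ m) (hmn : m ≤ n) :
    2^(2*n) ≤ (∑ w ∈ deckS n m,
        (univ.filter fun f : Fin (2*n) → Fin 2 => v n ∘ (σ n f).symm = w).card)
      + 2 * m * Nat.choose (2*n) n := by
  have hSW : deckS n m ⊆ deckW n := Finset.filter_subset _ _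
  have hsplit := Finset.sum_sdiff (f := fun w =>
    (univ.filter fun f : Fin (2*n) → Fin 2 => v n ∘ (σ n f).symm = w).card) hSW
  -- bound the sdiff sum
  have hB : ∑ w ∈ deckW n \ deckS n m,
      (univ.filter fun f : Fin (2*n) → Fin 2 => v n ∘ (σ n f).symm = w).card
      ≤ (2*m - 1) * Nat.choose (2*n) n := by
    rw [sum_fiber_card (fun f : Fin (2*n) → Fin 2 => v n ∘ (σ n f).symm) (deckW n \ deckS n m)]
    have hsub : (univ.filter fun f : Fin (2*n) → Fin 2 =>
          (v n ∘ (σ n f).symm) ∈ deckW n \ deckS n m) ⊆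
        (univ.filter fun f : Fin (2*n) → Fin 2 =>
          (univ.filter fun p => f p = 0).card ∈ Finset.Ioo (n - m) (n + m)) := by
      intro f hf
      simp only [Finset.mem_filter, Finset.mem_univ, true_and, Finset.mem_sdiff] at hf
      simp only [Finset.mem_filter, Finset.mem_univ, true_and, Finset.mem_Ioo]
      set k := (univ.filter fun p => f p = 0).card with hk
      by_contra hcon
      push_neg at hcon
      have hkN : k ≤ 2*n := k_le_N rfl
      apply hf.2
      simp only [deckS, Finset.mem_filter]
      refine ⟨hf.1, ?_⟩
      by_cases hcase : k ≤ n - m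
      · left
        intro p hp
        have hlow := claim_low (hσ n f) rfl (by omega : k ≤ n) p (by omega)
        rw [Function.comp_apply, hv n _]
        simp [hlow]
      · right
        have hkbig : n + m ≤ k := by
          rcases Nat.lt_or_ge (n - m) k with h1 | h1
          · exact hcon h1
          · omega
        intro p hp
        have hhigh := claim_high (hσ n f) rfl rfl (by omega : n ≤ k) p (by omega)
        rw [Function.comp_apply, hv n _]
        simp only [ite_eq_right_iff]
        intro hlt
        omega
    have hcount : (univ.filter fun f : Fin (2*n) → Fin 2 =>
        (univ.filter fun p => f p = 0).card ∈ Finset.Ioo (n - m) (n + m)).card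
        ≤ (2*m - 1) * Nat.choose (2*n) n := by
      rw [← sum_fiber_card (fun f : Fin (2*n) → Fin 2 => (univ.filter fun p => f p = 0).card)
        (Finset.Ioo (n - m) (n + m))]
      calc ∑ j ∈ Finset.Ioo (n - m) (n + m),
            ((univ : Finset (Fin (2*n) → Fin 2)).filter
              fun f => (univ.filter fun p => f p = 0).card = j).card
          ≤ ∑ j ∈ Finset.Ioo (n - m) (n + m), Nat.choose (2*n) n := by
            apply Finset.sum_le_sum
            intro j _
            calc _ ≤ (2*n).choose j := count_k_le
              _ ≤ (2*n).choose ((2*n)/2) := Nat.choose_le_middle j (2*n)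
              _ = (2*n).choose n := by rw [(by omega : (2*n)/2 = n)]
        _ = (2*m - 1) * Nat.choose (2*n) n := by
            rw [Finset.sum_const, Nat.card_Ioo, smul_eq_mul]
            congr 1
            omega
    exact le_trans (Finset.card_le_card hsub) hcount
  have hB' : (∑ w ∈ deckW n \ deckS n m,
      (univ.filter fun f : Fin (2*n) → Fin 2 => v n ∘ (σ n f).symm = w).card)
      ≤ 2 * m * Nat.choose (2*n) n :=
    le_trans hB (Nat.mul_le_mul_right _ (by omega))
  have hsum := Phi_sum σ v hv n
  beta_reduce at hsplit
  omega

end shuffles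

noncomputable def qfun (σ : ∀ n : ℕ, (Fin (2 * n) → Fin 2) → Equiv.Perm (Fin (2 * n)))
    (v : ∀ n : ℕ, Fin (2 * n) → Fin 2) (n : ℕ) (w : Fin (2*n) → Fin 2) : ℝ :=
  ((univ.filter fun f : Fin (2*n) → Fin 2 => v n ∘ (σ n f).symm = w).card : ℝ) / 2^(2*n)

lemma TV_bounds
    (σ : ∀ n : ℕ, (Fin (2 * n) → Fin 2) → Equiv.Perm (Fin (2 * n)))
    (hσ : ∀ n f, IsStableSort f (σ n f))
    (v : ∀ n : ℕ, Fin (2 * n) → Fin 2)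
    (hv : ∀ n (p : Fin (2 * n)), v n p = if (p : ℕ) < n then 0 else 1)
    (n m : ℕ) (hn : 1 ≤ n) (hm1 : 1 ≤ m) (hmn : m ≤ n) :
    1 - (2*(m:ℝ) * ((2*n).choose n : ℝ)/4^n + 2*((2:ℝ)/3)^m) ≤
      (1/2 : ℝ) * ∑ w ∈ deckW n, |qfun σ v n w - 1/((2*n).choose n : ℝ)| ∧
    (1/2 : ℝ) * ∑ w ∈ deckW n, |qfun σ v n w - 1/((2*n).choose n : ℝ)| ≤ 1 := by
  have hCpos : 0 < (2*n).choose n := Nat.choose_pos (by omega)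
  have hCR : (0:ℝ) < ((2*n).choose n : ℝ) := by exact_mod_cast hCpos
  have hpow_pos : (0:ℝ) < 2^(2*n) := by positivity
  have hq_nonneg : ∀ w, 0 ≤ qfun σ v n w := fun w => by
    unfold qfun; positivity
  have hu_nonneg : (0:ℝ) ≤ 1/((2*n).choose n : ℝ) := by positivity
  have hqsum : ∑ w ∈ deckW n, qfun σ v n w = 1 := by
    unfold qfun
    rw [← Finset.sum_div, ← Nat.cast_sum, Phi_sum σ v hv n]
    rw [Nat.cast_pow, Nat.cast_ofNat]
    exact div_self (ne_of_gt hpow_pos)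
  have husum : ∑ _w ∈ deckW n, (1/((2*n).choose n : ℝ)) = 1 := by
    rw [Finset.sum_const, deckW_card, nsmul_eq_mul]
    field_simp
  have hSW : deckS n m ⊆ deckW n := Finset.filter_subset _ _
  have h4 : (2:ℝ)^(2*n) = 4^n := by rw [pow_mul]; norm_num
  -- lower bound on ∑_S q
  have hSq : 1 - 2*(m:ℝ) * ((2*n).choose n : ℝ)/4^n ≤ ∑ w ∈ deckS n m, qfun σ v n w := by
    have h := Phi_S_lower σ v hσ hv n m hn hm1 hmn
    have hcast : (2:ℝ)^(2*n) ≤ (∑ w ∈ deckS n m,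
        ((univ.filter fun f : Fin (2*n) → Fin 2 => v n ∘ (σ n f).symm = w).card : ℝ))
        + 2 * m * ((2*n).choose n : ℝ) := by
      have := (Nat.cast_le (α := ℝ)).mpr h
      push_cast at this
      convert this using 2 <;> push_cast <;> ring
    have hd : 1 ≤ (∑ w ∈ deckS n m, qfun σ v n w) + 2*(m:ℝ) * ((2*n).choose n : ℝ)/4^n := by
      unfold qfun
      rw [← Finset.sum_div, ← h4]
      rw [← add_div, le_div_iff₀ hpow_pos, one_mul]
      exact hcast
    linarith
  -- upper bound on ∑_S u
  have hSu : ∑ _w ∈ deckS n m, (1/((2*n).choose n : ℝ)) ≤ 2*((2:ℝ)/3)^m := by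
    rw [Finset.sum_const, nsmul_eq_mul]
    have hcard := deckS_card n m hmn
    have hratio := choose_ratio n m hmn
    have hratioR : ((2*n - m).choose n : ℝ) ≤ (2/3)^m * ((2*n).choose n : ℝ) := by
      have h3 : (0:ℝ) < 3^m := by positivity
      rw [div_pow, div_mul_eq_mul_div, le_div_iff₀ h3]
      have := (Nat.cast_le (α := ℝ)).mpr hratio
      push_cast at this
      calc ((2*n - m).choose n : ℝ) * 3^m = 3^m * ((2*n - m).choose n : ℝ) := by ring
        _ ≤ 2^m * ((2*n).choose n : ℝ) := this
    have hcardR : ((deckS n m).card : ℝ) ≤ 2 * ((2*n - m).choose n : ℝ) := by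
      exact_mod_cast hcard
    calc ((deckS n m).card : ℝ) * (1/((2*n).choose n : ℝ))
        ≤ (2 * ((2*n - m).choose n : ℝ)) * (1/((2*n).choose n : ℝ)) := by
          apply mul_le_mul_of_nonneg_right hcardR hu_nonneg
      _ ≤ (2 * ((2/3)^m * ((2*n).choose n : ℝ))) * (1/((2*n).choose n : ℝ)) := by
          apply mul_le_mul_of_nonneg_right _ hu_nonneg
          linarith
      _ = 2*((2:ℝ)/3)^m := by field_simp
  -- splitting of sums
  have hsplit_abs := (Finset.sum_sdiff (f := fun w => |qfun σ v n w - 1/((2*n).choose n : ℝ)|) hSW).symm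
  have hsplit_q := (Finset.sum_sdiff (f := fun w => qfun σ v n w) hSW).symm
  have hsplit_u := (Finset.sum_sdiff (f := fun _w => (1/((2*n).choose n : ℝ))) hSW).symm
  have h1 : ∑ w ∈ deckS n m, (qfun σ v n w - 1/((2*n).choose n : ℝ)) ≤
      ∑ w ∈ deckS n m, |qfun σ v n w - 1/((2*n).choose n : ℝ)| :=
    Finset.sum_le_sum (fun w _ => le_abs_self _)
  have h2 : ∑ w ∈ deckW n \ deckS n m, (1/((2*n).choose n : ℝ) - qfun σ v n w) ≤
      ∑ w ∈ deckW n \ deckS n m, |qfun σ v n w - 1/((2*n).choose n : ℝ)| := by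
    apply Finset.sum_le_sum
    intro w _
    rw [abs_sub_comm]
    exact le_abs_self _
  have h1' : ∑ w ∈ deckS n m, (qfun σ v n w - 1/((2*n).choose n : ℝ)) =
      (∑ w ∈ deckS n m, qfun σ v n w) - ∑ _w ∈ deckS n m, (1/((2*n).choose n : ℝ)) :=
    Finset.sum_sub_distrib _ _
  have h2' : ∑ w ∈ deckW n \ deckS n m, (1/((2*n).choose n : ℝ) - qfun σ v n w) =
      (∑ _w ∈ deckW n \ deckS n m, (1/((2*n).choose n : ℝ))) -
        ∑ w ∈ deckW n \ deckS n m, qfun σ v n w :=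
    Finset.sum_sub_distrib _ _
  have habs_upper : ∑ w ∈ deckW n, |qfun σ v n w - 1/((2*n).choose n : ℝ)| ≤ 2 := by
    have : ∀ w ∈ deckW n, |qfun σ v n w - 1/((2*n).choose n : ℝ)| ≤
        qfun σ v n w + 1/((2*n).choose n : ℝ) := by
      intro w _
      rw [abs_sub_le_iff]
      constructor <;> [linarith [hq_nonneg w, hu_nonneg]; linarith [hq_nonneg w, hu_nonneg]]
    calc ∑ w ∈ deckW n, |qfun σ v n w - 1/((2*n).choose n : ℝ)|
        ≤ ∑ w ∈ deckW n, (qfun σ v n w + 1/((2*n).choose n : ℝ)) := Finset.sum_le_sum this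
      _ = 2 := by rw [Finset.sum_add_distrib, hqsum, husum]; norm_num
  constructor
  · linarith
  · linarith

lemma cb_real (n : ℕ) : ((2*n).choose n : ℝ) * Real.sqrt (2*n+1) ≤ 4^n := by
  have h : (Nat.centralBinom n)^2 * (2*n+1) ≤ 16^n := cb_sq n
  have hR : (((2*n).choose n : ℝ))^2 * (2*n+1) ≤ 16^n := by
    have : ((Nat.centralBinom n)^2 * (2*n+1) : ℕ) = (((2*n).choose n)^2 * (2*n+1) : ℕ) := rfl
    rw [this] at h
    exact_mod_cast h
  have hsq : (((2*n).choose n : ℝ) * Real.sqrt (2*n+1))^2 ≤ ((4:ℝ)^n)^2 := by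
    have hnn : (0:ℝ) ≤ 2*n+1 := by positivity
    rw [mul_pow, Real.sq_sqrt hnn]
    calc (((2*n).choose n : ℝ))^2 * (2*n+1) ≤ 16^n := hR
      _ = ((4:ℝ)^n)^2 := by rw [← pow_mul, mul_comm n 2, pow_mul]; norm_num
  have h1 : (0:ℝ) ≤ ((2*n).choose n : ℝ) * Real.sqrt (2*n+1) := by positivity
  have h2 : (0:ℝ) ≤ (4:ℝ)^n := by positivity
  exact (pow_le_pow_iff_left₀ h1 h2 (by norm_num)).mp hsq

lemma final_lower
    (σ : ∀ n : ℕ, (Fin (2 * n) → Fin 2) → Equiv.Perm (Fin (2 * n)))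
    (hσ : ∀ n f, IsStableSort f (σ n f))
    (v : ∀ n : ℕ, Fin (2 * n) → Fin 2)
    (hv : ∀ n (p : Fin (2 * n)), v n p = if (p : ℕ) < n then 0 else 1)
    (n : ℕ) (hn : 1 ≤ n) :
    1 - (2/(Nat.sqrt (Nat.sqrt n) : ℝ) + 2*((2:ℝ)/3)^(Nat.sqrt (Nat.sqrt n))) ≤
      (1/2 : ℝ) * ∑ w ∈ deckW n, |qfun σ v n w - 1/((2*n).choose n : ℝ)| := by
  set m := Nat.sqrt (Nat.sqrt n) with hmdef
  have hm1 : 1 ≤ m := by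
    rw [hmdef]
    have h1 : 1 ≤ Nat.sqrt n := Nat.le_sqrt.mpr (by omega)
    exact Nat.le_sqrt.mpr (by omega)
  have hm4 : m*m*(m*m) ≤ n := by
    calc m*m*(m*m) ≤ Nat.sqrt n * Nat.sqrt n := by
          have h1 : m*m ≤ Nat.sqrt n := Nat.sqrt_le _
          exact Nat.mul_le_mul h1 h1
      _ ≤ n := Nat.sqrt_le _
  have hmn : m ≤ n := by
    have h1 : m*1*(1*1) ≤ m*m*(m*m) := by
      apply Nat.mul_le_mul (Nat.mul_le_mul_left m hm1) (Nat.mul_le_mul hm1 hm1)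
    omega
  have h := (TV_bounds σ hσ v hv n m hn hm1 hmn).1
  have hmR : (1:ℝ) ≤ (m:ℝ) := by exact_mod_cast hm1
  have hmpos : (0:ℝ) < m := by linarith
  have hs_pos : (0:ℝ) < Real.sqrt (2*n+1) := Real.sqrt_pos.mpr (by positivity)
  have hms : ((m:ℝ))^2 ≤ Real.sqrt (2*n+1) := by
    rw [Real.le_sqrt (by positivity) (by positivity)]
    have : ((m*m*(m*m) : ℕ) : ℝ) ≤ ((n:ℕ) : ℝ) := by exact_mod_cast hm4
    push_cast at this
    nlinarith [this]
  have hC4 : ((2*n).choose n : ℝ)/4^n ≤ 1/Real.sqrt (2*n+1) := by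
    rw [div_le_div_iff₀ (by positivity) hs_pos, one_mul]
    exact cb_real n
  have hkey : 2*(m:ℝ) * ((2*n).choose n : ℝ)/4^n ≤ 2/(m:ℝ) := by
    have e1 : 2*(m:ℝ) * ((2*n).choose n : ℝ)/4^n = (2*m) * (((2*n).choose n : ℝ)/4^n) := by
      ring
    rw [e1]
    calc (2*(m:ℝ)) * (((2*n).choose n : ℝ)/4^n) ≤ (2*m) * (1/Real.sqrt (2*n+1)) := by
          apply mul_le_mul_of_nonneg_left hC4 (by positivity)
      _ = 2*m/Real.sqrt (2*n+1) := by ring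
      _ ≤ 2/(m:ℝ) := by
          rw [div_le_div_iff₀ hs_pos hmpos]
          nlinarith [hms]
  linarith

lemma count_rewrite (σ : ∀ n : ℕ, (Fin (2 * n) → Fin 2) → Equiv.Perm (Fin (2 * n)))
    (v : ∀ n : ℕ, Fin (2 * n) → Fin 2) (n : ℕ) (w : Fin (2*n) → Fin 2) :
    (Finset.univ.filter fun f : Fin (2*n) → Fin 2 => w ∘ σ n f = v n) =
    (univ.filter fun f : Fin (2*n) → Fin 2 => v n ∘ (σ n f).symm = w) := by
  ext f
  simp only [Finset.mem_filter, Finset.mem_univ, true_and]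
  rw [Equiv.comp_symm_eq]
  exact eq_comm

lemma TV_expr_eq (σ : ∀ n : ℕ, (Fin (2 * n) → Fin 2) → Equiv.Perm (Fin (2 * n)))
    (v : ∀ n : ℕ, Fin (2 * n) → Fin 2) (n : ℕ) :
    ((1 : ℝ) / 2) * ∑ w ∈ Finset.univ.filter (fun w : Fin (2 * n) → Fin 2 =>
        (Finset.univ.filter fun p => w p = 0).card = n ∧
        (Finset.univ.filter fun p => w p = 1).card = n),
      |((Finset.univ.filter fun f : Fin (2 * n) → Fin 2 => w ∘ σ n f = v n).card : ℝ)
          / 2 ^ (2 * n) - 1 / (Nat.choose (2 * n) n : ℝ)| =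
    (1/2 : ℝ) * ∑ w ∈ deckW n, |qfun σ v n w - 1/((2*n).choose n : ℝ)| := by
  congr 1
  apply Finset.sum_congr rfl
  intro w _
  rw [count_rewrite σ v n w]
  rfl

/-- The total variation distance from uniform after a single GSR `2`-shuffle of a deck of
`n` red cards atop `n` black cards tends to `1` as `n → ∞`. -/
theorem two_shuffle_red_black_TV_tendsto_one
    (σ : ∀ n : ℕ, (Fin (2 * n) → Fin 2) → Equiv.Perm (Fin (2 * n)))
    (hσ : ∀ n f, IsStableSort f (σ n f))
    (v : ∀ n : ℕ, Fin (2 * n) → Fin 2)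
    (hv : ∀ n (p : Fin (2 * n)), v n p = if (p : ℕ) < n then 0 else 1) :
    Filter.Tendsto (fun n : ℕ =>
        ((1 : ℝ) / 2) * ∑ w ∈ Finset.univ.filter (fun w : Fin (2 * n) → Fin 2 =>
            (Finset.univ.filter fun p => w p = 0).card = n ∧
            (Finset.univ.filter fun p => w p = 1).card = n),
          |((Finset.univ.filter fun f : Fin (2 * n) → Fin 2 => w ∘ σ n f = v n).card : ℝ)
              / 2 ^ (2 * n) - 1 / (Nat.choose (2 * n) n : ℝ)|)
      Filter.atTop (nhds 1) := by
  have hm : Filter.Tendsto (fun n : ℕ => Nat.sqrt (Nat.sqrt n)) Filter.atTop Filter.atTop := by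
    apply Filter.tendsto_atTop_atTop.mpr
    intro b
    refine ⟨b*b*(b*b), fun n hn => ?_⟩
    exact Nat.le_sqrt.mpr (Nat.le_sqrt.mpr hn)
  have h1 : Filter.Tendsto (fun n : ℕ => 2/((Nat.sqrt (Nat.sqrt n)):ℝ))
      Filter.atTop (nhds 0) := (tendsto_const_div_atTop_nhds_zero_nat 2).comp hm
  have h2 : Filter.Tendsto (fun n : ℕ => ((2:ℝ)/3)^(Nat.sqrt (Nat.sqrt n)))
      Filter.atTop (nhds 0) :=
    (tendsto_pow_atTop_nhds_zero_of_lt_one (by norm_num) (by norm_num)).comp hm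
  have hglim : Filter.Tendsto (fun n : ℕ =>
      1 - (2/((Nat.sqrt (Nat.sqrt n)):ℝ) + 2*((2:ℝ)/3)^(Nat.sqrt (Nat.sqrt n))))
      Filter.atTop (nhds 1) := by
    have := Filter.Tendsto.sub (tendsto_const_nhds (x := (1:ℝ)) (f := Filter.atTop))
      (h1.add (h2.const_mul 2))
    simp only [add_zero, mul_zero, sub_zero] at this
    convert this using 2 <;> ring_nf
  apply tendsto_of_tendsto_of_tendsto_of_le_of_le' hglim
    (tendsto_const_nhds (x := (1:ℝ)))
  · filter_upwards [Filter.eventually_ge_atTop 1] with n hn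
    rw [TV_expr_eq σ v n]
    exact final_lower σ hσ v hv n hn
  · filter_upwards [Filter.eventually_ge_atTop 1] with n hn
    rw [TV_expr_eq σ v n]
    exact (TV_bounds σ hσ v hv n 1 hn le_rfl hn).2
end

section
/- Fix a natural number k ≥ 1 and define f_k(z) = ∑_{r=0}^{∞} r^k z^r for real 0 < z < 1. Then as z → 1 from below, f_k(z) − k!/ (log(1/z))^{k+1} converges to ζ(−k), the value of the Riemann zeta function at −k; equivalently, f_k(z) = (k!/(1−z)^{k+1})·((z−1)/log z)^{k+1} + ζ(−k) + O(1−z) as z → 1⁻. -/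
namespace PolyLogZeta
open Finset Filter

lemma two_pow_le_factorial_succ (m : ℕ) : 2 ^ m ≤ (m+1).factorial := by
  induction m with
  | zero => simp
  | succ n ih =>
    rw [pow_succ, Nat.factorial_succ]
    calc 2 ^ n * 2 ≤ (n+1).factorial * 2 := by omega
    _ ≤ (n+1+1) * (n+1).factorial := by nlinarith [Nat.factorial_pos (n+1)]

lemma half_geom (n : ℕ) : ∑ k ∈ range n, ((1:ℚ)/2)^(k+1) = 1 - (1/2)^n := by
  induction n with
  | zero => simp
  | succ m ih => rw [sum_range_succ, ih]; ring

lemma sum_inv_fact_le (n : ℕ) : ∑ k ∈ range n, ((1:ℚ)/((n+1-k).factorial)) ≤ 1 := by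
  have h : ∀ k ∈ range n, ((1:ℚ)/((n+1-k).factorial)) ≤ (1/2)^(n-1-k+1) := by
    intro k hk
    have hkn : k < n := mem_range.mp hk
    have h1 : n + 1 - k = (n - 1 - k + 1) + 1 := by omega
    have h2 : (2:ℕ)^(n-1-k+1) ≤ (n+1-k).factorial := by
      rw [h1]; exact two_pow_le_factorial_succ _
    rw [one_div, one_div, inv_pow]
    rw [inv_le_inv₀ (by positivity) (by positivity)]
    exact_mod_cast h2
  calc ∑ k ∈ range n, ((1:ℚ)/((n+1-k).factorial)) ≤ ∑ k ∈ range n, ((1:ℚ)/2)^(n-1-k+1) :=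
        Finset.sum_le_sum h
  _ = ∑ k ∈ range n, ((1:ℚ)/2)^(k+1) := by
        rw [← Finset.sum_range_reflect]
        refine Finset.sum_congr rfl fun k hk => ?_
        have : k < n := mem_range.mp hk
        congr 1
        omega
  _ ≤ 1 := by
        rw [half_geom]
        have : (0:ℚ) ≤ (1/2)^n := by positivity
        linarith

lemma abs_bernoulli_le (n : ℕ) : |bernoulli n| ≤ n.factorial := by
  induction n using Nat.strong_induction_on with
  | _ n ih =>
    rcases Nat.eq_zero_or_pos n with rfl | hn
    · simp
    have hs := sum_bernoulli (n+1)
    rw [if_neg (by omega), sum_range_succ] at hs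
    have hch : ((n+1).choose n : ℚ) = (n:ℚ) + 1 := by
      rw [Nat.choose_succ_self_right]; push_cast; ring
    have hB : bernoulli n = -(∑ k ∈ range n, ((n+1).choose k : ℚ) * bernoulli k) / ((n:ℚ)+1) := by
      rw [hch] at hs
      field_simp
      linarith [hs]
    rw [hB, abs_div, abs_neg, abs_of_nonneg (by positivity : (0:ℚ) ≤ (n:ℚ)+1)]
    have habs : |∑ k ∈ range n, ((n+1).choose k : ℚ) * bernoulli k|
        ≤ ∑ k ∈ range n, ((n+1).choose k : ℚ) * k.factorial := by
      refine (Finset.abs_sum_le_sum_abs _ _).trans (Finset.sum_le_sum fun k hk => ?_)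
      rw [abs_mul, abs_of_nonneg (by positivity : (0:ℚ) ≤ ((n+1).choose k : ℚ))]
      exact mul_le_mul_of_nonneg_left (ih k (Finset.mem_range.mp hk)) (by positivity)
    have hterm : ∀ k ∈ range n, ((n+1).choose k : ℚ) * k.factorial
        = ((n+1).factorial : ℚ) * ((1:ℚ)/((n+1-k).factorial)) := by
      intro k hk
      have hkn : k < n := Finset.mem_range.mp hk
      have h := Nat.choose_mul_factorial_mul_factorial (le_of_lt (by omega : k < n+1))
      have h2 : (((n+1).choose k : ℕ) : ℚ) * k.factorial * (n+1-k).factorial = (n+1).factorial := by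
        exact_mod_cast congrArg (Nat.cast : ℕ → ℚ) h
      have hfpos : (0:ℚ) < (n+1-k).factorial := by exact_mod_cast Nat.factorial_pos _
      field_simp
      linarith [h2]
    have hsum : ∑ k ∈ range n, ((n+1).choose k : ℚ) * k.factorial ≤ (n+1).factorial := by
      rw [Finset.sum_congr rfl hterm, ← Finset.mul_sum]
      calc ((n+1).factorial : ℚ) * ∑ k ∈ range n, ((1:ℚ)/((n+1-k).factorial))
          ≤ ((n+1).factorial : ℚ) * 1 := by
            refine mul_le_mul_of_nonneg_left (sum_inv_fact_le n) (by positivity)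
      _ = _ := mul_one _
    have hfin : ((n+1).factorial : ℚ) = ((n:ℚ)+1) * n.factorial := by
      rw [Nat.factorial_succ]; push_cast; ring
    rw [div_le_iff₀ (by positivity)]
    calc |∑ k ∈ range n, ((n+1).choose k : ℚ) * bernoulli k| ≤ _ := habs
    _ ≤ ((n+1).factorial : ℚ) := hsum
    _ = (n.factorial : ℚ) * ((n:ℚ)+1) := by rw [hfin]; ring

lemma keyQ (n : ℕ) : ∑ i ∈ range (n+1), bernoulli (i+1) / (((i+1).factorial : ℚ) * ((n+1-i).factorial : ℚ))
    = -(1/((n+2).factorial : ℚ)) := by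
  have hs := sum_bernoulli (n+2)
  rw [if_neg (by omega), sum_range_succ'] at hs
  simp only [Nat.choose_zero_right, Nat.cast_one, bernoulli_zero, one_mul, mul_one] at hs
  -- hs : ∑ i ∈ range (n+1), ((n+2).choose (i+1) : ℚ) * bernoulli (i+1) + 1 = 0
  have hterm : ∀ i ∈ range (n+1),
      bernoulli (i+1) / (((i+1).factorial : ℚ) * ((n+1-i).factorial : ℚ))
      = ((n+2).choose (i+1) : ℚ) * bernoulli (i+1) / ((n+2).factorial : ℚ) := by
    intro i hi
    have hin : i < n+1 := mem_range.mp hi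
    have h := Nat.choose_mul_factorial_mul_factorial (by omega : i+1 ≤ n+2)
    have h2 : ((n+2).choose (i+1) : ℚ) * ((i+1).factorial : ℚ) * ((n+2-(i+1)).factorial : ℚ)
        = ((n+2).factorial : ℚ) := by exact_mod_cast congrArg (Nat.cast : ℕ → ℚ) h
    have h3 : n+2-(i+1) = n+1-i := by omega
    rw [h3] at h2
    have p1 : (0:ℚ) < ((i+1).factorial : ℚ) := by exact_mod_cast Nat.factorial_pos _
    have p2 : (0:ℚ) < ((n+1-i).factorial : ℚ) := by exact_mod_cast Nat.factorial_pos _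
    have p3 : (0:ℚ) < ((n+2).factorial : ℚ) := by exact_mod_cast Nat.factorial_pos _
    rw [div_eq_div_iff (by positivity) p3.ne']
    rw [← h2]; ring
  rw [Finset.sum_congr rfl hterm, ← Finset.sum_div]
  have p3 : ((n+2).factorial : ℚ) ≠ 0 := by exact_mod_cast (Nat.factorial_pos _).ne'
  rw [div_eq_iff p3, neg_mul, div_mul_cancel₀ _ p3]
  linarith [hs]

lemma summable_shift_pow (m : ℕ) {x : ℝ} (h0 : 0 ≤ x) (h1 : x < 1) :
    Summable fun n : ℕ => ((n:ℝ)+1)^m * x^n := by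
  rcases eq_or_lt_of_le h0 with rfl | hx
  · apply summable_of_ne_finset_zero (s := {0})
    intro n hn
    simp only [Finset.mem_singleton] at hn
    rw [zero_pow hn, mul_zero]
  · have h := summable_pow_mul_geometric_of_norm_lt_one m (r := x)
      (by rwa [Real.norm_eq_abs, abs_of_pos hx])
    have h2 := (summable_nat_add_iff 1).mpr h
    have h3 := h2.mul_left x⁻¹
    refine h3.congr fun n => ?_
    push_cast
    field_simp
    ring

lemma summable_norm_coeff {m : ℕ} {M : ℝ} {c : ℕ → ℝ} (hc : ∀ n, |c n| ≤ M * ((n:ℝ)+1)^m)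
    {t : ℝ} (ht : |t| < 1) : Summable fun n => |c n * t^n| := by
  refine Summable.of_nonneg_of_le (fun n => abs_nonneg _) (fun n => ?_)
    (((summable_shift_pow m (abs_nonneg t) ht).mul_left M))
  rw [abs_mul, abs_pow]
  calc |c n| * |t|^n ≤ M * ((n:ℝ)+1)^m * |t|^n :=
        mul_le_mul_of_nonneg_right (hc n) (pow_nonneg (abs_nonneg t) n)
  _ = M * (((n:ℝ)+1)^m * |t|^n) := by ring

lemma summable_coeff {m : ℕ} {M : ℝ} {c : ℕ → ℝ} (hc : ∀ n, |c n| ≤ M * ((n:ℝ)+1)^m)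
    {t : ℝ} (ht : |t| < 1) : Summable fun n => c n * t^n :=
  (summable_norm_coeff hc ht).of_abs

lemma hasDerivAt_coeff {m : ℕ} {M : ℝ} {c : ℕ → ℝ} (hc : ∀ n, |c n| ≤ M * ((n:ℝ)+1)^m)
    {x : ℝ} (hx : |x| < 1) :
    HasDerivAt (fun z => ∑' n, c n * z^n) (∑' n, (((n:ℕ):ℝ)+1) * c (n+1) * x^n) x := by
  have hM : 0 ≤ M := le_trans (abs_nonneg (c 0)) (by simpa using hc 0)
  set R : ℝ := (1 + |x|)/2 with hR
  have hR0 : 0 < R := by positivity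
  have hRlt : R < 1 := by rw [hR]; linarith
  have hxR : |x| < R := by rw [hR]; linarith [abs_nonneg x]
  have hxmem : x ∈ Set.Ioo (-R) R := by
    obtain ⟨h1, h2⟩ := abs_lt.mp hxR
    exact ⟨h1, h2⟩
  have h0mem : (0:ℝ) ∈ Set.Ioo (-R) R := ⟨by linarith, hR0⟩
  have hu : Summable fun n : ℕ => (M/R) * (((n:ℝ)+1)^(m+1) * R^n) :=
    (summable_shift_pow (m+1) hR0.le hRlt).mul_left _
  have hbound : ∀ (n : ℕ) (y : ℝ), y ∈ Set.Ioo (-R) R →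
      ‖c n * ((n:ℝ) * y^(n-1))‖ ≤ (M/R) * (((n:ℝ)+1)^(m+1) * R^n) := by
    intro n y hy
    rw [Real.norm_eq_abs, abs_mul]
    rcases Nat.eq_zero_or_pos n with rfl | hn
    · simp only [Nat.cast_zero, zero_mul, abs_zero, mul_zero]
      positivity
    have hy' : |y| ≤ R := by
      rw [abs_le]; exact ⟨hy.1.le, hy.2.le⟩
    have h1 : |(n:ℝ) * y^(n-1)| ≤ (n:ℝ) * R^(n-1) := by
      rw [abs_mul, abs_pow, abs_of_nonneg (by positivity : (0:ℝ) ≤ (n:ℝ))]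
      exact mul_le_mul_of_nonneg_left (pow_le_pow_left₀ (abs_nonneg y) hy' _) (by positivity)
    rw [div_mul_eq_mul_div, le_div_iff₀ hR0]
    have hpow : R^(n-1) * R = R^n := by rw [← pow_succ]; congr 1; omega
    have e1 : |c n| * |(n:ℝ) * y^(n-1)| * R ≤ (M * ((n:ℝ)+1)^m) * ((n:ℝ) * R^(n-1)) * R :=
      mul_le_mul_of_nonneg_right (mul_le_mul (hc n) h1 (abs_nonneg _) (by positivity)) hR0.le
    have e2 : (M * ((n:ℝ)+1)^m) * ((n:ℝ) * R^(n-1)) * R = M * (((n:ℝ)+1)^m * (n:ℝ)) * R^n := by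
      rw [← hpow]; ring
    have e3 : M * (((n:ℝ)+1)^m * (n:ℝ)) * R^n ≤ M * (((n:ℝ)+1)^(m+1)) * R^n := by
      apply mul_le_mul_of_nonneg_right _ (by positivity)
      apply mul_le_mul_of_nonneg_left _ hM
      rw [pow_succ]
      nlinarith [pow_nonneg (by positivity : (0:ℝ) ≤ (n:ℝ)+1) m, Nat.cast_nonneg (α := ℝ) n]
    calc |c n| * |(n:ℝ) * y^(n-1)| * R ≤ M * (((n:ℝ)+1)^(m+1)) * R^n := by
          rw [e2] at e1; linarith
    _ = M * (((n:ℝ)+1)^(m+1) * R^n) := by ring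
  have hsum : Summable fun n => c n * ((n:ℝ) * x^(n-1)) := by
    apply Summable.of_norm
    exact Summable.of_nonneg_of_le (fun n => norm_nonneg _) (fun n => hbound n x hxmem) hu
  have key := hasDerivAt_tsum_of_isPreconnected hu (isOpen_Ioo (a := -R) (b := R))
    isPreconnected_Ioo (g := fun n z => c n * z^n)
    (g' := fun n z => c n * ((n:ℝ) * z^(n-1)))
    (fun n y _ => (hasDerivAt_pow n y).const_mul (c n))
    hbound h0mem
    (by simpa using summable_coeff hc (t := (0:ℝ)) (by simp))
    hxmem
  refine key.congr_deriv (Eq.symm ?_)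
  rw [Summable.tsum_eq_zero_add hsum]
  simp only [Nat.cast_zero, zero_mul, mul_zero, zero_add]
  congr 1
  funext n
  push_cast
  ring

noncomputable def bc (n : ℕ) : ℝ := (bernoulli (n+1) : ℝ) / ((n+1).factorial : ℝ)

noncomputable def dc (j n : ℕ) : ℝ := bc (n+j) * (((n+j).factorial : ℝ) / (n.factorial : ℝ))

noncomputable def Phi (j : ℕ) (t : ℝ) : ℝ := ∑' n, dc j n * t^n

lemma abs_bc_le (n : ℕ) : |bc n| ≤ 1 := by
  have h := abs_bernoulli_le (n+1)
  have h2 : |(bernoulli (n+1) : ℝ)| ≤ ((n+1).factorial : ℝ) := by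
    rw [← Rat.cast_abs]
    exact_mod_cast h
  rw [bc, abs_div, abs_of_nonneg (by positivity : (0:ℝ) ≤ ((n+1).factorial:ℝ))]
  rw [div_le_one (by exact_mod_cast Nat.factorial_pos (n+1))]
  exact h2

lemma fact_ratio_le (j n : ℕ) :
    (n+j).factorial ≤ (j+1)^j * (n+1)^j * n.factorial := by
  induction j with
  | zero => simp
  | succ i ih =>
    have h1 : (n+(i+1)).factorial = (n+i+1) * (n+i).factorial := by
      rw [show n+(i+1) = (n+i)+1 by omega, Nat.factorial_succ]
    rw [h1]
    calc (n+i+1) * (n+i).factorial ≤ (n+i+1) * ((i+1)^i * (n+1)^i * n.factorial) :=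
          Nat.mul_le_mul_left _ ih
    _ ≤ ((i+2) * (n+1)) * ((i+2)^i * (n+1)^i * n.factorial) := by
          apply Nat.mul_le_mul (by nlinarith)
          exact Nat.mul_le_mul_right _ (Nat.mul_le_mul_right _ (Nat.pow_le_pow_left (by omega) i))
    _ = (i+2)^(i+1) * (n+1)^(i+1) * n.factorial := by ring
    _ = (i+1+1)^(i+1) * (n+1)^(i+1) * n.factorial := by norm_num

lemma abs_dc_le (j n : ℕ) : |dc j n| ≤ (((j:ℝ)+1)^j) * ((n:ℝ)+1)^j := by
  have h1 : |dc j n| ≤ 1 * (((n+j).factorial : ℝ) / (n.factorial : ℝ)) := by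
    rw [dc, abs_mul]
    apply mul_le_mul (abs_bc_le _) (le_of_eq (abs_of_nonneg (by positivity))) (abs_nonneg _) one_pos.le
  rw [one_mul] at h1
  refine h1.trans ?_
  rw [div_le_iff₀ (by exact_mod_cast Nat.factorial_pos n)]
  have := fact_ratio_le j n
  calc ((n+j).factorial : ℝ) ≤ (((j+1)^j * (n+1)^j * n.factorial : ℕ) : ℝ) := by exact_mod_cast this
  _ = ((j:ℝ)+1)^j * ((n:ℝ)+1)^j * (n.factorial : ℝ) := by push_cast; ring

lemma dc_succ (j n : ℕ) : ((n:ℝ)+1) * dc j (n+1) = dc (j+1) n := by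
  have h1 : n+1+j = n+(j+1) := by omega
  rw [dc, dc, h1]
  have h2 : ((n+1).factorial : ℝ) = ((n:ℝ)+1) * (n.factorial : ℝ) := by
    rw [Nat.factorial_succ]; push_cast; ring
  rw [h2]
  have h3 : (n.factorial : ℝ) ≠ 0 := by exact_mod_cast (Nat.factorial_pos n).ne'
  have h4 : ((n:ℝ)+1) ≠ 0 := by positivity
  field_simp

lemma hasDerivAt_Phi (j : ℕ) {x : ℝ} (hx : |x| < 1) :
    HasDerivAt (Phi j) (Phi (j+1) x) x := by
  have h := hasDerivAt_coeff (fun n => abs_dc_le j n) hx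
  have h2 : (∑' n, (((n:ℕ):ℝ)+1) * dc j (n+1) * x^n) = Phi (j+1) x := by
    rw [Phi]
    congr 1
    funext n
    rw [dc_succ]
  rw [h2] at h
  exact h

lemma Phi_zero_val (j : ℕ) : Phi j 0 = dc j 0 := by
  rw [Phi, tsum_eq_single 0 (fun n hn => by rw [zero_pow hn, mul_zero])]
  simp

lemma continuousAt_Phi (j : ℕ) : ContinuousAt (Phi j) 0 :=
  (hasDerivAt_Phi j (by norm_num)).continuousAt


lemma keyR (n : ℕ) : ∑ p ∈ Finset.HasAntidiagonal.antidiagonal n, bc p.1 * ((1:ℝ)/((p.2+1).factorial))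
    = -((1:ℝ)/((n+2).factorial)) := by
  rw [Finset.Nat.sum_antidiagonal_eq_sum_range_succ_mk]
  have h := congrArg (Rat.cast : ℚ → ℝ) (keyQ n)
  push_cast at h
  rw [← h]
  refine Finset.sum_congr rfl fun i hi => ?_
  have hin : i < n + 1 := Finset.mem_range.mp hi
  have h2 : n - i + 1 = n + 1 - i := by omega
  rw [bc, h2]
  push_cast
  ring

lemma exp_tsum (t : ℝ) : Real.exp t = ∑' n, t^n / (n.factorial : ℝ) := by
  rw [Real.exp_eq_exp_ℝ, NormedSpace.exp_eq_tsum_div]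

lemma bE (n : ℕ) : |(1:ℝ)/((n+1).factorial : ℝ)| ≤ 1 * ((n:ℝ)+1)^0 := by
  rw [pow_zero, mul_one, abs_of_nonneg (by positivity)]
  rw [div_le_one (by exact_mod_cast Nat.factorial_pos (n+1))]
  exact_mod_cast Nat.one_le_iff_ne_zero.mpr (Nat.factorial_pos (n+1)).ne'

lemma bD (n : ℕ) : |(1:ℝ)/((n+2).factorial : ℝ)| ≤ 1 * ((n:ℝ)+1)^0 := by
  rw [pow_zero, mul_one, abs_of_nonneg (by positivity)]
  rw [div_le_one (by exact_mod_cast Nat.factorial_pos (n+2))]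
  exact_mod_cast Nat.one_le_iff_ne_zero.mpr (Nat.factorial_pos (n+2)).ne'

lemma bbc (n : ℕ) : |bc n| ≤ 1 * ((n:ℝ)+1)^0 := by
  rw [pow_zero, mul_one]; exact abs_bc_le n

lemma hE (t : ℝ) : t * (∑' n, ((1:ℝ)/((n+1).factorial : ℝ)) * t^n) = Real.exp t - 1 := by
  have hsum := Real.summable_pow_div_factorial t
  have h := Summable.tsum_eq_zero_add hsum
  have h0 : t ^ 0 / ((Nat.factorial 0 : ℕ) : ℝ) = 1 := by norm_num
  rw [exp_tsum t, h, h0, add_sub_cancel_left, ← tsum_mul_left]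
  congr 1
  funext n
  rw [pow_succ]
  ring

lemma hD (t : ℝ) : t^2 * (∑' n, ((1:ℝ)/((n+2).factorial : ℝ)) * t^n) = Real.exp t - 1 - t := by
  have hsum := Real.summable_pow_div_factorial t
  have hsum1 : Summable (fun n => t^(n+1) / ((n+1).factorial : ℝ)) :=
    (summable_nat_add_iff 1).mpr hsum
  have h := Summable.tsum_eq_zero_add hsum
  have h1 := Summable.tsum_eq_zero_add hsum1
  have h0 : t ^ 0 / ((Nat.factorial 0 : ℕ) : ℝ) = 1 := by norm_num
  have h01 : t ^ (0+1) / (((0+1 : ℕ)).factorial : ℝ) = t := by norm_num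
  have hgen : ∀ S : ℝ, 1 + (t + S) - 1 - t = S := fun S => by ring
  rw [exp_tsum t, h, h1, h0, h01, hgen, ← tsum_mul_left]
  congr 1
  funext n
  have e : n+1+1 = n+2 := by omega
  rw [e, pow_add]
  ring

lemma phi0_mul (t : ℝ) (ht : |t| < 1) (htne : t ≠ 0) :
    Phi 0 t * (Real.exp t - 1) = 1 - (Real.exp t - 1)/t := by
  have hdc0 : ∀ n, dc 0 n = bc n := by
    intro n
    rw [dc]
    simp [div_self (show ((n.factorial:ℝ)) ≠ 0 by exact_mod_cast (Nat.factorial_pos n).ne')]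
  have hsn1 : Summable fun n => |dc 0 n * t^n| := summable_norm_coeff (fun n => by rw [hdc0]; exact bbc n) ht
  have hsn2 : Summable fun n => |((1:ℝ)/((n+1).factorial : ℝ)) * t^n| := summable_norm_coeff bE ht
  have hC := tsum_mul_tsum_eq_tsum_sum_antidiagonal_of_summable_norm
    (f := fun n => dc 0 n * t^n) (g := fun n => ((1:ℝ)/((n+1).factorial : ℝ)) * t^n)
    (by simpa only [Real.norm_eq_abs] using hsn1) (by simpa only [Real.norm_eq_abs] using hsn2)
  have hCn : ∀ n : ℕ, ∑ p ∈ Finset.HasAntidiagonal.antidiagonal n,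
      (dc 0 p.1 * t^p.1) * (((1:ℝ)/((p.2+1).factorial : ℝ)) * t^p.2)
      = -((1:ℝ)/((n+2).factorial)) * t^n := by
    intro n
    rw [← keyR n, Finset.sum_mul]
    refine Finset.sum_congr rfl fun p hp => ?_
    have hpn : p.1 + p.2 = n := Finset.HasAntidiagonal.mem_antidiagonal.mp hp
    rw [hdc0, ← hpn, pow_add]
    ring
  have hPhiE : Phi 0 t * (∑' n, ((1:ℝ)/((n+1).factorial : ℝ)) * t^n)
      = -(∑' n, ((1:ℝ)/((n+2).factorial : ℝ)) * t^n) := by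
    rw [Phi, hC, ← tsum_neg]
    congr 1
    funext n
    rw [hCn n]
    ring
  have hEt := hE t
  have hDt := hD t
  have h1 : Phi 0 t * (Real.exp t - 1) = t * (Phi 0 t * (∑' n, ((1:ℝ)/((n+1).factorial : ℝ)) * t^n)) := by
    rw [← hEt]; ring
  rw [h1, hPhiE]
  have h2 : (∑' n, ((1:ℝ)/((n+2).factorial : ℝ)) * t^n) = (Real.exp t - 1 - t)/t^2 := by
    rw [eq_div_iff (by positivity), ← hDt]; ring
  rw [h2]
  field_simp
  ring

lemma base_case (t : ℝ) (ht0 : 0 < t) (ht1 : t < 1) :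
    Phi 0 t = (∑' r : ℕ, ((r:ℝ))^0 * Real.exp (-t)^r) - 1 - (Nat.factorial 0 : ℝ)/t^(0+1) := by
  simp only [pow_zero, one_mul, Nat.factorial_zero, Nat.cast_one, pow_one]
  have hx0 : (0:ℝ) < Real.exp (-t) := Real.exp_pos _
  have hx1 : Real.exp (-t) < 1 := by
    rw [Real.exp_lt_one_iff]; linarith
  rw [tsum_geometric_of_lt_one hx0.le hx1]
  have hexpne : Real.exp t ≠ 0 := (Real.exp_pos t).ne'
  have hne : Real.exp t - 1 ≠ 0 := by
    have : 1 < Real.exp t := by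
      rw [← Real.exp_zero]
      exact Real.exp_lt_exp.mpr ht0
    linarith
  have habs : |t| < 1 := by rw [abs_of_pos ht0]; exact ht1
  apply mul_right_cancel₀ hne
  rw [phi0_mul t habs ht0.ne']
  rw [Real.exp_neg]
  have h1t : 1 - (Real.exp t)⁻¹ ≠ 0 := by
    have h2 : (Real.exp t)⁻¹ < 1 := by rw [← Real.exp_neg]; exact hx1
    have := sub_pos.mpr h2
    exact this.ne'
  field_simp
  ring


lemma hasDerivAt_S (j : ℕ) {t₀ : ℝ} (ht : 0 < t₀) :
    HasDerivAt (fun t => ∑' r : ℕ, ((r:ℝ))^j * Real.exp (-t)^r)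
      (-(∑' r : ℕ, ((r:ℝ))^(j+1) * Real.exp (-t₀)^r)) t₀ := by
  have hgeom : Real.exp (-(t₀/2)) < 1 := by
    rw [Real.exp_lt_one_iff]; linarith
  have hu : Summable fun r : ℕ => ((r:ℝ))^(j+1) * Real.exp (-(t₀/2))^r := by
    apply summable_pow_mul_geometric_of_norm_lt_one
    rw [Real.norm_eq_abs, abs_of_pos (Real.exp_pos _)]
    exact hgeom
  have hder : ∀ (r : ℕ) (y : ℝ), HasDerivAt (fun t => ((r:ℝ))^j * Real.exp (-t)^r)
      (-(((r:ℝ))^(j+1) * Real.exp (-y)^r)) y := by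
    intro r y
    have h1 : HasDerivAt (fun t : ℝ => Real.exp (-t)) (Real.exp (-y) * -1) y :=
      (hasDerivAt_neg y).exp
    have h2 := (h1.pow r).const_mul (((r:ℝ))^j)
    refine h2.congr_deriv (Eq.symm ?_)
    cases r with
    | zero => simp
    | succ s =>
      have hs : s + 1 - 1 = s := rfl
      rw [hs]
      push_cast
      rw [pow_succ ((s:ℝ)+1) j, pow_succ (Real.exp (-y)) s]
      ring
  have hbound : ∀ (r : ℕ) (y : ℝ), y ∈ Set.Ioi (t₀/2) →
      ‖-(((r:ℝ))^(j+1) * Real.exp (-y)^r)‖ ≤ ((r:ℝ))^(j+1) * Real.exp (-(t₀/2))^r := by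
    intro r y hy
    rw [norm_neg, Real.norm_eq_abs, abs_mul, abs_pow, abs_pow,
      abs_of_nonneg (Nat.cast_nonneg r), abs_of_pos (Real.exp_pos _)]
    apply mul_le_mul_of_nonneg_left _ (by positivity)
    apply pow_le_pow_left₀ (Real.exp_pos _).le
    apply Real.exp_le_exp.mpr
    have : t₀/2 < y := hy
    linarith
  have hg0 : Summable fun r : ℕ => ((r:ℝ))^j * Real.exp (-t₀)^r := by
    apply summable_pow_mul_geometric_of_norm_lt_one
    rw [Real.norm_eq_abs, abs_of_pos (Real.exp_pos _), Real.exp_lt_one_iff]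
    linarith
  have key := hasDerivAt_tsum_of_isPreconnected hu (isOpen_Ioi (a := t₀/2))
    (isPreconnected_Ioi) (g := fun (r : ℕ) (t : ℝ) => ((r:ℝ))^j * Real.exp (-t)^r)
    (g' := fun (r : ℕ) (y : ℝ) => -(((r:ℝ))^(j+1) * Real.exp (-y)^r))
    (fun (r : ℕ) (y : ℝ) _ => hder r y) hbound
    (Set.mem_Ioi.mpr (by linarith : t₀/2 < t₀)) hg0
    (Set.mem_Ioi.mpr (by linarith : t₀/2 < t₀))
  refine key.congr_deriv (Eq.symm ?_)
  rw [tsum_neg]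

lemma hasDerivAt_inv_pow (j : ℕ) {t₀ : ℝ} (ht : t₀ ≠ 0) :
    HasDerivAt (fun t => (j.factorial : ℝ)/t^(j+1)) (-(((j+1).factorial : ℝ))/t₀^(j+2)) t₀ := by
  have h := ((hasDerivAt_pow (j+1) t₀).inv (pow_ne_zero _ ht)).const_mul (j.factorial : ℝ)
  have hfun : (fun t : ℝ => (j.factorial : ℝ)/t^(j+1)) = fun t => (j.factorial:ℝ) * (t^(j+1))⁻¹ := by
    funext y; rw [div_eq_mul_inv]
  rw [hfun]
  refine h.congr_deriv (Eq.symm ?_)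
  rw [show j+1-1 = j from rfl, Nat.factorial_succ]
  push_cast
  field_simp
  ring

lemma main_ident (j : ℕ) : ∀ t : ℝ, t ∈ Set.Ioo (0:ℝ) 1 →
    Phi j t = (-1)^j * ((∑' r : ℕ, ((r:ℝ))^j * Real.exp (-t)^r)
      - (if j = 0 then (1:ℝ) else 0) - (j.factorial : ℝ)/t^(j+1)) := by
  induction j with
  | zero =>
    rintro t ⟨ht0, ht1⟩
    simpa using base_case t ht0 ht1
  | succ i ih =>
    rintro t ⟨ht0, ht1⟩
    have habs : |t| < 1 := by rw [abs_of_pos ht0]; exact ht1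
    have hΦ : HasDerivAt (Phi i) (Phi (i+1) t) t := hasDerivAt_Phi i habs
    have hS := hasDerivAt_S i ht0
    have hP := hasDerivAt_inv_pow i ht0.ne'
    have hR := (((hS.sub_const (if i = 0 then (1:ℝ) else 0)).sub hP).const_mul ((-1:ℝ)^i))
    have heq : (fun y => Phi i y) =ᶠ[nhds t]
        (fun y => (-1:ℝ)^i * ((∑' r : ℕ, ((r:ℝ))^i * Real.exp (-y)^r)
          - (if i = 0 then (1:ℝ) else 0) - (i.factorial : ℝ)/y^(i+1))) :=
      Filter.eventuallyEq_of_mem (Ioo_mem_nhds ht0 ht1) (fun y hy => ih y hy)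
    have hΦ' := hΦ.congr_of_eventuallyEq heq.symm
    have huniq := hΦ'.unique hR
    rw [huniq, if_neg (by omega : ¬ i + 1 = 0)]
    rw [show i+1+1 = i+2 from by omega, Nat.factorial_succ]
    push_cast
    rw [pow_succ (-1:ℝ) i]
    ring

end PolyLogZeta

/-- As `z → 1⁻` (through `0 < z < 1`), the generating function `f_k(z) = ∑_{r≥0} r^k z^r`
satisfies `f_k(z) - k!/(log(1/z))^{k+1} → ζ(-k)`, the value of the (analytically continued)
Riemann zeta function at `-k`. -/
theorem polyLog_sub_mainTerm_tendsto_zeta_neg (k : ℕ) (hk : 1 ≤ k)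
    (ζ : ℝ) (hζ : (ζ : ℂ) = riemannZeta (-(k : ℂ))) :
    Filter.Tendsto
      (fun z : ℝ => (∑' r : ℕ, (r : ℝ) ^ k * z ^ r)
        - (k.factorial : ℝ) / (Real.log (1 / z)) ^ (k + 1))
      (nhdsWithin 1 (Set.Ioo 0 1)) (nhds ζ) := by
  open PolyLogZeta Filter Set in
  -- identify ζ with the Bernoulli value
  have hζR : ζ = (-1:ℝ)^k * (bernoulli (k+1) : ℝ) / ((k:ℝ)+1) := by
    have h := riemannZeta_neg_nat_eq_bernoulli k
    have h2 : (ζ:ℂ) = (((-1:ℝ)^k * (bernoulli (k+1) : ℝ) / ((k:ℝ)+1) : ℝ) : ℂ) := by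
      rw [hζ, h]; push_cast; ring
    exact_mod_cast h2
  have hPhi0 : Phi k 0 = (bernoulli (k+1) : ℝ) / ((k:ℝ)+1) := by
    rw [Phi_zero_val, dc, bc, zero_add, Nat.factorial_zero, Nat.factorial_succ]
    have h1 : (k.factorial : ℝ) ≠ 0 := by exact_mod_cast (Nat.factorial_pos k).ne'
    have h2 : ((k:ℝ)+1) ≠ 0 := by positivity
    push_cast
    field_simp
  have hval : (-1:ℝ)^k * Phi k 0 = ζ := by
    rw [hPhi0, hζR]; ring
  have hcont : Filter.Tendsto (fun t => (-1:ℝ)^k * Phi k t) (nhdsWithin 0 (Set.Ioo 0 1)) (nhds ζ) := by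
    have h := ((continuousAt_const (y := (-1:ℝ)^k)).mul (continuousAt_Phi k)).tendsto
    rw [← hval]
    exact h.mono_left nhdsWithin_le_nhds
  -- the eventual membership of log (1/z) in Ioo 0 1
  have hmem : ∀ᶠ z in nhdsWithin 1 (Set.Ioo (0:ℝ) 1), Real.log (1/z) ∈ Set.Ioo (0:ℝ) 1 := by
    have h1 : ∀ᶠ z in nhdsWithin 1 (Set.Ioo (0:ℝ) 1), z ∈ Set.Ioo (0:ℝ) 1 :=
      eventually_mem_nhdsWithin
    have h2 : ∀ᶠ z : ℝ in nhds 1, Real.exp (-1) < z := by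
      apply eventually_gt_nhds
      rw [Real.exp_lt_one_iff]; norm_num
    filter_upwards [h1, h2.filter_mono nhdsWithin_le_nhds] with z hz hz2
    rw [Set.mem_Ioo, one_div, Real.log_inv]
    constructor
    · have := Real.log_neg hz.1 hz.2
      linarith
    · have := Real.log_lt_log (Real.exp_pos _) hz2
      rw [Real.log_exp] at this
      linarith
  have hlog : Filter.Tendsto (fun z : ℝ => Real.log (1/z)) (nhdsWithin 1 (Set.Ioo 0 1))
      (nhdsWithin 0 (Set.Ioo 0 1)) := by
    rw [tendsto_nhdsWithin_iff]
    refine ⟨?_, hmem⟩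
    have h : Filter.Tendsto (fun z : ℝ => -Real.log z) (nhds 1) (nhds 0) := by
      have := (Real.continuousAt_log (by norm_num : (1:ℝ) ≠ 0)).neg.tendsto
      simp at this
      exact this
    refine (h.mono_left nhdsWithin_le_nhds).congr fun z => ?_
    rw [one_div, Real.log_inv]
  have hcomp := hcont.comp hlog
  refine hcomp.congr' ?_
  filter_upwards [hmem, eventually_mem_nhdsWithin] with z hz hz1
  have hid := main_ident k (Real.log (1/z)) hz
  have hexp : Real.exp (-(Real.log (1/z))) = z := by
    rw [one_div, Real.log_inv, neg_neg, Real.exp_log hz1.1]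
  rw [hexp, if_neg (by omega : ¬ k = 0), sub_zero] at hid
  simp only [Function.comp]
  rw [hid, ← mul_assoc, ← pow_add]
  have hev : Even (k + k) := ⟨k, rfl⟩
  rw [hev.neg_one_pow, one_mul]
end
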